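/- arXiv:1812.07956 — 7 statements merged into one kernel-verified Lean document; each statement's English description precedes it below -/
import Mathlib

section
/- Let T > 0 be a fixed time horizon and assume h(w₀) = 0. Then there exist constants C > 0 and α₀ > 0 (depending on h, R, w₀ and T but not on α) such that for every α ≥ α₀, sup_{t ∈ [0,T]} ‖w_α(t) − w₀‖ ≤ C/α. -/
open scoped RealInnerProductSpace NNReal
open MeasureTheory intervalIntegral

/-- **Theorem 2.1 (General lazy training), first bound.**
If `h w₀ = 0`, then for a fixed time horizon `T > 0` there are constants `C > 0` and
`α₀ > 0` (independent of `α`) such that for all `α ≥ α₀`,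
`sup_{t ∈ [0,T]} ‖w_α(t) − w₀‖ ≤ C / α`. -/
theorem lazy_general_param_bound
    {p : ℕ} {H : Type*} [NormedAddCommGroup H] [InnerProductSpace ℝ H] [CompleteSpace H]
    (h : EuclideanSpace ℝ (Fin p) → H)
    (hdiff : Differentiable ℝ h)
    (hDhLip : LocallyLipschitz (fun u => fderiv ℝ h u))
    (R : H → ℝ) (hRnonneg : ∀ y, 0 ≤ R y) (hRdiff : Differentiable ℝ R)
    (LR : ℝ≥0) (hRgrad : LipschitzWith LR (fun y => gradient R y))
    (w₀ : EuclideanSpace ℝ (Fin p)) (h0 : h w₀ = 0)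
    (w : ℝ → ℝ → EuclideanSpace ℝ (Fin p))
    (hw0 : ∀ α : ℝ, 0 < α → w α 0 = w₀)
    (hwflow : ∀ α : ℝ, 0 < α → ∀ t : ℝ, 0 ≤ t →
      HasDerivAt (w α) (-(gradient (fun u => R (α • h u) / α ^ 2) (w α t))) t)
    (T : ℝ) (hT : 0 < T) :
    ∃ C > 0, ∃ α₀ > 0, ∀ α : ℝ, α₀ ≤ α → ∀ t ∈ Set.Icc (0 : ℝ) T,
      ‖w α t - w₀‖ ≤ C / α := by
  have hR0 : 0 ≤ R 0 := hRnonneg 0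
  refine ⟨(R 0 + T) / 2, by linarith, 1, one_pos, ?_⟩
  intro α hα t ht
  have hα0 : (0:ℝ) < α := lt_of_lt_of_le one_pos hα
  have hαne : α ≠ 0 := ne_of_gt hα0
  obtain ⟨ht0, htT⟩ := ht
  set F : EuclideanSpace ℝ (Fin p) → ℝ := fun u => R (α • h u) / α ^ 2 with hFdef
  set D : EuclideanSpace ℝ (Fin p) → (EuclideanSpace ℝ (Fin p) →L[ℝ] ℝ) :=
    fun u => (α ^ 2)⁻¹ • ((fderiv ℝ R (α • h u)).comp (α • fderiv ℝ h u)) with hDdef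
  have hFD : ∀ u, HasFDerivAt F (D u) u := by
    intro u
    have h1 : HasFDerivAt (fun u => α • h u) (α • fderiv ℝ h u) u :=
      ((hdiff u).hasFDerivAt).const_smul α
    have h2 : HasFDerivAt (fun u => R (α • h u))
        ((fderiv ℝ R (α • h u)).comp (α • fderiv ℝ h u)) u :=
      ((hRdiff (α • h u)).hasFDerivAt).comp u h1
    have h3 := h2.const_mul ((α ^ 2)⁻¹)
    have : F = fun u => (α ^ 2)⁻¹ * R (α • h u) := by
      funext u; rw [hFdef]; ring
    rw [this, hDdef]
    exact h3
  set G : EuclideanSpace ℝ (Fin p) → EuclideanSpace ℝ (Fin p) :=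
    fun u => (InnerProductSpace.toDual ℝ (EuclideanSpace ℝ (Fin p))).symm (D u) with hGdef
  have hGrad : ∀ u, HasGradientAt F (G u) u := by
    intro u
    rw [hasGradientAt_iff_hasFDerivAt]
    simpa [hGdef] using hFD u
  have hgradeq : ∀ u, gradient F u = G u := fun u => (hGrad u).gradient
  set v : ℝ → EuclideanSpace ℝ (Fin p) := fun s => -(G (w α s)) with hvdef
  have hwflow' : ∀ s : ℝ, 0 ≤ s → HasDerivAt (w α) (v s) s := by
    intro s hs
    have := hwflow α hα0 s hs
    rw [hgradeq] at this
    exact this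
  -- continuity of G
  have hGcont : Continuous G := by
    have c0 : Continuous fun u : EuclideanSpace ℝ (Fin p) => α • h u :=
      hdiff.continuous.const_smul α
    have c1 : Continuous fun u : EuclideanSpace ℝ (Fin p) => fderiv ℝ R (α • h u) := by
      have hfe : (fun u : EuclideanSpace ℝ (Fin p) => fderiv ℝ R (α • h u))
          = fun u => InnerProductSpace.toDual ℝ H (gradient R (α • h u)) := by
        funext u
        exact ((hRdiff (α • h u)).hasGradientAt.hasFDerivAt).fderiv
      rw [hfe]
      exact (InnerProductSpace.toDual ℝ H).continuous.comp (hRgrad.continuous.comp c0)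
    have c2 : Continuous fun u : EuclideanSpace ℝ (Fin p) => α • fderiv ℝ h u :=
      hDhLip.continuous.const_smul α
    have c3 : Continuous D := by
      rw [hDdef]
      exact (c1.clm_comp c2).const_smul ((α ^ 2)⁻¹ : ℝ)
    rw [hGdef]
    exact (InnerProductSpace.toDual ℝ (EuclideanSpace ℝ (Fin p))).symm.continuous.comp c3
  -- energy derivative
  have he : ∀ s : ℝ, 0 ≤ s → HasDerivAt (fun τ => F (w α τ)) (-(‖v s‖ ^ 2)) s := by
    intro s hs
    have h1 : HasDerivAt (fun τ => F (w α τ)) (D (w α s) (v s)) s :=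
      (hFD (w α s)).comp_hasDerivAt s (hwflow' s hs)
    have hDtd : D (w α s) = InnerProductSpace.toDual ℝ _ (G (w α s)) := by
      rw [hGdef]; simp
    have h2 : D (w α s) (v s) = -(‖v s‖ ^ 2) := by
      have hv : v s = -(G (w α s)) := rfl
      rw [hDtd, InnerProductSpace.toDual_apply_apply, hv, inner_neg_right,
        real_inner_self_eq_norm_sq, norm_neg]
    rwa [h2] at h1
  -- continuity on [0, T]
  have hwcont : ContinuousOn (w α) (Set.Icc 0 T) := fun s hs =>
    (hwflow' s hs.1).continuousAt.continuousWithinAt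
  have hvcont : ContinuousOn v (Set.Icc 0 T) := by
    rw [hvdef]
    exact (hGcont.comp_continuousOn hwcont).neg
  have hIcc : Set.uIcc (0:ℝ) t = Set.Icc 0 t := Set.uIcc_of_le ht0
  have hsub : Set.Icc (0:ℝ) t ⊆ Set.Icc 0 T := Set.Icc_subset_Icc le_rfl htT
  have hvcont' : ContinuousOn v (Set.uIcc 0 t) := by rw [hIcc]; exact hvcont.mono hsub
  have hvint : IntervalIntegrable v volume 0 t := hvcont'.intervalIntegrable
  have hnvint : IntervalIntegrable (fun s => ‖v s‖) volume 0 t :=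
    hvcont'.norm.intervalIntegrable
  have hn2cont : ContinuousOn (fun s => ‖v s‖ ^ 2) (Set.uIcc 0 t) := hvcont'.norm.pow 2
  have hn2int : IntervalIntegrable (fun s => ‖v s‖ ^ 2) volume 0 t :=
    hn2cont.intervalIntegrable
  have hnegint : IntervalIntegrable (fun s => -(‖v s‖ ^ 2)) volume 0 t :=
    hn2int.neg
  -- FTC for w
  have hw_eq : w α t - w₀ = ∫ s in (0:ℝ)..t, v s := by
    have h1 := intervalIntegral.integral_eq_sub_of_hasDerivAt
      (fun s hs => hwflow' s (by rw [hIcc] at hs; exact hs.1)) hvint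
    rw [hw0 α hα0] at h1
    exact h1.symm
  -- FTC for the energy
  have he_eq : (∫ s in (0:ℝ)..t, ‖v s‖ ^ 2) = F w₀ - F (w α t) := by
    have h1 := intervalIntegral.integral_eq_sub_of_hasDerivAt
      (f := fun τ => F (w α τ))
      (fun s hs => he s (by rw [hIcc] at hs; exact hs.1)) hnegint
    rw [intervalIntegral.integral_neg] at h1
    have h1' : -∫ s in (0:ℝ)..t, ‖v s‖ ^ 2 = F (w α t) - F (w α 0) := h1
    rw [hw0 α hα0] at h1'
    linarith
  have hF0 : F w₀ = R 0 / α ^ 2 := by rw [hFdef]; simp [h0]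
  have hFt : 0 ≤ F (w α t) := by
    rw [hFdef]
    exact div_nonneg (hRnonneg _) (by positivity)
  have hEbound : (∫ s in (0:ℝ)..t, ‖v s‖ ^ 2) ≤ R 0 / α ^ 2 := by
    rw [he_eq, hF0]; linarith
  -- pointwise Young inequality
  have hpt : ∀ s ∈ Set.Icc (0:ℝ) t, ‖v s‖ ≤ (α * ‖v s‖ ^ 2 + α⁻¹) / 2 := by
    intro s _
    have h1 : 0 ≤ α * (‖v s‖ - α⁻¹) ^ 2 := by positivity
    have h3 : α * (‖v s‖ - α⁻¹) ^ 2 = α * ‖v s‖ ^ 2 - 2 * ‖v s‖ + α⁻¹ := by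
      field_simp
      ring
    linarith [h1, h3.symm ▸ h1]
  have hrhsint : IntervalIntegrable (fun s => (α * ‖v s‖ ^ 2 + α⁻¹) / 2) volume 0 t := by
    apply ContinuousOn.intervalIntegrable
    exact (((hn2cont.const_smul α).add continuousOn_const).div_const 2)
  have hmono := intervalIntegral.integral_mono_on ht0 hnvint hrhsint hpt
  have hrhs_eq : (∫ s in (0:ℝ)..t, (α * ‖v s‖ ^ 2 + α⁻¹) / 2)
      = (α * (∫ s in (0:ℝ)..t, ‖v s‖ ^ 2) + α⁻¹ * t) / 2 := by
    rw [intervalIntegral.integral_div,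
      intervalIntegral.integral_add (hn2int.const_mul α) intervalIntegrable_const,
      intervalIntegral.integral_const_mul, intervalIntegral.integral_const]
    simp [smul_eq_mul]
    ring
  calc ‖w α t - w₀‖ = ‖∫ s in (0:ℝ)..t, v s‖ := by rw [hw_eq]
    _ ≤ ∫ s in (0:ℝ)..t, ‖v s‖ := intervalIntegral.norm_integral_le_integral_norm ht0
    _ ≤ (α * (∫ s in (0:ℝ)..t, ‖v s‖ ^ 2) + α⁻¹ * t) / 2 := by rw [← hrhs_eq]; exact hmono
    _ ≤ (α * (R 0 / α ^ 2) + α⁻¹ * T) / 2 := by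
        have h2 : α⁻¹ * t ≤ α⁻¹ * T :=
          mul_le_mul_of_nonneg_left htT (inv_nonneg.mpr hα0.le)
        have h3 : α * (∫ s in (0:ℝ)..t, ‖v s‖ ^ 2) ≤ α * (R 0 / α ^ 2) :=
          mul_le_mul_of_nonneg_left hEbound hα0.le
        linarith
    _ = (R 0 + T) / 2 / α := by field_simp
end

section
/- Let T > 0 be a fixed time horizon and assume h(w₀) = 0. Then there exist constants C > 0 and α₀ > 0 (depending on h, R, w₀ and T but not on α) such that for every α ≥ α₀, sup_{t ∈ [0,T]} ‖w_α(t) − w̄_α(t)‖ ≤ C/α². -/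
open scoped RealInnerProductSpace NNReal

open Set Real Topology

/-- Grönwall consequence: zero initial condition, linear bound on derivative. -/
theorem my_gron_simple {E : Type*} [NormedAddCommGroup E] [NormedSpace ℝ E]
    {g g' : ℝ → E} {T K ε : ℝ} (hT : 0 ≤ T) (hK : 0 < K) (hε : 0 ≤ ε)
    (hg0 : g 0 = 0)
    (hd : ∀ t ∈ Set.Icc (0:ℝ) T, HasDerivAt g (g' t) t)
    (hb : ∀ t ∈ Set.Icc (0:ℝ) T, ‖g' t‖ ≤ K * ‖g t‖ + ε) :
    ∀ t ∈ Set.Icc (0:ℝ) T, ‖g t‖ ≤ ε / K * (Real.exp (K * T) - 1) := by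
  have hcont : ContinuousOn g (Set.Icc 0 T) :=
    fun t ht => ((hd t ht).continuousAt).continuousWithinAt
  have H := norm_le_gronwallBound_of_norm_deriv_right_le (δ := 0) hcont
    (fun t ht => (hd t (Set.Ico_subset_Icc_self ht)).hasDerivWithinAt)
    (by simp [hg0]) (fun t ht => hb t (Set.Ico_subset_Icc_self ht))
  intro t ht
  have h2 := H t ht
  rw [gronwallBound_of_K_ne_0 hK.ne'] at h2
  simp only [zero_mul, zero_add, sub_zero] at h2
  refine h2.trans ?_
  have : Real.exp (K * t) ≤ Real.exp (K * T) := by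
    apply Real.exp_le_exp.mpr; nlinarith [ht.2]
  have hdiv : 0 ≤ ε / K := div_nonneg hε hK.le
  nlinarith

/-- Bootstrap Grönwall: the bound on the derivative holds only while the solution
stays in a ball, but the Grönwall bound is small enough to keep it there. -/
theorem my_gron_bootstrap {E : Type*} [NormedAddCommGroup E] [NormedSpace ℝ E]
    {g g' : ℝ → E} {T K ε r : ℝ} (hT : 0 ≤ T) (hK : 0 < K) (hε : 0 ≤ ε) (hr : 0 < r)
    (hg0 : g 0 = 0)
    (hd : ∀ t : ℝ, 0 ≤ t → HasDerivAt g (g' t) t)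
    (hb : ∀ t ∈ Set.Icc (0:ℝ) T, ‖g t‖ ≤ r → ‖g' t‖ ≤ K * ‖g t‖ + ε)
    (hsmall : ε / K * (Real.exp (K * T) - 1) ≤ r / 2) :
    ∀ t ∈ Set.Icc (0:ℝ) T, ‖g t‖ ≤ ε / K * (Real.exp (K * T) - 1) := by
  set S : Set ℝ := {c | c ∈ Set.Icc (0:ℝ) T ∧ ∀ s ∈ Set.Icc (0:ℝ) c, ‖g s‖ ≤ r} with hS
  have h0S : (0:ℝ) ∈ S := by
    refine ⟨⟨le_refl _, hT⟩, ?_⟩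
    intro s hs
    have : s = 0 := le_antisymm hs.2 hs.1
    simp [this, hg0, hr.le]
  have hbdd : BddAbove S := ⟨T, fun c hc => hc.1.2⟩
  set c := sSup S with hc
  have hc0 : 0 ≤ c := le_csSup hbdd h0S
  have hcT : c ≤ T := csSup_le ⟨0, h0S⟩ fun x hx => hx.1.2
  -- membership of c in S
  have hcS : ∀ s ∈ Set.Icc (0:ℝ) c, ‖g s‖ ≤ r := by
    intro s hs
    rcases lt_or_eq_of_le hs.2 with hlt | heq
    · obtain ⟨c', hc'S, hsc'⟩ := exists_lt_of_lt_csSup ⟨0, h0S⟩ hlt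
      exact hc'S.2 s ⟨hs.1, hsc'.le⟩
    · subst heq
      rcases eq_or_lt_of_le hs.1 with h0 | h0
      · simp [← h0, hg0, hr.le]
      · -- c > 0 : limit of points in Ico 0 c
        have hne : (𝓝[Set.Ico (0:ℝ) c] c).NeBot := by
          rw [← mem_closure_iff_nhdsWithin_neBot, closure_Ico h0.ne]
          exact ⟨h0.le, le_refl _⟩
        have htend : Filter.Tendsto (fun x => ‖g x‖) (𝓝[Set.Ico (0:ℝ) c] c) (𝓝 ‖g c‖) :=
          ((hd c hs.1).continuousAt.norm).continuousWithinAt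
        refine le_of_tendsto htend ?_
        filter_upwards [self_mem_nhdsWithin] with x hx
        obtain ⟨c', hc'S, hsc'⟩ := exists_lt_of_lt_csSup ⟨0, h0S⟩ hx.2
        exact hc'S.2 x ⟨hx.1, hsc'.le⟩
  have hhalf : ∀ s ∈ Set.Icc (0:ℝ) c, ‖g s‖ ≤ r / 2 := by
    intro s hs
    have := my_gron_simple hc0 hK hε hg0 (fun t ht => hd t ht.1)
      (fun t ht => hb t ⟨ht.1, ht.2.trans hcT⟩ (hcS t ht)) s hs
    refine this.trans (le_trans ?_ hsmall)
    have : Real.exp (K * c) ≤ Real.exp (K * T) := by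
      apply Real.exp_le_exp.mpr; nlinarith
    have hdiv : 0 ≤ ε / K := div_nonneg hε hK.le
    nlinarith
  have hceq : c = T := by
    by_contra hne
    have hlt : c < T := lt_of_le_of_ne hcT hne
    have hcont := (hd c hc0).continuousAt
    obtain ⟨δ, hδ, hδ'⟩ := Metric.continuousAt_iff.mp hcont (r / 2) (by positivity)
    set c' := min (c + δ / 2) T with hc'
    have hcc' : c < c' := lt_min (by linarith) hlt
    have hc'S : c' ∈ S := by
      refine ⟨⟨le_trans hc0 hcc'.le, min_le_right _ _⟩, ?_⟩
      intro s hs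
      rcases le_or_gt s c with h1 | h1
      · exact hcS s ⟨hs.1, h1⟩
      · have hdist : dist s c < δ := by
          rw [Real.dist_eq, abs_of_nonneg (by linarith)]
          have : s ≤ c + δ / 2 := le_trans hs.2 (min_le_left _ _)
          linarith
        have h2 : dist (g s) (g c) < r / 2 := hδ' hdist
        have h3 : ‖g c‖ ≤ r / 2 := hhalf c ⟨hc0, le_refl _⟩
        calc ‖g s‖ = ‖(g s - g c) + g c‖ := by rw [sub_add_cancel]
          _ ≤ ‖g s - g c‖ + ‖g c‖ := norm_add_le _ _
          _ ≤ r / 2 + r / 2 := by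
              rw [← dist_eq_norm]; exact add_le_add h2.le h3
          _ = r := by ring
    have := le_csSup hbdd hc'S
    exact absurd this (not_le.mpr hcc')
  rw [hceq] at hcS
  exact my_gron_simple hT hK hε hg0 (fun t ht => hd t ht.1)
    (fun t ht => hb t ht (hcS t ht))

/-- Norm of difference of gradients equals norm of difference of Fréchet derivatives. -/
theorem my_norm_gradient_sub {E : Type*} [NormedAddCommGroup E] [InnerProductSpace ℝ E]
    [CompleteSpace E] (f g : E → ℝ) (u v : E) :
    ‖gradient f u - gradient g v‖ = ‖fderiv ℝ f u - fderiv ℝ g v‖ := by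
  rw [gradient, gradient, ← map_sub]
  exact LinearIsometryEquiv.norm_map _ _


theorem my_norm_gradient {E : Type*} [NormedAddCommGroup E] [InnerProductSpace ℝ E]
    [CompleteSpace E] (f : E → ℝ) (u : E) :
    ‖gradient f u‖ = ‖fderiv ℝ f u‖ := by
  rw [gradient]; exact LinearIsometryEquiv.norm_map _ _

theorem my_fderiv_scaled {E H : Type*} [NormedAddCommGroup E] [NormedSpace ℝ E]
    [NormedAddCommGroup H] [NormedSpace ℝ H]
    (R : H → ℝ) (hRdiff : Differentiable ℝ R) (φ : E → H) (hφ : Differentiable ℝ φ)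
    {α : ℝ} (hα : α ≠ 0) (u : E) :
    fderiv ℝ (fun x => R (α • φ x) / α ^ 2) u
      = α⁻¹ • ((fderiv ℝ R (α • φ u)).comp (fderiv ℝ φ u)) := by
  have h1 : HasFDerivAt (fun x => α • φ x) (α • fderiv ℝ φ u) u :=
    ((hφ u).hasFDerivAt).const_smul α
  have h2 : HasFDerivAt R (fderiv ℝ R (α • φ u)) (α • φ u) := (hRdiff _).hasFDerivAt
  have h3 : HasFDerivAt (fun x => R (α • φ x))
      ((fderiv ℝ R (α • φ u)).comp (α • fderiv ℝ φ u)) u := h2.comp u h1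
  have h4 : HasFDerivAt (fun x => (α ^ 2)⁻¹ • R (α • φ x)) _ u := h3.const_smul ((α ^ 2)⁻¹ : ℝ)
  have heq : (fun x => (α ^ 2)⁻¹ • R (α • φ x)) = fun x => R (α • φ x) / α ^ 2 := by
    funext x; rw [smul_eq_mul, div_eq_inv_mul]
  rw [heq] at h4
  rw [h4.fderiv]
  ext x
  simp only [ContinuousLinearMap.coe_smul', Pi.smul_apply, ContinuousLinearMap.coe_comp',
    Function.comp_apply, ContinuousLinearMap.smul_apply, map_smul, smul_eq_mul]
  field_simp


set_option maxHeartbeats 1600000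

/-- **Theorem 2.1 (General lazy training), parameter comparison with the linearized flow.**
If `h w₀ = 0`, then for a fixed time horizon `T > 0` there are constants `C > 0` and
`α₀ > 0` (independent of `α`) such that for all `α ≥ α₀`,
`sup_{t ∈ [0,T]} ‖w_α(t) − w̄_α(t)‖ ≤ C / α²`. -/
theorem lazy_general_param_comparison
    {p : ℕ} {H : Type*} [NormedAddCommGroup H] [InnerProductSpace ℝ H] [CompleteSpace H]
    (h : EuclideanSpace ℝ (Fin p) → H)
    (hdiff : Differentiable ℝ h)
    (hDhLip : LocallyLipschitz (fun u => fderiv ℝ h u))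
    (R : H → ℝ) (hRnonneg : ∀ y, 0 ≤ R y) (hRdiff : Differentiable ℝ R)
    (LR : ℝ≥0) (hRgrad : LipschitzWith LR (fun y => gradient R y))
    (w₀ : EuclideanSpace ℝ (Fin p)) (h0 : h w₀ = 0)
    (w wb : ℝ → ℝ → EuclideanSpace ℝ (Fin p))
    (hw0 : ∀ α : ℝ, 0 < α → w α 0 = w₀)
    (hwflow : ∀ α : ℝ, 0 < α → ∀ t : ℝ, 0 ≤ t →
      HasDerivAt (w α) (-(gradient (fun u => R (α • h u) / α ^ 2) (w α t))) t)
    (hwb0 : ∀ α : ℝ, 0 < α → wb α 0 = w₀)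
    (hwbflow : ∀ α : ℝ, 0 < α → ∀ t : ℝ, 0 ≤ t →
      HasDerivAt (wb α)
        (-(gradient (fun u => R (α • (h w₀ + fderiv ℝ h w₀ (u - w₀))) / α ^ 2) (wb α t))) t)
    (T : ℝ) (hT : 0 < T) :
    ∃ C > 0, ∃ α₀ > 0, ∀ α : ℝ, α₀ ≤ α → ∀ t ∈ Set.Icc (0 : ℝ) T,
      ‖w α t - wb α t‖ ≤ C / α ^ 2 := by
  simp only [h0, zero_add] at hwbflow
  obtain ⟨K₀, s₀, hs₀, hK₀⟩ := hDhLip w₀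
  obtain ⟨r₀, hr₀pos, hball⟩ := Metric.mem_nhds_iff.mp hs₀
  obtain ⟨r, hrdef⟩ : ∃ x : ℝ, x = r₀ / 2 := ⟨_, rfl⟩
  have hr : 0 < r := by rw [hrdef]; positivity
  have hsub : Metric.closedBall w₀ r ⊆ s₀ :=
    (Metric.closedBall_subset_ball (by rw [hrdef]; linarith)).trans hball
  have hw₀mem : w₀ ∈ Metric.closedBall w₀ r := Metric.mem_closedBall_self hr.le
  have hGlip : ∀ x ∈ Metric.closedBall w₀ r,
      ‖fderiv ℝ h x - fderiv ℝ h w₀‖ ≤ (K₀ : ℝ) * ‖x - w₀‖ := by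
    intro x hx
    have := hK₀.dist_le_mul x (hsub hx) w₀ (hsub hw₀mem)
    simpa [dist_eq_norm] using this
  obtain ⟨M₀, hM₀⟩ := (isCompact_closedBall w₀ r).exists_bound_of_continuousOn
      (hDhLip.continuous.continuousOn)
  obtain ⟨M, hMdef⟩ : ∃ x : ℝ, x = max M₀ 1 := ⟨_, rfl⟩
  have hM1 : (1 : ℝ) ≤ M := hMdef ▸ le_max_right _ _
  have hMpos : (0 : ℝ) < M := lt_of_lt_of_le one_pos hM1
  have hMb : ∀ x ∈ Metric.closedBall w₀ r, ‖fderiv ℝ h x‖ ≤ M :=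
    fun x hx => (hM₀ x hx).trans (hMdef ▸ le_max_left _ _)
  have hGw₀ : ‖fderiv ℝ h w₀‖ ≤ M := hMb w₀ hw₀mem
  obtain ⟨N, hNdef⟩ : ∃ x : ℝ, x = ‖fderiv ℝ R 0‖ := ⟨_, rfl⟩
  have hN : 0 ≤ N := hNdef ▸ norm_nonneg _
  have hRfd : ∀ y z : H, ‖fderiv ℝ R y - fderiv ℝ R z‖ ≤ (LR : ℝ) * ‖y - z‖ := by
    intro y z
    rw [← my_norm_gradient_sub R R y z]
    have := hRgrad.dist_le_mul y z
    simpa [dist_eq_norm] using this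
  have hRn : ∀ y : H, ‖fderiv ℝ R y‖ ≤ N + (LR : ℝ) * ‖y‖ := by
    intro y
    have h1 := hRfd y 0
    have h2 := norm_sub_norm_le (fderiv ℝ R y) (fderiv ℝ R 0)
    rw [sub_zero] at h1
    rw [hNdef]; linarith
  obtain ⟨Λ, hΛdef⟩ : ∃ x : ℝ, x = (LR : ℝ) * M ^ 2 := ⟨_, rfl⟩
  have hΛ : 0 ≤ Λ := by rw [hΛdef]; exact mul_nonneg LR.coe_nonneg (sq_nonneg M)
  obtain ⟨K', hK'def⟩ : ∃ x : ℝ, x = Λ + 1 := ⟨_, rfl⟩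
  have hK' : 0 < K' := by rw [hK'def]; linarith
  obtain ⟨Ee, hEedef⟩ : ∃ x : ℝ, x = Real.exp (K' * T) - 1 := ⟨_, rfl⟩
  have hEe : 0 ≤ Ee := by
    rw [hEedef]
    have : (1 : ℝ) ≤ Real.exp (K' * T) := Real.one_le_exp (by positivity)
    linarith
  obtain ⟨C₁, hC₁def⟩ : ∃ x : ℝ, x = M * N / K' * Ee := ⟨_, rfl⟩
  have hC₁ : 0 ≤ C₁ := by
    rw [hC₁def]
    exact mul_nonneg (div_nonneg (mul_nonneg hMpos.le hN) hK'.le) hEe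
  obtain ⟨C₂, hC₂def⟩ : ∃ x : ℝ,
      x = (N + (LR : ℝ) * M * C₁) * (K₀ : ℝ) * C₁ + (LR : ℝ) * M * (K₀ : ℝ) * C₁ ^ 2 := ⟨_, rfl⟩
  have hC₂ : 0 ≤ C₂ := by
    rw [hC₂def]
    have h1 : (0 : ℝ) ≤ (LR : ℝ) := LR.coe_nonneg
    have h2 : (0 : ℝ) ≤ (K₀ : ℝ) := K₀.coe_nonneg
    have h3 : (0 : ℝ) ≤ N + (LR : ℝ) * M * C₁ :=
      add_nonneg hN (mul_nonneg (mul_nonneg h1 hMpos.le) hC₁)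
    exact add_nonneg (mul_nonneg (mul_nonneg h3 h2) hC₁)
      (mul_nonneg (mul_nonneg (mul_nonneg h1 hMpos.le) h2) (pow_nonneg hC₁ 2))
  obtain ⟨C, hCdef⟩ : ∃ x : ℝ, x = C₂ / K' * Ee + 1 := ⟨_, rfl⟩
  have hCnn : (0 : ℝ) ≤ C₂ / K' * Ee := mul_nonneg (div_nonneg hC₂ hK'.le) hEe
  have hC : 0 < C := by rw [hCdef]; linarith
  obtain ⟨α₀, hα₀def⟩ : ∃ x : ℝ, x = max 1 (2 * C₁ / r) := ⟨_, rfl⟩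
  have hα₀pos : 0 < α₀ := lt_of_lt_of_le one_pos (hα₀def ▸ le_max_left _ _)
  refine ⟨C, hC, α₀, hα₀pos, ?_⟩
  intro α hα
  have hα1 : (1 : ℝ) ≤ α := le_trans (hα₀def ▸ le_max_left _ _) hα
  have hαpos : (0 : ℝ) < α := lt_of_lt_of_le one_pos hα1
  have hαne : α ≠ 0 := hαpos.ne'
  have hα2 : (0 : ℝ) < α ^ 2 := pow_pos hαpos 2
  have hρr : C₁ / α ≤ r / 2 := by
    have h2 : 2 * C₁ / r ≤ α := le_trans (hα₀def ▸ le_max_right _ _) hα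
    have h3 : 2 * C₁ ≤ α * r := by rwa [div_le_iff₀ hr] at h2
    rw [div_le_div_iff₀ hαpos two_pos]
    linarith
  have hρnn : 0 ≤ C₁ / α := div_nonneg hC₁ hαpos.le
  have hsm : ∀ (X : EuclideanSpace ℝ (Fin p) →L[ℝ] ℝ), ‖α⁻¹ • X‖ = α⁻¹ * ‖X‖ := fun X => by
    rw [norm_smul α⁻¹ X, Real.norm_eq_abs, abs_of_pos (inv_pos.mpr hαpos)]
  -- mean value bound for h on the ball of radius r
  have hmean : ∀ u ∈ Metric.closedBall w₀ r, ‖h u‖ ≤ M * ‖u - w₀‖ := by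
    intro u hu
    have hdf : ∀ x ∈ Metric.closedBall w₀ r,
        HasFDerivWithinAt h (fderiv ℝ h x) (Metric.closedBall w₀ r) x :=
      fun x _ => (hdiff x).hasFDerivAt.hasFDerivWithinAt
    have := (convex_closedBall w₀ r).norm_image_sub_le_of_norm_hasFDerivWithin_le
      hdf hMb hw₀mem hu
    rwa [h0, sub_zero] at this
  -- Taylor-type bound from the local Lipschitz property of the differential
  have htaylor : ∀ ρ : ℝ, 0 ≤ ρ → ρ ≤ r → ∀ u ∈ Metric.closedBall w₀ ρ,
      ‖h u - fderiv ℝ h w₀ (u - w₀)‖ ≤ (K₀ : ℝ) * ρ * ‖u - w₀‖ := by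
    intro ρ hρ0 hρr' u hu
    have hgd : ∀ x ∈ Metric.closedBall w₀ ρ,
        HasFDerivWithinAt (fun x => h x - fderiv ℝ h w₀ x)
          (fderiv ℝ h x - fderiv ℝ h w₀) (Metric.closedBall w₀ ρ) x := by
      intro x _
      exact ((hdiff x).hasFDerivAt.sub ((fderiv ℝ h w₀).hasFDerivAt)).hasFDerivWithinAt
    have hgb : ∀ x ∈ Metric.closedBall w₀ ρ,
        ‖fderiv ℝ h x - fderiv ℝ h w₀‖ ≤ (K₀ : ℝ) * ρ := by
      intro x hx
      have hx' : x ∈ Metric.closedBall w₀ r := Metric.closedBall_subset_closedBall hρr' hx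
      refine (hGlip x hx').trans ?_
      have hxd : ‖x - w₀‖ ≤ ρ := by rwa [Metric.mem_closedBall, dist_eq_norm] at hx
      exact mul_le_mul_of_nonneg_left hxd K₀.coe_nonneg
    have hmv := (convex_closedBall w₀ ρ).norm_image_sub_le_of_norm_hasFDerivWithin_le
      hgd hgb (Metric.mem_closedBall_self hρ0) hu
    have heq : h u - fderiv ℝ h w₀ u - (h w₀ - fderiv ℝ h w₀ w₀)
        = h u - fderiv ℝ h w₀ (u - w₀) := by
      rw [h0, map_sub]; abel
    rwa [heq] at hmv
  -- fderiv formulas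
  have hFfd : ∀ u, fderiv ℝ (fun x => R (α • h x) / α ^ 2) u
      = α⁻¹ • ((fderiv ℝ R (α • h u)).comp (fderiv ℝ h u)) :=
    fun u => my_fderiv_scaled R hRdiff h hdiff hαne u
  have hFbfd : ∀ v, fderiv ℝ (fun x => R (α • fderiv ℝ h w₀ (x - w₀)) / α ^ 2) v
      = α⁻¹ • ((fderiv ℝ R (α • fderiv ℝ h w₀ (v - w₀))).comp (fderiv ℝ h w₀)) := by
    intro v
    have hφd : Differentiable ℝ (fun x : EuclideanSpace ℝ (Fin p) => fderiv ℝ h w₀ (x - w₀)) :=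
      (fderiv ℝ h w₀).differentiable.comp (differentiable_id.sub_const w₀)
    have h1 := my_fderiv_scaled R hRdiff _ hφd hαne v
    have h2 : fderiv ℝ (fun x : EuclideanSpace ℝ (Fin p) => fderiv ℝ h w₀ (x - w₀)) v
        = fderiv ℝ h w₀ := by
      have h3 : HasFDerivAt (fun x : EuclideanSpace ℝ (Fin p) => fderiv ℝ h w₀ (x - w₀))
          ((fderiv ℝ h w₀).comp (ContinuousLinearMap.id ℝ _)) v :=
        (fderiv ℝ h w₀).hasFDerivAt.comp v ((hasFDerivAt_id v).sub_const w₀)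
      simpa using h3.fderiv
    rw [h2] at h1
    exact h1
  -- STEP 1: a priori bound on the flow w α
  have hstep1 : ∀ t ∈ Set.Icc (0 : ℝ) T, ‖w α t - w₀‖ ≤ C₁ / α := by
    have hεnn : (0 : ℝ) ≤ M * N / α := div_nonneg (mul_nonneg hMpos.le hN) hαpos.le
    have hb : ∀ s ∈ Set.Icc (0 : ℝ) T, ‖w α s - w₀‖ ≤ r →
        ‖(fun s => -(gradient (fun u => R (α • h u) / α ^ 2) (w α s))) s‖
          ≤ K' * ‖w α s - w₀‖ + M * N / α := by
      intro s hs hball'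
      have hu' : w α s ∈ Metric.closedBall w₀ r := by
        rwa [Metric.mem_closedBall, dist_eq_norm]
      simp only
      rw [norm_neg, my_norm_gradient, hFfd (w α s), hsm]
      have hhu : ‖h (w α s)‖ ≤ M * ‖w α s - w₀‖ := hmean _ hu'
      have hnorm1 : ‖fderiv ℝ R (α • h (w α s))‖
          ≤ N + (LR : ℝ) * (α * (M * ‖w α s - w₀‖)) := by
        refine (hRn _).trans ?_
        have e1 : ‖α • h (w α s)‖ = α * ‖h (w α s)‖ := by
          rw [norm_smul, Real.norm_eq_abs, abs_of_pos hαpos]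
        rw [e1]
        have h4 := mul_le_mul_of_nonneg_left hhu hαpos.le
        nlinarith [LR.coe_nonneg]
      have hnn1 : (0 : ℝ) ≤ N + (LR : ℝ) * (α * (M * ‖w α s - w₀‖)) :=
        le_trans (norm_nonneg _) hnorm1
      have hcomp : ‖(fderiv ℝ R (α • h (w α s))).comp (fderiv ℝ h (w α s))‖
          ≤ (N + (LR : ℝ) * (α * (M * ‖w α s - w₀‖))) * M :=
        (ContinuousLinearMap.opNorm_comp_le _ _).trans
          (mul_le_mul hnorm1 (hMb _ hu') (norm_nonneg _) hnn1)
      calc α⁻¹ * ‖(fderiv ℝ R (α • h (w α s))).comp (fderiv ℝ h (w α s))‖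
          ≤ α⁻¹ * ((N + (LR : ℝ) * (α * (M * ‖w α s - w₀‖))) * M) :=
            mul_le_mul_of_nonneg_left hcomp (inv_nonneg.mpr hαpos.le)
        _ = M * N / α + Λ * ‖w α s - w₀‖ := by
            rw [hΛdef]; field_simp
        _ ≤ K' * ‖w α s - w₀‖ + M * N / α := by
            rw [hK'def]; nlinarith [norm_nonneg (w α s - w₀)]
    have hboot := my_gron_bootstrap hT.le hK' hεnn hr
      (by rw [hw0 α hαpos, sub_self])
      (fun s hs => (hwflow α hαpos s hs).sub_const w₀) hb ?_
    · intro t ht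
      have := hboot t ht
      calc ‖w α t - w₀‖ ≤ M * N / α / K' * (Real.exp (K' * T) - 1) := this
        _ = C₁ / α := by rw [hC₁def, hEedef]; ring
    · calc M * N / α / K' * (Real.exp (K' * T) - 1) = C₁ / α := by
            rw [hC₁def, hEedef]; ring
        _ ≤ r / 2 := hρr
  -- STEP 2: comparison Grönwall
  have hεnn2 : (0 : ℝ) ≤ C₂ / α ^ 2 := div_nonneg hC₂ hα2.le
  have hb2 : ∀ s ∈ Set.Icc (0 : ℝ) T,
      ‖(fun s => -(gradient (fun u => R (α • h u) / α ^ 2) (w α s))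
          - -(gradient (fun u => R (α • fderiv ℝ h w₀ (u - w₀)) / α ^ 2) (wb α s))) s‖
        ≤ K' * ‖w α s - wb α s‖ + C₂ / α ^ 2 := by
    intro s hs
    have hu1 : ‖w α s - w₀‖ ≤ C₁ / α := hstep1 s hs
    have huρ : w α s ∈ Metric.closedBall w₀ (C₁ / α) := by
      rwa [Metric.mem_closedBall, dist_eq_norm]
    have hu' : w α s ∈ Metric.closedBall w₀ r :=
      Metric.closedBall_subset_closedBall (hρr.trans (by linarith)) huρ
    simp only
    rw [neg_sub_neg, norm_sub_rev, my_norm_gradient_sub, hFfd (w α s), hFbfd (wb α s),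
      ← smul_sub, hsm]
    obtain ⟨Φ₁, hΦ₁⟩ : ∃ x, x = fderiv ℝ R (α • h (w α s)) := ⟨_, rfl⟩
    obtain ⟨Φ₂, hΦ₂⟩ : ∃ x, x = fderiv ℝ R (α • fderiv ℝ h w₀ (wb α s - w₀)) := ⟨_, rfl⟩
    rw [← hΦ₁, ← hΦ₂]
    have hsplit : Φ₁.comp (fderiv ℝ h (w α s)) - Φ₂.comp (fderiv ℝ h w₀)
        = Φ₁.comp (fderiv ℝ h (w α s) - fderiv ℝ h w₀) + (Φ₁ - Φ₂).comp (fderiv ℝ h w₀) := by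
      rw [ContinuousLinearMap.comp_sub, ContinuousLinearMap.sub_comp]; abel
    -- norm bounds
    have hΦ₁n : ‖Φ₁‖ ≤ N + (LR : ℝ) * M * C₁ := by
      rw [hΦ₁]
      refine (hRn _).trans ?_
      have e1 : ‖α • h (w α s)‖ = α * ‖h (w α s)‖ := by
        rw [norm_smul, Real.norm_eq_abs, abs_of_pos hαpos]
      have e2 : α * ‖h (w α s)‖ ≤ α * (M * (C₁ / α)) := by
        have := (hmean _ hu').trans (mul_le_mul_of_nonneg_left hu1 hMpos.le)
        exact mul_le_mul_of_nonneg_left this hαpos.le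
      have e3 : α * (M * (C₁ / α)) = M * C₁ := by field_simp
      rw [e1]
      nlinarith [LR.coe_nonneg]
    have hGdiff : ‖fderiv ℝ h (w α s) - fderiv ℝ h w₀‖ ≤ (K₀ : ℝ) * (C₁ / α) :=
      (hGlip _ hu').trans (mul_le_mul_of_nonneg_left hu1 K₀.coe_nonneg)
    have hΦdiff : ‖Φ₁ - Φ₂‖
        ≤ (LR : ℝ) * (α * ((K₀ : ℝ) * (C₁ / α) * (C₁ / α) + M * ‖w α s - wb α s‖)) := by
      rw [hΦ₁, hΦ₂]
      refine (hRfd _ _).trans ?_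
      have e1 : ‖α • h (w α s) - α • fderiv ℝ h w₀ (wb α s - w₀)‖
          = α * ‖h (w α s) - fderiv ℝ h w₀ (wb α s - w₀)‖ := by
        rw [← smul_sub, norm_smul, Real.norm_eq_abs, abs_of_pos hαpos]
      rw [e1]
      have e2 : h (w α s) - fderiv ℝ h w₀ (wb α s - w₀)
          = (h (w α s) - fderiv ℝ h w₀ (w α s - w₀)) + fderiv ℝ h w₀ (w α s - wb α s) := by
        have e2' : fderiv ℝ h w₀ (w α s - wb α s)
            = fderiv ℝ h w₀ (w α s - w₀) - fderiv ℝ h w₀ (wb α s - w₀) := by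
          rw [← map_sub]
          congr 1
          abel
        rw [e2']
        abel
      have e3 : ‖h (w α s) - fderiv ℝ h w₀ (wb α s - w₀)‖
          ≤ (K₀ : ℝ) * (C₁ / α) * (C₁ / α) + M * ‖w α s - wb α s‖ := by
        rw [e2]
        refine (norm_add_le _ _).trans (add_le_add ?_ ?_)
        · refine (htaylor (C₁ / α) hρnn (hρr.trans (by linarith)) _ huρ).trans ?_
          exact mul_le_mul_of_nonneg_left hu1 (mul_nonneg K₀.coe_nonneg hρnn)
        · refine ((fderiv ℝ h w₀).le_opNorm _).trans ?_
          exact mul_le_mul_of_nonneg_right hGw₀ (norm_nonneg _)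
      have h5 := mul_le_mul_of_nonneg_left e3 hαpos.le
      nlinarith [LR.coe_nonneg]
    have hΦ₁nn : (0 : ℝ) ≤ N + (LR : ℝ) * M * C₁ := le_trans (norm_nonneg _) hΦ₁n
    have hΦdnn : (0 : ℝ)
        ≤ (LR : ℝ) * (α * ((K₀ : ℝ) * (C₁ / α) * (C₁ / α) + M * ‖w α s - wb α s‖)) :=
      le_trans (norm_nonneg _) hΦdiff
    calc α⁻¹ * ‖Φ₁.comp (fderiv ℝ h (w α s)) - Φ₂.comp (fderiv ℝ h w₀)‖
        ≤ α⁻¹ * (‖Φ₁‖ * ‖fderiv ℝ h (w α s) - fderiv ℝ h w₀‖ + ‖Φ₁ - Φ₂‖ * ‖fderiv ℝ h w₀‖) := by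
          refine mul_le_mul_of_nonneg_left ?_ (inv_nonneg.mpr hαpos.le)
          rw [hsplit]
          exact (norm_add_le _ _).trans
            (add_le_add (ContinuousLinearMap.opNorm_comp_le _ _)
              (ContinuousLinearMap.opNorm_comp_le _ _))
      _ ≤ α⁻¹ * ((N + (LR : ℝ) * M * C₁) * ((K₀ : ℝ) * (C₁ / α))
            + ((LR : ℝ) * (α * ((K₀ : ℝ) * (C₁ / α) * (C₁ / α) + M * ‖w α s - wb α s‖))) * M) := by
          refine mul_le_mul_of_nonneg_left ?_ (inv_nonneg.mpr hαpos.le)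
          refine add_le_add (mul_le_mul hΦ₁n hGdiff (norm_nonneg _) hΦ₁nn)
            (mul_le_mul hΦdiff hGw₀ (norm_nonneg _) hΦdnn)
      _ = C₂ / α ^ 2 + Λ * ‖w α s - wb α s‖ := by
          rw [hC₂def, hΛdef]; field_simp; ring
      _ ≤ K' * ‖w α s - wb α s‖ + C₂ / α ^ 2 := by
          rw [hK'def]; nlinarith [norm_nonneg (w α s - wb α s)]
  have hgron := my_gron_simple hT.le hK' hεnn2
    (by rw [Pi.sub_apply, hw0 α hαpos, hwb0 α hαpos, sub_self])
    (fun s hs => (hwflow α hαpos s hs.1).sub (hwbflow α hαpos s hs.1)) hb2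
  intro t ht
  have hfin := hgron t ht
  calc ‖w α t - wb α t‖ ≤ C₂ / α ^ 2 / K' * (Real.exp (K' * T) - 1) := hfin
    _ = C₂ / K' * Ee / α ^ 2 := by rw [hEedef]; ring
    _ ≤ C / α ^ 2 := by
        rw [hCdef]
        exact (div_le_div_iff_of_pos_right hα2).mpr (by linarith)
end

section
/- Let T > 0 be a fixed time horizon and assume h(w₀) = 0. Then there exist constants C > 0 and α₀ > 0 (depending on h, R, w₀ and T but not on α) such that for every α ≥ α₀, sup_{t ∈ [0,T]} ‖α h(w_α(t)) − α h̄(w̄_α(t))‖ ≤ C/α. -/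
open scoped RealInnerProductSpace NNReal
open InnerProductSpace

/-- Descent-type lemma: if `R ≥ 0` and `∇R` is `k`-Lipschitz then `‖∇R y‖² ≤ 2 k R y`. -/
private lemma lazy_grad_sq_le {H : Type*} [NormedAddCommGroup H] [InnerProductSpace ℝ H]
    [CompleteSpace H] {R : H → ℝ} (hRnonneg : ∀ y, 0 ≤ R y) (hRdiff : Differentiable ℝ R)
    {k : ℝ} (hk : 0 < k) (hlip : ∀ x y, ‖gradient R x - gradient R y‖ ≤ k * ‖x - y‖) (y : H) :
    ‖gradient R y‖ ^ 2 ≤ 2 * k * R y := by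
  set g := gradient R y with hg
  set d : H := -(k⁻¹ • g) with hd
  have hline : ∀ s : ℝ, HasDerivAt (fun s : ℝ => y + s • d) d s := fun s => by
    simpa using ((hasDerivAt_id s).smul_const d).const_add y
  have hψ : ∀ s : ℝ, HasDerivAt (fun s : ℝ => R (y + s • d)) ⟪gradient R (y + s • d), d⟫ s := by
    intro s
    have := ((hRdiff (y + s • d)).hasGradientAt.hasFDerivAt).comp_hasDerivAt s (hline s)
    simpa [InnerProductSpace.toDual_apply_apply, Function.comp_def] using this
  set φ : ℝ → ℝ := fun s => R (y + s • d) - s * ⟪g, d⟫ - s ^ 2 * (k * ‖d‖ ^ 2 / 2) with hφ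
  have hφd : ∀ s : ℝ, HasDerivAt φ
      (⟪gradient R (y + s • d), d⟫ - ⟪g, d⟫ - s * (k * ‖d‖ ^ 2)) s := by
    intro s
    have h1 : HasDerivAt (fun s : ℝ => s * ⟪g, d⟫) ⟪g, d⟫ s := by
      simpa using (hasDerivAt_id s).mul_const (⟪g, d⟫)
    have h2 : HasDerivAt (fun s : ℝ => s ^ 2 * (k * ‖d‖ ^ 2 / 2))
        ((2 * s) * (k * ‖d‖ ^ 2 / 2)) s := by
      simpa using (hasDerivAt_pow 2 s).mul_const (k * ‖d‖ ^ 2 / 2)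
    have := ((hψ s).sub h1).sub h2
    convert this using 1
    all_goals first | rfl | ring
  have hmono : AntitoneOn φ (Set.Icc (0:ℝ) 1) := by
    apply antitoneOn_of_deriv_nonpos (convex_Icc 0 1)
    · exact fun s _ => ((hφd s).continuousAt).continuousWithinAt
    · intro s _
      exact ((hφd s).differentiableAt).differentiableWithinAt
    · intro s hs
      rw [interior_Icc] at hs
      rw [(hφd s).deriv]
      have hsub : ⟪gradient R (y + s • d), d⟫ - ⟪g, d⟫ = ⟪gradient R (y + s • d) - g, d⟫ :=
        (inner_sub_left _ _ _).symm
      have h1 : ⟪gradient R (y + s • d) - g, d⟫ ≤ ‖gradient R (y + s • d) - g‖ * ‖d‖ :=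
        real_inner_le_norm _ _
      have h2 : ‖gradient R (y + s • d) - g‖ ≤ k * (s * ‖d‖) := by
        have := hlip (y + s • d) y
        simpa [norm_smul, abs_of_pos hs.1] using this
      have hd0 : (0:ℝ) ≤ ‖d‖ := norm_nonneg _
      nlinarith [hs.1.le]
  have key : φ 1 ≤ φ 0 := hmono (Set.left_mem_Icc.2 zero_le_one)
    (Set.right_mem_Icc.2 zero_le_one) zero_le_one
  have hRyd : 0 ≤ R (y + (1:ℝ) • d) := hRnonneg _
  have hgd : ⟪g, d⟫ = -(k⁻¹ * ‖g‖ ^ 2) := by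
    rw [hd, inner_neg_right, real_inner_smul_right, real_inner_self_eq_norm_sq]
  have hdn : ‖d‖ ^ 2 = k⁻¹ ^ 2 * ‖g‖ ^ 2 := by
    rw [hd, norm_neg, norm_smul, mul_pow]
    simp [abs_of_pos (inv_pos.2 hk)]
  simp only [hφ] at key
  rw [hgd, hdn] at key
  have hk' : k ≠ 0 := hk.ne'
  have h0 : R (y + (0:ℝ) • d) = R y := by simp
  rw [h0] at key
  have : R y - ‖g‖ ^ 2 / (2 * k) ≥ 0 := by
    have expand : (1:ℝ) * -(k⁻¹ * ‖g‖ ^ 2) + (1:ℝ)^2 * (k * (k⁻¹ ^ 2 * ‖g‖ ^ 2) / 2)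
        = -(‖g‖ ^ 2 / (2 * k)) := by field_simp; ring
    nlinarith [hRyd, key]
  have h2k : 0 < 2 * k := by linarith
  have h3 := (div_le_iff₀ h2k).mp (by linarith : ‖g‖ ^ 2 / (2 * k) ≤ R y)
  linarith [h3]


private lemma lazy_grad_formula {E H : Type*}
    [NormedAddCommGroup E] [InnerProductSpace ℝ E] [CompleteSpace E]
    [NormedAddCommGroup H] [InnerProductSpace ℝ H] [CompleteSpace H]
    (R : H → ℝ) (hRdiff : Differentiable ℝ R) {α : ℝ} (hα : α ≠ 0)
    {φ : E → H} {A : E →L[ℝ] H} {u : E} (hA : HasFDerivAt φ A u) :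
    HasGradientAt (fun v => R (α • φ v) / α ^ 2)
      (α⁻¹ • (ContinuousLinearMap.adjoint A) (gradient R (α • φ u))) u := by
  set g := gradient R (α • φ u) with hg
  have hy : HasFDerivAt (fun v => α • φ v) (α • A) u := hA.const_smul α
  have hR : HasFDerivAt R (toDual ℝ H g) (α • φ u) := (hRdiff _).hasGradientAt.hasFDerivAt
  have hcomp : HasFDerivAt (fun v => R (α • φ v)) ((toDual ℝ H g).comp (α • A)) u :=
    hR.comp u hy
  have hfun : (fun v => R (α • φ v) / α ^ 2) = fun v => (α ^ 2)⁻¹ * R (α • φ v) := by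
    funext v; rw [div_eq_inv_mul]
  have hD : HasFDerivAt (fun v => (α ^ 2)⁻¹ * R (α • φ v))
      ((α ^ 2)⁻¹ • ((toDual ℝ H g).comp (α • A))) u := hcomp.const_mul _
  have hkey : toDual ℝ E (α⁻¹ • (ContinuousLinearMap.adjoint A) g)
      = (α ^ 2)⁻¹ • ((toDual ℝ H g).comp (α • A)) := by
    ext v
    simp only [InnerProductSpace.toDual_apply_apply, ContinuousLinearMap.coe_smul',
      Pi.smul_apply, ContinuousLinearMap.coe_comp', Function.comp_apply,
      ContinuousLinearMap.smul_apply, real_inner_smul_left, inner_smul_right,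
      smul_eq_mul]
    rw [ContinuousLinearMap.adjoint_inner_left]
    field_simp
  rw [hasGradientAt_iff_hasFDerivAt, hkey, hfun]
  exact hD



set_option maxHeartbeats 2000000 in
/-- **Theorem 2.1 (General lazy training), parameter comparison with the linearized flow.**
If `h w₀ = 0`, then for a fixed time horizon `T > 0` there are constants `C > 0` and
`α₀ > 0` (independent of `α`) such that for all `α ≥ α₀`,
`sup_{t ∈ [0,T]} ‖α h(w_α(t)) − α h̄(w̄_α(t))‖ ≤ C / α`. -/
theorem lazy_general_output_comparison
    {p : ℕ} {H : Type*} [NormedAddCommGroup H] [InnerProductSpace ℝ H] [CompleteSpace H]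
    (h : EuclideanSpace ℝ (Fin p) → H)
    (hdiff : Differentiable ℝ h)
    (hDhLip : LocallyLipschitz (fun u => fderiv ℝ h u))
    (R : H → ℝ) (hRnonneg : ∀ y, 0 ≤ R y) (hRdiff : Differentiable ℝ R)
    (LR : ℝ≥0) (hRgrad : LipschitzWith LR (fun y => gradient R y))
    (w₀ : EuclideanSpace ℝ (Fin p)) (h0 : h w₀ = 0)
    (w wb : ℝ → ℝ → EuclideanSpace ℝ (Fin p))
    (hw0 : ∀ α : ℝ, 0 < α → w α 0 = w₀)
    (hwflow : ∀ α : ℝ, 0 < α → ∀ t : ℝ, 0 ≤ t →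
      HasDerivAt (w α) (-(gradient (fun u => R (α • h u) / α ^ 2) (w α t))) t)
    (hwb0 : ∀ α : ℝ, 0 < α → wb α 0 = w₀)
    (hwbflow : ∀ α : ℝ, 0 < α → ∀ t : ℝ, 0 ≤ t →
      HasDerivAt (wb α)
        (-(gradient (fun u => R (α • (h w₀ + fderiv ℝ h w₀ (u - w₀))) / α ^ 2) (wb α t))) t)
    (T : ℝ) (hT : 0 < T) :
    ∃ C > 0, ∃ α₀ > 0, ∀ α : ℝ, α₀ ≤ α → ∀ t ∈ Set.Icc (0 : ℝ) T,
      ‖α • h (w α t) - α • (h w₀ + fderiv ℝ h w₀ (wb α t - w₀))‖ ≤ C / α := by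
  classical
  set A₀ : EuclideanSpace ℝ (Fin p) →L[ℝ] H := fderiv ℝ h w₀ with hA₀def
  -- Lipschitz constant for Dh near w₀
  obtain ⟨KL, t₀, ht₀, hlipDh⟩ := hDhLip w₀
  obtain ⟨r, hr, hball⟩ := Metric.nhds_basis_closedBall.mem_iff.mp ht₀
  set L : ℝ := (KL : ℝ) with hLdef
  have hL0 : 0 ≤ L := KL.coe_nonneg
  set M : ℝ := ‖A₀‖ + L * r with hMdef
  have hM0 : 0 ≤ M := by positivity
  set k : ℝ := (LR : ℝ) + 1 with hkdef
  have hk : 0 < k := by positivity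
  have hlipR : ∀ x y : H, ‖gradient R x - gradient R y‖ ≤ (LR : ℝ) * ‖x - y‖ := by
    intro x y
    have := hRgrad.dist_le_mul x y
    simpa [dist_eq_norm] using this
  have hlipRk : ∀ x y : H, ‖gradient R x - gradient R y‖ ≤ k * ‖x - y‖ := by
    intro x y
    refine (hlipR x y).trans ?_
    have : (LR : ℝ) ≤ k := by rw [hkdef]; linarith
    exact mul_le_mul_of_nonneg_right this (norm_nonneg _)
  have hGsq : ∀ y, ‖gradient R y‖ ^ 2 ≤ 2 * k * R y :=
    lazy_grad_sq_le hRnonneg hRdiff hk hlipRk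
  set G : ℝ := Real.sqrt (2 * k * R 0) with hGdef
  have hG0 : 0 ≤ G := Real.sqrt_nonneg _
  -- Dh bounds on the ball
  have hDhlip' : ∀ u ∈ Metric.closedBall w₀ r, ‖fderiv ℝ h u - A₀‖ ≤ L * ‖u - w₀‖ := by
    intro u hu
    have := hlipDh.dist_le_mul u (hball hu) w₀ (hball (Metric.mem_closedBall_self hr.le))
    simpa [dist_eq_norm] using this
  have hDhM : ∀ u ∈ Metric.closedBall w₀ r, ‖fderiv ℝ h u‖ ≤ M := by
    intro u hu
    have h1 : ‖fderiv ℝ h u‖ - ‖A₀‖ ≤ ‖fderiv ℝ h u - A₀‖ :=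
      norm_sub_norm_le _ _
    have h2 : ‖u - w₀‖ ≤ r := by
      rw [← dist_eq_norm]; exact Metric.mem_closedBall.mp hu
    have := hDhlip' u hu
    rw [hMdef]
    nlinarith
  -- constants
  set Kg : ℝ := M ^ 2 * (LR : ℝ) + 1 with hKgdef
  have hKg : 0 < Kg := by positivity
  set c : ℝ := 2 * M ^ 2 * L * G ^ 2 * T with hcdef
  have hc0 : 0 ≤ c := by positivity
  set C : ℝ := max 1 (c * Real.exp (Kg * T) / Kg) with hCdef
  set α₀ : ℝ := max 1 (4 * (M * G + 1) * T / r) with hα₀def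
  refine ⟨C, lt_of_lt_of_le one_pos (le_max_left _ _), α₀,
    lt_of_lt_of_le one_pos (le_max_left _ _), ?_⟩
  intro α hα t ht
  have hα1 : (1 : ℝ) ≤ α := le_trans (le_max_left _ _) hα
  have hαpos : (0 : ℝ) < α := lt_of_lt_of_le one_pos hα1
  have hαne : α ≠ 0 := hαpos.ne'
  have hαr : 4 * (M * G + 1) * T / r ≤ α := le_trans (le_max_right _ _) hα
  -- gradient formulas
  have hgradw : ∀ u : EuclideanSpace ℝ (Fin p), gradient (fun u : EuclideanSpace ℝ (Fin p) => R (α • h u) / α ^ 2) u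
      = α⁻¹ • (ContinuousLinearMap.adjoint (fderiv ℝ h u)) (gradient R (α • h u)) := by
    intro u
    exact HasGradientAt.gradient (lazy_grad_formula R hRdiff hαne (hdiff u).hasFDerivAt)
  have hφb : ∀ u : EuclideanSpace ℝ (Fin p), HasFDerivAt (fun u : EuclideanSpace ℝ (Fin p) => h w₀ + A₀ (u - w₀)) A₀ u := by
    intro u
    have h1 : HasFDerivAt (fun u : EuclideanSpace ℝ (Fin p) => u - w₀) (ContinuousLinearMap.id ℝ (EuclideanSpace ℝ (Fin p))) u :=
      (hasFDerivAt_id u).sub_const w₀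
    have h2 := (A₀.hasFDerivAt.comp u h1).const_add (h w₀)
    simpa using h2
  have hgradwb : ∀ u : EuclideanSpace ℝ (Fin p), gradient (fun u : EuclideanSpace ℝ (Fin p) => R (α • (h w₀ + A₀ (u - w₀))) / α ^ 2) u
      = α⁻¹ • (ContinuousLinearMap.adjoint A₀)
          (gradient R (α • (h w₀ + A₀ (u - w₀)))) := by
    intro u
    exact HasGradientAt.gradient (lazy_grad_formula R hRdiff hαne (hφb u))
  set g : ℝ → H := fun s => gradient R (α • h (w α s)) with hgdef
  set gb : ℝ → H := fun s => gradient R (α • (h w₀ + A₀ (wb α s - w₀))) with hgbdef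
  have hw' : ∀ s : ℝ, 0 ≤ s → HasDerivAt (w α)
      (-(α⁻¹ • (ContinuousLinearMap.adjoint (fderiv ℝ h (w α s))) (g s))) s := by
    intro s hs
    have := hwflow α hαpos s hs
    rwa [hgradw] at this
  have hwb' : ∀ s : ℝ, 0 ≤ s → HasDerivAt (wb α)
      (-(α⁻¹ • (ContinuousLinearMap.adjoint A₀) (gb s))) s := by
    intro s hs
    have := hwbflow α hαpos s hs
    rwa [hgradwb] at this
  -- derivative of the scaled output
  have hout : ∀ s : ℝ, 0 ≤ s → HasDerivAt (fun s => α • h (w α s))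
      (-((fderiv ℝ h (w α s))
        ((ContinuousLinearMap.adjoint (fderiv ℝ h (w α s))) (g s)))) s := by
    intro s hs
    have h1 := ((hdiff (w α s)).hasFDerivAt.comp_hasDerivAt s (hw' s hs)).const_smul α
    have heq : α • ((fderiv ℝ h (w α s))
        (-(α⁻¹ • (ContinuousLinearMap.adjoint (fderiv ℝ h (w α s))) (g s))))
        = -((fderiv ℝ h (w α s))
          ((ContinuousLinearMap.adjoint (fderiv ℝ h (w α s))) (g s))) := by
      rw [map_neg, map_smul, smul_neg, smul_smul, mul_inv_cancel₀ hαne, one_smul]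
    rwa [heq] at h1
  -- energy decay
  have hRbound : ∀ s : ℝ, 0 ≤ s → R (α • h (w α s)) ≤ R 0 := by
    have he : ∀ s : ℝ, 0 ≤ s → HasDerivAt (fun s => R (α • h (w α s)))
        (-(‖(ContinuousLinearMap.adjoint (fderiv ℝ h (w α s))) (g s)‖ ^ 2)) s := by
      intro s hs
      have h1 := ((hRdiff (α • h (w α s))).hasGradientAt.hasFDerivAt).comp_hasDerivAt
        s (hout s hs)
      have heq : (InnerProductSpace.toDual ℝ H (g s))
          (-((fderiv ℝ h (w α s))
            ((ContinuousLinearMap.adjoint (fderiv ℝ h (w α s))) (g s))))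
          = -(‖(ContinuousLinearMap.adjoint (fderiv ℝ h (w α s))) (g s)‖ ^ 2) := by
        rw [InnerProductSpace.toDual_apply_apply, inner_neg_right,
          ← ContinuousLinearMap.adjoint_inner_left, real_inner_self_eq_norm_sq]
      rwa [heq] at h1
    have hmono : AntitoneOn (fun s => R (α • h (w α s))) (Set.Ici (0:ℝ)) := by
      apply antitoneOn_of_deriv_nonpos (convex_Ici 0)
      · intro s hs
        exact ((he s hs).continuousAt).continuousWithinAt
      · intro s hs
        rw [interior_Ici] at hs
        exact ((he s hs.le).differentiableAt).differentiableWithinAt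
      · intro s hs
        rw [interior_Ici] at hs
        rw [(he s hs.le).deriv]
        exact neg_nonpos.mpr (by positivity)
    intro s hs
    have := hmono Set.self_mem_Ici (Set.mem_Ici.mpr hs) hs
    simpa [hw0 α hαpos, h0, smul_zero] using this
  have hgG : ∀ s : ℝ, 0 ≤ s → ‖g s‖ ≤ G := by
    intro s hs
    have h1 : ‖g s‖ ^ 2 ≤ 2 * k * R 0 := by
      refine (hGsq _).trans ?_
      exact mul_le_mul_of_nonneg_left (hRbound s hs) (by positivity)
    calc ‖g s‖ = Real.sqrt (‖g s‖ ^ 2) := (Real.sqrt_sq (norm_nonneg _)).symm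
      _ ≤ G := Real.sqrt_le_sqrt h1
  -- speed bound
  have hspeed : ∀ s : ℝ, 0 ≤ s → w α s ∈ Metric.closedBall w₀ r →
      ‖-(α⁻¹ • (ContinuousLinearMap.adjoint (fderiv ℝ h (w α s))) (g s))‖ ≤ M * G / α := by
    intro s hs hmem
    rw [norm_neg, norm_smul]
    have h1 : ‖(ContinuousLinearMap.adjoint (fderiv ℝ h (w α s))) (g s)‖ ≤ M * G := by
      calc ‖(ContinuousLinearMap.adjoint (fderiv ℝ h (w α s))) (g s)‖
          ≤ ‖ContinuousLinearMap.adjoint (fderiv ℝ h (w α s))‖ * ‖g s‖ :=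
            ContinuousLinearMap.le_opNorm _ _
        _ = ‖fderiv ℝ h (w α s)‖ * ‖g s‖ := by
            rw [ContinuousLinearMap.adjoint.norm_map]
        _ ≤ M * G := mul_le_mul (hDhM _ hmem) (hgG s hs) (norm_nonneg _) hM0
    have h2 : ‖α⁻¹‖ = α⁻¹ := by
      rw [Real.norm_eq_abs, abs_of_pos (inv_pos.2 hαpos)]
    rw [h2, div_eq_inv_mul]
    exact mul_le_mul_of_nonneg_left h1 (inv_nonneg.2 hαpos.le)
  -- confinement
  have hρ0 : ‖w α 0 - w₀‖ = 0 := by simp [hw0 α hαpos]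
  have hMGT : M * G / α * T ≤ r / 4 := by
    have h1 : 4 * (M * G + 1) * T ≤ α * r := by
      have h2 := mul_le_mul_of_nonneg_right hαr hr.le
      rwa [div_mul_cancel₀ _ hr.ne'] at h2
    rw [div_mul_eq_mul_div, div_le_div_iff₀ hαpos (by norm_num : (0:ℝ) < 4)]
    nlinarith [hT.le]
  have hcρ : ∀ s : ℝ, 0 ≤ s → ContinuousAt (fun v => ‖w α v - w₀‖) s := by
    intro s hs
    exact (((hw' s hs).continuousAt).sub continuousAt_const).norm
  have hconf : ∀ s ∈ Set.Icc (0:ℝ) T, ‖w α s - w₀‖ ≤ r / 2 := by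
    set S : Set ℝ := {s | s ∈ Set.Icc (0:ℝ) T ∧ ∀ u ∈ Set.Icc 0 s, ‖w α u - w₀‖ ≤ r / 2}
      with hSdef
    have h0S : (0:ℝ) ∈ S := by
      refine ⟨⟨le_refl 0, hT.le⟩, ?_⟩
      intro u hu
      have hu0 : u = 0 := le_antisymm hu.2 hu.1
      rw [hu0, hρ0]
      positivity
    have hbdd : BddAbove S := ⟨T, fun x hx => hx.1.2⟩
    have hSne : S.Nonempty := ⟨0, h0S⟩
    set τ := sSup S with hτdef
    have hτmem : τ ∈ Set.Icc (0:ℝ) T :=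
      ⟨le_csSup hbdd h0S, csSup_le hSne (fun x hx => hx.1.2)⟩
    have hlo : ∀ u : ℝ, 0 ≤ u → u < τ → ‖w α u - w₀‖ ≤ r / 2 := by
      intro u hu0 huτ
      obtain ⟨x, hxS, hux⟩ := exists_lt_of_lt_csSup hSne huτ
      exact hxS.2 u ⟨hu0, hux.le⟩
    have hτS : τ ∈ S := by
      refine ⟨hτmem, ?_⟩
      intro u hu
      rcases lt_or_eq_of_le hu.2 with hlt | heq
      · exact hlo u hu.1 hlt
      · rw [heq]
        rcases eq_or_lt_of_le hτmem.1 with h0τ | hτpos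
        · rw [← h0τ, hρ0]; positivity
        · have htend : Filter.Tendsto (fun v => ‖w α v - w₀‖)
              (nhdsWithin τ (Set.Iio τ)) (nhds ‖w α τ - w₀‖) :=
            ((hcρ τ hτmem.1).continuousWithinAt)
          refine le_of_tendsto htend ?_
          have hmemIoo : Set.Ioo (0:ℝ) τ ∈ nhdsWithin τ (Set.Iio τ) :=
            Ioo_mem_nhdsLT_of_mem ⟨hτpos, le_refl τ⟩
          filter_upwards [hmemIoo] with v hv
          exact hlo v hv.1.le hv.2
    have hτT : τ = T := by
      by_contra hne
      have hτlt : τ < T := lt_of_le_of_ne hτmem.2 hne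
      have hmv : ‖w α τ - w₀‖ ≤ M * G / α * τ := by
        have hmv0 := Convex.norm_image_sub_le_of_norm_hasDerivWithin_le
          (f := w α)
          (f' := fun u => -(α⁻¹ •
            (ContinuousLinearMap.adjoint (fderiv ℝ h (w α u))) (g u)))
          (s := Set.Icc 0 τ)
          (fun u hu => (hw' u hu.1).hasDerivWithinAt)
          (fun u hu => hspeed u hu.1 (by
            rw [Metric.mem_closedBall, dist_eq_norm]
            exact (hτS.2 u hu).trans (by linarith)))
          (convex_Icc _ _) (Set.left_mem_Icc.2 hτmem.1) (Set.right_mem_Icc.2 hτmem.1)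
        simpa [hw0 α hαpos, Real.norm_eq_abs, abs_of_nonneg hτmem.1] using hmv0
      have hmv2 : ‖w α τ - w₀‖ ≤ r / 4 := by
        refine hmv.trans (le_trans ?_ hMGT)
        exact mul_le_mul_of_nonneg_left hτmem.2 (by positivity)
      have hlt' : ‖w α τ - w₀‖ < r / 2 := lt_of_le_of_lt hmv2 (by linarith)
      have hnb : {v : ℝ | ‖w α v - w₀‖ < r / 2} ∈ nhds τ :=
        (hcρ τ hτmem.1) (Iio_mem_nhds hlt')
      obtain ⟨δ, hδ, hball2⟩ := Metric.mem_nhds_iff.mp hnb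
      set s' := min (τ + δ / 2) T with hs'def
      have hτs' : τ < s' := lt_min (by linarith) hτlt
      have hs'S : s' ∈ S := by
        refine ⟨⟨le_trans hτmem.1 hτs'.le, min_le_right _ _⟩, ?_⟩
        intro u hu
        rcases le_or_gt u τ with h1 | h1
        · exact hτS.2 u ⟨hu.1, h1⟩
        · have hub : u ∈ Metric.ball τ δ := by
            rw [Metric.mem_ball, Real.dist_eq, abs_of_pos (by linarith : (0:ℝ) < u - τ)]
            have := le_trans hu.2 (min_le_left _ _)
            linarith
          exact (hball2 hub).le
      exact absurd (le_csSup hbdd hs'S) (not_le.mpr hτs')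
    intro s hs
    refine hτS.2 s ?_
    rw [hτT]
    exact hs
  -- linear-in-time distance bound
  have hdist : ∀ s ∈ Set.Icc (0:ℝ) T, ‖w α s - w₀‖ ≤ M * G / α * T := by
    intro s hs
    have hmv0 := Convex.norm_image_sub_le_of_norm_hasDerivWithin_le
      (f := w α)
      (f' := fun u => -(α⁻¹ •
        (ContinuousLinearMap.adjoint (fderiv ℝ h (w α u))) (g u)))
      (s := Set.Icc 0 T)
      (fun u hu => (hw' u hu.1).hasDerivWithinAt)
      (fun u hu => hspeed u hu.1 (by
        rw [Metric.mem_closedBall, dist_eq_norm]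
        exact (hconf u hu).trans (by linarith)))
      (convex_Icc _ _) (Set.left_mem_Icc.2 hT.le) hs
    have h2 : ‖w α s - w₀‖ ≤ M * G / α * s := by
      simpa [hw0 α hαpos, Real.norm_eq_abs, abs_of_nonneg hs.1] using hmv0
    exact h2.trans (mul_le_mul_of_nonneg_left hs.2 (by positivity))
  -- Gronwall on the output gap
  set Δ : ℝ → H := fun s => α • h (w α s) - α • (h w₀ + A₀ (wb α s - w₀)) with hΔdef
  set Δ' : ℝ → H := fun s => A₀ ((ContinuousLinearMap.adjoint A₀) (gb s))
      - (fderiv ℝ h (w α s))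
        ((ContinuousLinearMap.adjoint (fderiv ℝ h (w α s))) (g s)) with hΔ'def
  have hΔd : ∀ s : ℝ, 0 ≤ s → HasDerivAt Δ (Δ' s) s := by
    intro s hs
    have hb := (hwb' s hs).sub_const w₀
    have h3 := ((A₀.hasFDerivAt.comp_hasDerivAt s hb).const_add (h w₀)).const_smul α
    have heq : α • (A₀ (-(α⁻¹ • (ContinuousLinearMap.adjoint A₀) (gb s))))
        = -(A₀ ((ContinuousLinearMap.adjoint A₀) (gb s))) := by
      rw [map_neg, map_smul, smul_neg, smul_smul, mul_inv_cancel₀ hαne, one_smul]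
    rw [heq] at h3
    have h5 := (hout s hs).sub h3
    have heq2 : -((fderiv ℝ h (w α s))
          ((ContinuousLinearMap.adjoint (fderiv ℝ h (w α s))) (g s)))
        - (-(A₀ ((ContinuousLinearMap.adjoint A₀) (gb s)))) = Δ' s := by
      rw [hΔ'def]; abel
    rwa [heq2] at h5
  have hA₀M : ‖A₀‖ ≤ M := by
    rw [hMdef]; nlinarith [norm_nonneg A₀]
  have hbound : ∀ s ∈ Set.Ico (0:ℝ) T, ‖Δ' s‖ ≤ Kg * ‖Δ s‖ + c / α := by
    intro s hs
    have hs' : s ∈ Set.Icc (0:ℝ) T := ⟨hs.1, hs.2.le⟩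
    have hmem : w α s ∈ Metric.closedBall w₀ r := by
      rw [Metric.mem_closedBall, dist_eq_norm]
      exact (hconf s hs').trans (by linarith)
    have hAM : ‖fderiv ℝ h (w α s)‖ ≤ M := hDhM _ hmem
    have hAA₀ : ‖fderiv ℝ h (w α s) - A₀‖ ≤ L * (M * G / α * T) :=
      (hDhlip' _ hmem).trans (mul_le_mul_of_nonneg_left (hdist s hs') hL0)
    have hgbg : ‖gb s - g s‖ ≤ (LR:ℝ) * ‖Δ s‖ := by
      refine (hlipR _ _).trans ?_
      have : ‖α • (h w₀ + A₀ (wb α s - w₀)) - α • h (w α s)‖ = ‖Δ s‖ := by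
        rw [hΔdef, norm_sub_rev]
      rw [this]
    have hgsG : ‖g s‖ ≤ G := hgG s hs.1
    have hadj : ∀ (B : EuclideanSpace ℝ (Fin p) →L[ℝ] H),
        ‖ContinuousLinearMap.adjoint B‖ = ‖B‖ := fun B =>
      ContinuousLinearMap.adjoint.norm_map B
    have hΔnn : (0:ℝ) ≤ ‖Δ s‖ := norm_nonneg _
    -- term 1
    have hterm1 : ‖A₀ ((ContinuousLinearMap.adjoint A₀) (gb s - g s))‖
        ≤ M ^ 2 * (LR:ℝ) * ‖Δ s‖ := by
      have e1 := A₀.le_opNorm ((ContinuousLinearMap.adjoint A₀) (gb s - g s))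
      have e2 := (ContinuousLinearMap.adjoint A₀).le_opNorm (gb s - g s)
      rw [hadj A₀] at e2
      calc ‖A₀ ((ContinuousLinearMap.adjoint A₀) (gb s - g s))‖
          ≤ ‖A₀‖ * ‖(ContinuousLinearMap.adjoint A₀) (gb s - g s)‖ := e1
        _ ≤ M * (M * ((LR:ℝ) * ‖Δ s‖)) := by
            refine mul_le_mul hA₀M ?_ (norm_nonneg _) hM0
            refine e2.trans ?_
            exact mul_le_mul hA₀M hgbg (norm_nonneg _) hM0
        _ = M ^ 2 * (LR:ℝ) * ‖Δ s‖ := by ring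
    -- term 2
    have hterm2 : ‖A₀ ((ContinuousLinearMap.adjoint A₀) (g s))
        - (fderiv ℝ h (w α s))
          ((ContinuousLinearMap.adjoint (fderiv ℝ h (w α s))) (g s))‖ ≤ c / α := by
      set A := fderiv ℝ h (w α s) with hAdef
      have hsplit : A₀ ((ContinuousLinearMap.adjoint A₀) (g s))
            - A ((ContinuousLinearMap.adjoint A) (g s))
          = A₀ ((ContinuousLinearMap.adjoint A₀) (g s)
              - (ContinuousLinearMap.adjoint A) (g s))
            + (A₀ - A) ((ContinuousLinearMap.adjoint A) (g s)) := by
        rw [map_sub, ContinuousLinearMap.sub_apply]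
        abel
      rw [hsplit]
      have hadjdiff : ‖(ContinuousLinearMap.adjoint A₀) (g s)
          - (ContinuousLinearMap.adjoint A) (g s)‖ ≤ L * (M * G / α * T) * G := by
        have e1 : (ContinuousLinearMap.adjoint A₀) (g s)
            - (ContinuousLinearMap.adjoint A) (g s)
            = (ContinuousLinearMap.adjoint (A₀ - A)) (g s) := by
          rw [map_sub, ContinuousLinearMap.sub_apply]
        rw [e1]
        have e2 := (ContinuousLinearMap.adjoint (A₀ - A)).le_opNorm (g s)
        rw [hadj (A₀ - A)] at e2
        have e3 : ‖A₀ - A‖ ≤ L * (M * G / α * T) := by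
          rw [norm_sub_rev]; exact hAA₀
        exact e2.trans (mul_le_mul e3 hgsG (norm_nonneg _) (by positivity))
      have h1 : ‖A₀ ((ContinuousLinearMap.adjoint A₀) (g s)
          - (ContinuousLinearMap.adjoint A) (g s))‖ ≤ M * (L * (M * G / α * T) * G) := by
        have e1 := A₀.le_opNorm ((ContinuousLinearMap.adjoint A₀) (g s)
          - (ContinuousLinearMap.adjoint A) (g s))
        exact e1.trans (mul_le_mul hA₀M hadjdiff (norm_nonneg _) hM0)
      have h2 : ‖(A₀ - A) ((ContinuousLinearMap.adjoint A) (g s))‖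
          ≤ L * (M * G / α * T) * (M * G) := by
        have e1 := (A₀ - A).le_opNorm ((ContinuousLinearMap.adjoint A) (g s))
        have e2 := (ContinuousLinearMap.adjoint A).le_opNorm (g s)
        rw [hadj A] at e2
        have e3 : ‖A₀ - A‖ ≤ L * (M * G / α * T) := by
          rw [norm_sub_rev]; exact hAA₀
        refine e1.trans ?_
        exact mul_le_mul e3 (e2.trans (mul_le_mul hAM hgsG (norm_nonneg _) hM0))
          (norm_nonneg _) (by positivity)
      refine (norm_add_le _ _).trans ?_
      refine le_trans (add_le_add h1 h2) (le_of_eq ?_)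
      rw [hcdef]
      field_simp
      ring
    have hsplitΔ' : Δ' s = A₀ ((ContinuousLinearMap.adjoint A₀) (gb s - g s))
        + (A₀ ((ContinuousLinearMap.adjoint A₀) (g s))
          - (fderiv ℝ h (w α s))
            ((ContinuousLinearMap.adjoint (fderiv ℝ h (w α s))) (g s))) := by
      rw [hΔ'def, map_sub, map_sub]
      abel
    rw [hsplitΔ']
    refine (norm_add_le _ _).trans ?_
    have hKgle : M ^ 2 * (LR:ℝ) * ‖Δ s‖ ≤ Kg * ‖Δ s‖ := by
      apply mul_le_mul_of_nonneg_right _ hΔnn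
      rw [hKgdef]; linarith
    linarith [hterm1, hterm2]
  have hΔ0 : Δ 0 = 0 := by
    rw [hΔdef]
    simp [hw0 α hαpos, hwb0 α hαpos]
  have hcontΔ : ContinuousOn Δ (Set.Icc 0 T) :=
    fun s hs => ((hΔd s hs.1).continuousAt).continuousWithinAt
  have hgron := norm_le_gronwallBound_of_norm_deriv_right_le (f := Δ) (f' := Δ')
    (δ := 0) (K := Kg) (ε := c / α) hcontΔ
    (fun s hs => (hΔd s hs.1).hasDerivWithinAt) (by simp [hΔ0]) hbound t ht
  have hfinal : gronwallBound 0 Kg (c / α) (t - 0) ≤ C / α := by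
    rw [gronwallBound_of_K_ne_0 hKg.ne']
    have h1 : Real.exp (Kg * (t - 0)) - 1 ≤ Real.exp (Kg * T) := by
      have : Real.exp (Kg * (t - 0)) ≤ Real.exp (Kg * T) :=
        Real.exp_le_exp.2 (by nlinarith [ht.2, ht.1, hKg])
      linarith
    have h2 : c / α / Kg * (Real.exp (Kg * (t - 0)) - 1)
        ≤ c / α / Kg * Real.exp (Kg * T) :=
      mul_le_mul_of_nonneg_left h1 (div_nonneg (div_nonneg hc0 hαpos.le) hKg.le)
    have h3 : c / α / Kg * Real.exp (Kg * T) = (c * Real.exp (Kg * T) / Kg) / α := by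
      ring
    have h4 : (c * Real.exp (Kg * T) / Kg) / α ≤ C / α :=
      (div_le_div_iff_of_pos_right hαpos).mpr (le_max_right _ _)
    calc (0:ℝ) * Real.exp (Kg * (t - 0)) + c / α / Kg * (Real.exp (Kg * (t - 0)) - 1)
        = c / α / Kg * (Real.exp (Kg * (t - 0)) - 1) := by ring
      _ ≤ c / α / Kg * Real.exp (Kg * T) := h2
      _ = (c * Real.exp (Kg * T) / Kg) / α := h3
      _ ≤ C / α := h4
  exact hgron.trans hfinal
end

section
/- Fix K > 0 and set T := K/Lip(h)². If α ≥ K‖α h(w₀) − y⋆‖/(r · Lip(h)), then ‖α h(w_α(T)) − α h̄(w̄_α(T))‖ / ‖α h(w₀) − y⋆‖ ≤ (K²/α) · (Lip(Dh)/Lip(h)²) · ‖α h(w₀) − y⋆‖. -/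
open scoped RealInnerProductSpace NNReal

section Aux

lemma hasGradient_sqloss {E H : Type*} [NormedAddCommGroup E] [InnerProductSpace ℝ E]
    [CompleteSpace E] [NormedAddCommGroup H] [InnerProductSpace ℝ H] [CompleteSpace H]
    {f : E → H} {Df : E →L[ℝ] H} {u : E} (hf : HasFDerivAt f Df u) (ystar : H) {α : ℝ}
    (hα : α ≠ 0) :
    HasGradientAt (fun v => ‖α • f v - ystar‖ ^ 2 / 2 / α ^ 2)
      (α⁻¹ • (ContinuousLinearMap.adjoint Df (α • f u - ystar))) u := by
  have h1 : HasFDerivAt (fun v => α • f v - ystar) (α • Df) u := (hf.const_smul α).sub_const ystar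
  have h2 := h1.norm_sq
  have h3 : HasFDerivAt (fun v => ‖α • f v - ystar‖ ^ 2 / 2 / α ^ 2)
      ((2 * α ^ 2)⁻¹ • (2 • (innerSL ℝ (α • f u - ystar)).comp (α • Df))) u := by
    have e : (fun v => ‖α • f v - ystar‖ ^ 2 / 2 / α ^ 2)
        = fun v => (2 * α ^ 2)⁻¹ • ‖α • f v - ystar‖ ^ 2 := by
      funext v
      rw [smul_eq_mul, div_div]
      ring
    rw [e]
    exact h2.const_smul ((2 * α ^ 2)⁻¹)
  rw [hasGradientAt_iff_hasFDerivAt]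
  refine h3.congr_fderiv ?_
  refine ContinuousLinearMap.ext fun v => ?_
  rw [InnerProductSpace.toDual_apply_apply]
  simp only [ContinuousLinearMap.smul_apply, ContinuousLinearMap.coe_smul', Pi.smul_apply,
    ContinuousLinearMap.comp_apply, innerSL_apply_apply, inner_smul_left, smul_eq_mul,
    ContinuousLinearMap.adjoint_inner_left, conj_trivial, inner_smul_right]
  field_simp
  ring

lemma fderiv_norm_le_of_lip {E H : Type*} [NormedAddCommGroup E] [InnerProductSpace ℝ E]
    [NormedAddCommGroup H] [NormedSpace ℝ H]
    {h : E → H} (hdiff : Differentiable ℝ h) {w₀ : E} {r Lh LDh : ℝ}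
    (hr : 0 < r) (hLh : 0 < Lh) (hLDh : 0 ≤ LDh)
    (hhLip : ∀ u ∈ Metric.closedBall w₀ r, ∀ v ∈ Metric.closedBall w₀ r,
      ‖h u - h v‖ ≤ Lh * ‖u - v‖)
    (hDhLip : ∀ u ∈ Metric.closedBall w₀ r, ∀ v ∈ Metric.closedBall w₀ r,
      ‖fderiv ℝ h u - fderiv ℝ h v‖ ≤ LDh * ‖u - v‖) :
    ∀ u ∈ Metric.closedBall w₀ r, ‖fderiv ℝ h u‖ ≤ Lh := by
  have hint : ∀ v ∈ Metric.ball w₀ r, ‖fderiv ℝ h v‖ ≤ Lh := by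
    intro v hv
    have hlip : LipschitzOnWith (Real.toNNReal Lh) h (Metric.ball w₀ r) := by
      apply LipschitzOnWith.of_dist_le'
      intro x hx y hy
      rw [dist_eq_norm, dist_eq_norm]
      exact hhLip x (Metric.ball_subset_closedBall hx) y (Metric.ball_subset_closedBall hy)
    have := (hdiff v).hasFDerivAt.le_of_lipschitzOn (Metric.isOpen_ball.mem_nhds hv) hlip
    rwa [Real.coe_toNNReal _ hLh.le] at this
  intro u hu
  refine le_of_forall_pos_le_add fun ε hε => ?_
  set c : ℝ := max 0 (1 - ε / (LDh * r + 1)) with hc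
  have hd : (0:ℝ) < LDh * r + 1 := by positivity
  have hc0 : 0 ≤ c := le_max_left _ _
  have hc1 : c < 1 := by
    apply max_lt one_pos
    have : 0 < ε / (LDh * r + 1) := by positivity
    linarith
  have hc2 : 1 - c ≤ ε / (LDh * r + 1) := by
    have := le_max_right 0 (1 - ε / (LDh * r + 1))
    linarith
  set v : E := w₀ + c • (u - w₀) with hvdef
  have huw : ‖u - w₀‖ ≤ r := by
    simpa [dist_eq_norm] using hu
  have hvball : v ∈ Metric.ball w₀ r := by
    have : ‖v - w₀‖ = c * ‖u - w₀‖ := by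
      rw [hvdef]
      simp [norm_smul, abs_of_nonneg hc0]
    rw [Metric.mem_ball, dist_eq_norm, this]
    calc c * ‖u - w₀‖ ≤ c * r := by nlinarith
      _ < 1 * r := by nlinarith
      _ = r := one_mul r
  have huv : ‖u - v‖ ≤ (1 - c) * r := by
    have : u - v = (1 - c) • (u - w₀) := by
      rw [hvdef, sub_smul, one_smul]
      abel
    rw [this, norm_smul, Real.norm_eq_abs, abs_of_nonneg (by linarith)]
    nlinarith
  have h1 : ‖fderiv ℝ h u‖ ≤ ‖fderiv ℝ h v‖ + ‖fderiv ℝ h u - fderiv ℝ h v‖ := by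
    have := norm_sub_norm_le (fderiv ℝ h u) (fderiv ℝ h v)
    linarith
  have h2 : ‖fderiv ℝ h u - fderiv ℝ h v‖ ≤ LDh * ((1 - c) * r) := by
    refine le_trans (hDhLip u hu v (Metric.ball_subset_closedBall hvball)) ?_
    exact mul_le_mul_of_nonneg_left huv hLDh
  have h3 : LDh * ((1 - c) * r) ≤ ε := by
    have h4 : LDh * r * (1 - c) ≤ LDh * r * (ε / (LDh * r + 1)) := by
      apply mul_le_mul_of_nonneg_left hc2 (by positivity)
    have h5 : LDh * r * (ε / (LDh * r + 1)) ≤ ε := by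
      rw [mul_div_assoc', div_le_iff₀ hd]
      nlinarith
    nlinarith
  have := hint v hvball
  linarith

lemma inner_D_bound {E H : Type*} [NormedAddCommGroup E] [InnerProductSpace ℝ E]
    [CompleteSpace E] [NormedAddCommGroup H] [InnerProductSpace ℝ H] [CompleteSpace H]
    (A B : E →L[ℝ] H) (g gb : H) :
    ⟪g - gb, -(A (ContinuousLinearMap.adjoint A g)) - -(B (ContinuousLinearMap.adjoint B gb))⟫
      ≤ ‖g - gb‖ * ((‖A‖ + ‖B‖) * ‖A - B‖ * ‖g‖) := by
  have hsplit : -(A (ContinuousLinearMap.adjoint A g)) - -(B (ContinuousLinearMap.adjoint B gb))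
      = -(B (ContinuousLinearMap.adjoint B (g - gb)))
        - (A (ContinuousLinearMap.adjoint A g) - B (ContinuousLinearMap.adjoint B g)) := by
    simp only [map_sub]
    abel
  rw [hsplit, inner_sub_right, inner_neg_right]
  have h1 : ⟪g - gb, B (ContinuousLinearMap.adjoint B (g - gb))⟫
      = ‖ContinuousLinearMap.adjoint B (g - gb)‖ ^ 2 := by
    rw [← ContinuousLinearMap.adjoint_inner_left, real_inner_self_eq_norm_sq]
  rw [h1]
  have hadj : ‖ContinuousLinearMap.adjoint A - ContinuousLinearMap.adjoint B‖ = ‖A - B‖ := by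
    rw [← map_sub (ContinuousLinearMap.adjoint : (E →L[ℝ] H) ≃ₗᵢ⋆[ℝ] (H →L[ℝ] E)) A B]
    exact LinearIsometryEquiv.norm_map _ _
  have e : A (ContinuousLinearMap.adjoint A g) - B (ContinuousLinearMap.adjoint B g)
      = A ((ContinuousLinearMap.adjoint A - ContinuousLinearMap.adjoint B) g)
        + (A - B) (ContinuousLinearMap.adjoint B g) := by
    simp only [ContinuousLinearMap.sub_apply, map_sub]
    abel
  have h3 : ‖A (ContinuousLinearMap.adjoint A g) - B (ContinuousLinearMap.adjoint B g)‖
      ≤ (‖A‖ + ‖B‖) * ‖A - B‖ * ‖g‖ := by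
    rw [e]
    refine le_trans (norm_add_le _ _) ?_
    have h4 : ‖A ((ContinuousLinearMap.adjoint A - ContinuousLinearMap.adjoint B) g)‖
        ≤ ‖A‖ * (‖A - B‖ * ‖g‖) := by
      refine le_trans (A.le_opNorm _) ?_
      refine mul_le_mul_of_nonneg_left ?_ (norm_nonneg _)
      refine le_trans (ContinuousLinearMap.le_opNorm _ _) ?_
      rw [hadj]
    have h5 : ‖(A - B) (ContinuousLinearMap.adjoint B g)‖ ≤ ‖A - B‖ * (‖B‖ * ‖g‖) := by
      refine le_trans ((A - B).le_opNorm _) ?_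
      refine mul_le_mul_of_nonneg_left ?_ (norm_nonneg _)
      refine le_trans (ContinuousLinearMap.le_opNorm _ _) ?_
      rw [LinearIsometryEquiv.norm_map]
    nlinarith [h4, h5]
  have h6 : -⟪g - gb, A (ContinuousLinearMap.adjoint A g) - B (ContinuousLinearMap.adjoint B g)⟫
      ≤ ‖g - gb‖ * ((‖A‖ + ‖B‖) * ‖A - B‖ * ‖g‖) := by
    have := abs_real_inner_le_norm (g - gb)
      (A (ContinuousLinearMap.adjoint A g) - B (ContinuousLinearMap.adjoint B g))
    have h7 := mul_le_mul_of_nonneg_left h3 (norm_nonneg (g - gb))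
    have h8 := neg_le_of_abs_le this
    linarith
  nlinarith [sq_nonneg ‖ContinuousLinearMap.adjoint B (g - gb)‖, h6]

end Aux

set_option maxHeartbeats 1000000 in
/-- **Theorem 2.2 (Square loss, quantitative).**
With the square loss `R(y) = ½‖y − ystar‖²`, if `h` is `Lh`-Lipschitz and `Dh` is
`LDh`-Lipschitz on the closed ball of radius `r` around `w₀`, then for `K > 0`,
`T := K / Lh²` and `α ≥ K‖α h(w₀) − ystar‖/(r Lh)` one has
`‖α h(w_α(T)) − α h̄(w̄_α(T))‖ / ‖α h(w₀) − ystar‖ ≤ (K²/α)(LDh/Lh²)‖α h(w₀) − ystar‖`. -/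
theorem lazy_square_loss_output_bound
    {p : ℕ} {H : Type*} [NormedAddCommGroup H] [InnerProductSpace ℝ H] [CompleteSpace H]
    (h : EuclideanSpace ℝ (Fin p) → H) (hdiff : Differentiable ℝ h)
    (ystar : H) (w₀ : EuclideanSpace ℝ (Fin p))
    (r Lh LDh : ℝ) (hr : 0 < r) (hLh : 0 < Lh) (hLDh : 0 ≤ LDh)
    (hhLip : ∀ u ∈ Metric.closedBall w₀ r, ∀ v ∈ Metric.closedBall w₀ r,
      ‖h u - h v‖ ≤ Lh * ‖u - v‖)
    (hDhLip : ∀ u ∈ Metric.closedBall w₀ r, ∀ v ∈ Metric.closedBall w₀ r,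
      ‖fderiv ℝ h u - fderiv ℝ h v‖ ≤ LDh * ‖u - v‖)
    (α : ℝ) (hα : 0 < α)
    (w wb : ℝ → EuclideanSpace ℝ (Fin p))
    (hw0 : w 0 = w₀) (hwb0 : wb 0 = w₀)
    (hwflow : ∀ t : ℝ, 0 ≤ t → HasDerivAt w
      (-(gradient (fun u => ‖α • h u - ystar‖ ^ 2 / 2 / α ^ 2) (w t))) t)
    (hwbflow : ∀ t : ℝ, 0 ≤ t → HasDerivAt wb
      (-(gradient
          (fun u => ‖α • (h w₀ + fderiv ℝ h w₀ (u - w₀)) - ystar‖ ^ 2 / 2 / α ^ 2) (wb t))) t)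
    (K : ℝ) (hK : 0 < K)
    (hαbig : K * ‖α • h w₀ - ystar‖ / (r * Lh) ≤ α) :
    ‖α • h (w (K / Lh ^ 2)) - α • (h w₀ + fderiv ℝ h w₀ (wb (K / Lh ^ 2) - w₀))‖ /
        ‖α • h w₀ - ystar‖ ≤
      K ^ 2 / α * (LDh / Lh ^ 2) * ‖α • h w₀ - ystar‖ := by
  by_cases hN0 : ‖α • h w₀ - ystar‖ = 0
  · rw [hN0, div_zero, mul_zero]
  have hα' : α ≠ 0 := ne_of_gt hα
  set N := ‖α • h w₀ - ystar‖ with hNdef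
  have hN : 0 < N := lt_of_le_of_ne (norm_nonneg _) (Ne.symm hN0)
  set T : ℝ := K / Lh ^ 2 with hTdef
  have hT : 0 < T := by positivity
  set Dh₀ := fderiv ℝ h w₀ with hDh₀def
  -- flows with explicit gradients
  have hgrad : ∀ u, gradient (fun v => ‖α • h v - ystar‖ ^ 2 / 2 / α ^ 2) u
      = α⁻¹ • (ContinuousLinearMap.adjoint (fderiv ℝ h u) (α • h u - ystar)) :=
    fun u => (hasGradient_sqloss ((hdiff u).hasFDerivAt) ystar hα').gradient
  have hwflow' : ∀ t, 0 ≤ t → HasDerivAt w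
      (-(α⁻¹ • (ContinuousLinearMap.adjoint (fderiv ℝ h (w t)) (α • h (w t) - ystar)))) t := by
    intro t ht
    have h2 := hwflow t ht
    rwa [hgrad (w t)] at h2
  have hbfd : ∀ u : EuclideanSpace ℝ (Fin p),
      HasFDerivAt (fun v => h w₀ + Dh₀ (v - w₀)) Dh₀ u := by
    intro u
    have h1 : HasFDerivAt (fun v : EuclideanSpace ℝ (Fin p) => Dh₀ (v - w₀)) Dh₀ u := by
      have h2 := Dh₀.hasFDerivAt.comp u ((hasFDerivAt_id u).sub_const w₀)
      simpa only [Function.comp_def, ContinuousLinearMap.comp_id, id_eq] using h2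
    exact h1.const_add (h w₀)
  have hgradb : ∀ u, gradient
      (fun v => ‖α • (h w₀ + Dh₀ (v - w₀)) - ystar‖ ^ 2 / 2 / α ^ 2) u
      = α⁻¹ • (ContinuousLinearMap.adjoint Dh₀ (α • (h w₀ + Dh₀ (u - w₀)) - ystar)) :=
    fun u => (hasGradient_sqloss (hbfd u) ystar hα').gradient
  have hwbflow' : ∀ t, 0 ≤ t → HasDerivAt wb
      (-(α⁻¹ • (ContinuousLinearMap.adjoint Dh₀ (α • (h w₀ + Dh₀ (wb t - w₀)) - ystar)))) t := by
    intro t ht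
    have h2 := hwbflow t ht
    rwa [hgradb (wb t)] at h2
  -- operator norm bounds
  have hDh_le := fderiv_norm_le_of_lip hdiff hr hLh hLDh hhLip hDhLip
  have hG_le : ∀ u, ‖fderiv ℝ h u‖ ≤ Lh →
      ‖α⁻¹ • (ContinuousLinearMap.adjoint (fderiv ℝ h u) (α • h u - ystar))‖
        ≤ α⁻¹ * (Lh * ‖α • h u - ystar‖) := by
    intro u hu
    rw [norm_smul, Real.norm_eq_abs, abs_of_pos (inv_pos.2 hα)]
    refine mul_le_mul_of_nonneg_left ?_ (inv_pos.2 hα).le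
    refine le_trans (ContinuousLinearMap.le_opNorm _ _) ?_
    refine mul_le_mul_of_nonneg_right ?_ (norm_nonneg _)
    rw [LinearIsometryEquiv.norm_map]
    exact hu
  -- loss is nonincreasing along the nonlinear flow
  have hloss : ∀ t, 0 ≤ t → ‖α • h (w t) - ystar‖ ≤ N := by
    intro t ht
    have hφ' : ∀ s, 0 ≤ s → HasDerivAt (fun τ => ‖α • h (w τ) - ystar‖ ^ 2 / 2 / α ^ 2)
        (-(‖α⁻¹ • (ContinuousLinearMap.adjoint (fderiv ℝ h (w s))
          (α • h (w s) - ystar))‖ ^ 2)) s := by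
      intro s hs
      have h1 := (hasGradient_sqloss ((hdiff (w s)).hasFDerivAt) ystar hα').hasFDerivAt
      have h2 := HasFDerivAt.comp_hasDerivAt s h1 (hwflow' s hs)
      have h3 : (InnerProductSpace.toDual ℝ _
          (α⁻¹ • (ContinuousLinearMap.adjoint (fderiv ℝ h (w s)) (α • h (w s) - ystar))))
          (-(α⁻¹ • (ContinuousLinearMap.adjoint (fderiv ℝ h (w s)) (α • h (w s) - ystar))))
          = -(‖α⁻¹ • (ContinuousLinearMap.adjoint (fderiv ℝ h (w s))
            (α • h (w s) - ystar))‖ ^ 2) := by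
        rw [InnerProductSpace.toDual_apply_apply, inner_neg_right, real_inner_self_eq_norm_sq]
      rw [h3] at h2
      exact h2
    have hanti : AntitoneOn (fun τ => ‖α • h (w τ) - ystar‖ ^ 2 / 2 / α ^ 2) (Set.Ici (0:ℝ)) := by
      apply antitoneOn_of_deriv_nonpos (convex_Ici 0)
      · intro s hs
        exact (hφ' s hs).continuousAt.continuousWithinAt
      · intro s hs
        rw [interior_Ici] at hs
        exact (hφ' s (le_of_lt hs)).differentiableAt.differentiableWithinAt
      · intro s hs
        rw [interior_Ici] at hs
        rw [(hφ' s (le_of_lt hs)).deriv]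
        simp [sq_nonneg]
    have h4 := hanti (Set.mem_Ici.2 le_rfl) (Set.mem_Ici.2 ht) ht
    simp only [hw0] at h4
    rw [← hNdef] at h4
    have h2α : (0:ℝ) < 2 * α ^ 2 := by positivity
    have hsq : ‖α • h (w t) - ystar‖ ^ 2 ≤ N ^ 2 := by
      rw [div_div, div_div, div_le_div_iff_of_pos_right h2α] at h4
      exact h4
    exact le_of_pow_le_pow_left₀ two_ne_zero hN.le hsq
  -- speed and confinement
  set C : ℝ := Lh * N / α with hCdef
  have hC : 0 < C := by positivity
  have hCT : C * T ≤ r := by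
    have h1 : K * N ≤ α * (r * Lh) := (div_le_iff₀ (by positivity)).1 hαbig
    rw [hCdef, hTdef, div_mul_div_comm, div_le_iff₀ (by positivity)]
    nlinarith
  have hspeed : ∀ s, 0 ≤ s → w s ∈ Metric.closedBall w₀ r →
      ‖-(α⁻¹ • (ContinuousLinearMap.adjoint (fderiv ℝ h (w s)) (α • h (w s) - ystar)))‖ ≤ C := by
    intro s hs hball
    rw [norm_neg]
    refine le_trans (hG_le (w s) (hDh_le _ hball)) ?_
    have h1 : α⁻¹ * (Lh * ‖α • h (w s) - ystar‖) ≤ α⁻¹ * (Lh * N) :=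
      mul_le_mul_of_nonneg_left
        (mul_le_mul_of_nonneg_left (hloss s hs) hLh.le) (inv_pos.2 hα).le
    have h2 : α⁻¹ * (Lh * N) = C := by
      rw [hCdef]; field_simp
    linarith
  have hkey : Set.Icc (0:ℝ) T ⊆ {t | ‖w t - w₀‖ ≤ C * t} := by
    apply IsClosed.Icc_subset_of_forall_exists_gt
    · have hwc : ContinuousOn w (Set.Icc 0 T) := fun t ht =>
        ((hwflow' t ht.1).continuousAt).continuousWithinAt
      have hcont : ContinuousOn (fun t => ‖w t - w₀‖ - C * t) (Set.Icc 0 T) :=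
        ((hwc.sub continuousOn_const).norm).sub ((continuous_const.mul continuous_id).continuousOn)
      have heq : {t | ‖w t - w₀‖ ≤ C * t} ∩ Set.Icc 0 T
          = Set.Icc 0 T ∩ (fun t => ‖w t - w₀‖ - C * t) ⁻¹' Set.Iic 0 := by
        ext t
        simp only [Set.mem_inter_iff, Set.mem_setOf_eq, Set.mem_preimage, Set.mem_Iic,
          sub_nonpos, and_comm]
      rw [heq]
      exact hcont.preimage_isClosed_of_isClosed isClosed_Icc isClosed_Iic
    · simp [hw0]
    · rintro x ⟨hxs, hx0, hxT⟩ y hy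
      have hxs' : ‖w x - w₀‖ ≤ C * x := hxs
      have hwr : ‖w x - w₀‖ < r := by
        have h1 : C * x < C * T := by nlinarith
        linarith
      have hcont := (hwflow' x hx0).continuousAt
      rw [Metric.continuousAt_iff] at hcont
      obtain ⟨δ, hδ0, hδ⟩ := hcont (r - ‖w x - w₀‖) (by linarith)
      set t := min y (x + δ / 2) with htdef
      have hxt : x < t := lt_min hy (by linarith)
      have hmem : ∀ s ∈ Set.Icc x t, w s ∈ Metric.closedBall w₀ r := by
        intro s hs
        have hds : dist s x < δ := by
          rw [Real.dist_eq, abs_of_nonneg (by linarith [hs.1])]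
          have h1 : s ≤ x + δ / 2 := le_trans hs.2 (min_le_right _ _)
          linarith
        have h2 := hδ hds
        rw [Metric.mem_closedBall]
        calc dist (w s) w₀ ≤ dist (w s) (w x) + dist (w x) w₀ := dist_triangle _ _ _
          _ ≤ (r - ‖w x - w₀‖) + ‖w x - w₀‖ := by
              rw [dist_eq_norm]
              exact add_le_add h2.le le_rfl
          _ = r := by ring
      have hmvt := norm_image_sub_le_of_norm_deriv_le_segment'
        (f := w)
        (f' := fun s => -(α⁻¹ • (ContinuousLinearMap.adjoint (fderiv ℝ h (w s))
          (α • h (w s) - ystar))))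
        (C := C)
        (fun s hs => (hwflow' s (le_trans hx0 hs.1)).hasDerivWithinAt)
        (fun s hs => hspeed s (le_trans hx0 hs.1) (hmem s (Set.Ico_subset_Icc_self hs)))
        t (Set.right_mem_Icc.2 hxt.le)
      refine ⟨t, ?_, hxt, min_le_left _ _⟩
      show ‖w t - w₀‖ ≤ C * t
      have htri : ‖w t - w₀‖ ≤ ‖w t - w x‖ + ‖w x - w₀‖ := by
        have := dist_triangle (w t) (w x) w₀
        simpa [dist_eq_norm] using this
      calc ‖w t - w₀‖ ≤ ‖w t - w x‖ + ‖w x - w₀‖ := htri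
        _ ≤ C * (t - x) + C * x := add_le_add hmvt hxs'
        _ = C * t := by ring
  have hballT : ∀ t, t ∈ Set.Icc (0:ℝ) T →
      w t ∈ Metric.closedBall w₀ r ∧ ‖w t - w₀‖ ≤ C * t := by
    intro t ht
    have h1 : ‖w t - w₀‖ ≤ C * t := hkey ht
    refine ⟨?_, h1⟩
    rw [Metric.mem_closedBall, dist_eq_norm]
    have h2 : C * t ≤ C * T := by nlinarith [ht.2]
    linarith
  -- the output difference and its derivative
  set Δ : ℝ → H := fun s => α • h (w s) - α • (h w₀ + Dh₀ (wb s - w₀)) with hΔdef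
  set D : ℝ → H := fun s =>
    -((fderiv ℝ h (w s)) (ContinuousLinearMap.adjoint (fderiv ℝ h (w s)) (α • h (w s) - ystar)))
      - -(Dh₀ (ContinuousLinearMap.adjoint Dh₀ (α • (h w₀ + Dh₀ (wb s - w₀)) - ystar)))
    with hDdef
  have hΔ' : ∀ t, 0 ≤ t → HasDerivAt Δ (D t) t := by
    intro t ht
    simp only [hΔdef, hDdef]
    have h1 : HasDerivAt (fun s => α • h (w s))
        (-((fderiv ℝ h (w t)) (ContinuousLinearMap.adjoint (fderiv ℝ h (w t))
          (α • h (w t) - ystar)))) t := by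
      have hF : HasFDerivAt (fun u => α • h u) (α • fderiv ℝ h (w t)) (w t) :=
        ((hdiff (w t)).hasFDerivAt).const_smul α
      have h2 := HasFDerivAt.comp_hasDerivAt t hF (hwflow' t ht)
      have h3 : (α • fderiv ℝ h (w t))
          (-(α⁻¹ • (ContinuousLinearMap.adjoint (fderiv ℝ h (w t)) (α • h (w t) - ystar))))
          = -((fderiv ℝ h (w t)) (ContinuousLinearMap.adjoint (fderiv ℝ h (w t))
            (α • h (w t) - ystar))) := by
        simp only [ContinuousLinearMap.smul_apply, map_neg, map_smul, smul_neg, smul_smul,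
          mul_inv_cancel₀ hα', inv_mul_cancel₀ hα', one_smul]
      rw [h3] at h2
      exact h2
    have h4 : HasDerivAt (fun s => α • (h w₀ + Dh₀ (wb s - w₀)))
        (-(Dh₀ (ContinuousLinearMap.adjoint Dh₀ (α • (h w₀ + Dh₀ (wb t - w₀)) - ystar)))) t := by
      have hF : HasFDerivAt (fun u => α • (h w₀ + Dh₀ (u - w₀))) (α • Dh₀) (wb t) :=
        (hbfd (wb t)).const_smul α
      have h5 := HasFDerivAt.comp_hasDerivAt t hF (hwbflow' t ht)
      have h6 : (α • Dh₀)
          (-(α⁻¹ • (ContinuousLinearMap.adjoint Dh₀ (α • (h w₀ + Dh₀ (wb t - w₀)) - ystar))))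
          = -(Dh₀ (ContinuousLinearMap.adjoint Dh₀
            (α • (h w₀ + Dh₀ (wb t - w₀)) - ystar))) := by
        simp only [ContinuousLinearMap.smul_apply, map_neg, map_smul, smul_neg, smul_smul,
          mul_inv_cancel₀ hα', inv_mul_cancel₀ hα', one_smul]
      rw [h6] at h5
      exact h5
    exact h1.sub h4
  set c' : ℝ := 2 * Lh * LDh * C * N with hc'def
  have hc'0 : 0 ≤ c' := by positivity
  have hinner : ∀ t, t ∈ Set.Icc (0:ℝ) T → ⟪Δ t, D t⟫ ≤ ‖Δ t‖ * (c' * t) := by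
    intro t ht
    have hΔt : Δ t = (α • h (w t) - ystar) - (α • (h w₀ + Dh₀ (wb t - w₀)) - ystar) := by
      simp only [hΔdef]
      abel
    have hbase := inner_D_bound (fderiv ℝ h (w t)) Dh₀
      (α • h (w t) - ystar) (α • (h w₀ + Dh₀ (wb t - w₀)) - ystar)
    rw [← hΔt] at hbase
    have hDt : D t = -((fderiv ℝ h (w t)) (ContinuousLinearMap.adjoint (fderiv ℝ h (w t))
        (α • h (w t) - ystar)))
        - -(Dh₀ (ContinuousLinearMap.adjoint Dh₀
          (α • (h w₀ + Dh₀ (wb t - w₀)) - ystar))) := by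
      simp only [hDdef]
    rw [← hDt] at hbase
    refine le_trans hbase ?_
    refine mul_le_mul_of_nonneg_left ?_ (norm_nonneg _)
    have hwball := (hballT t ht).1
    have hwlin := (hballT t ht).2
    have hAle : ‖fderiv ℝ h (w t)‖ ≤ Lh := hDh_le _ hwball
    have hBle : ‖Dh₀‖ ≤ Lh := by
      rw [hDh₀def]
      exact hDh_le w₀ (Metric.mem_closedBall_self hr.le)
    have hADle : ‖fderiv ℝ h (w t) - Dh₀‖ ≤ LDh * (C * t) := by
      rw [hDh₀def]
      refine le_trans (hDhLip (w t) hwball w₀ (Metric.mem_closedBall_self hr.le)) ?_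
      exact mul_le_mul_of_nonneg_left hwlin hLDh
    have hgle : ‖α • h (w t) - ystar‖ ≤ N := hloss t ht.1
    have e1 : c' * t = (Lh + Lh) * (LDh * (C * t)) * N := by
      rw [hc'def]; ring
    rw [e1]
    have hn1 : (0:ℝ) ≤ ‖fderiv ℝ h (w t)‖ := norm_nonneg _
    have hn2 : (0:ℝ) ≤ ‖Dh₀‖ := norm_nonneg _
    have hn3 : (0:ℝ) ≤ ‖fderiv ℝ h (w t) - Dh₀‖ := norm_nonneg _
    have hn4 : (0:ℝ) ≤ ‖α • h (w t) - ystar‖ := norm_nonneg _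
    have hLCt : (0:ℝ) ≤ LDh * (C * t) := by
      have := ht.1
      positivity
    gcongr
  have hΔ0 : Δ 0 = 0 := by
    simp [hΔdef, hw0, hwb0]
  -- Gronwall-free integration
  have hfinal : ‖Δ T‖ ≤ c' * T ^ 2 / 2 := by
    refine le_of_forall_pos_le_add fun ε hε => ?_
    have hq : ∀ s : ℝ, (0:ℝ) < ‖Δ s‖ ^ 2 + ε ^ 2 := fun s => by positivity
    have hψ' : ∀ s, 0 ≤ s → HasDerivAt (fun u => Real.sqrt (‖Δ u‖ ^ 2 + ε ^ 2))
        ((2 * ⟪Δ s, D s⟫) / (2 * Real.sqrt (‖Δ s‖ ^ 2 + ε ^ 2))) s := by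
      intro s hs
      have h1 : HasDerivAt (fun u => ‖Δ u‖ ^ 2 + ε ^ 2) (2 * ⟪Δ s, D s⟫) s :=
        ((hΔ' s hs).norm_sq).add_const _
      exact h1.sqrt (ne_of_gt (hq s))
    have hψle : ∀ s : ℝ, ‖Δ s‖ ≤ Real.sqrt (‖Δ s‖ ^ 2 + ε ^ 2) := by
      intro s
      rw [show ‖Δ s‖ = Real.sqrt (‖Δ s‖ ^ 2) from (Real.sqrt_sq (norm_nonneg _)).symm]
      exact Real.sqrt_le_sqrt (by nlinarith [sq_nonneg ε, Real.sq_sqrt (sq_nonneg (‖Δ s‖))])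
    have hχ' : ∀ s, 0 ≤ s → HasDerivAt
        (fun u => Real.sqrt (‖Δ u‖ ^ 2 + ε ^ 2) - c' * u ^ 2 / 2)
        ((2 * ⟪Δ s, D s⟫) / (2 * Real.sqrt (‖Δ s‖ ^ 2 + ε ^ 2)) - c' * s) s := by
      intro s hs
      have h2 : HasDerivAt (fun u : ℝ => c' * u ^ 2 / 2) (c' * s) s := by
        have h3 := ((hasDerivAt_pow 2 s).const_mul c').div_const 2
        refine h3.congr_deriv ?_
        rw [show (2:ℕ) - 1 = 1 from rfl, pow_one]
        push_cast
        ring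
      exact (hψ' s hs).sub h2
    have hanti : AntitoneOn (fun u => Real.sqrt (‖Δ u‖ ^ 2 + ε ^ 2) - c' * u ^ 2 / 2)
        (Set.Icc 0 T) := by
      apply antitoneOn_of_deriv_nonpos (convex_Icc 0 T)
      · intro s hs
        exact (hχ' s hs.1).continuousAt.continuousWithinAt
      · intro s hs
        rw [interior_Icc] at hs
        exact (hχ' s hs.1.le).differentiableAt.differentiableWithinAt
      · intro s hs
        rw [interior_Icc] at hs
        rw [(hχ' s hs.1.le).deriv]
        have hI := hinner s ⟨hs.1.le, hs.2.le⟩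
        have hpos : 0 < Real.sqrt (‖Δ s‖ ^ 2 + ε ^ 2) := Real.sqrt_pos.2 (hq s)
        rw [sub_nonpos, div_le_iff₀ (by positivity)]
        have hcs : (0:ℝ) ≤ c' * s := by
          have := hs.1
          positivity
        have h5 : ‖Δ s‖ * (c' * s) ≤ Real.sqrt (‖Δ s‖ ^ 2 + ε ^ 2) * (c' * s) :=
          mul_le_mul_of_nonneg_right (hψle s) hcs
        nlinarith [hI, h5]
    have h6 := hanti (Set.left_mem_Icc.2 hT.le) (Set.right_mem_Icc.2 hT.le) hT.le
    have h7 : Real.sqrt (‖Δ 0‖ ^ 2 + ε ^ 2) = ε := by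
      rw [hΔ0]
      simp [Real.sqrt_sq hε.le]
    have h6' : Real.sqrt (‖Δ T‖ ^ 2 + ε ^ 2) - c' * T ^ 2 / 2
        ≤ Real.sqrt (‖Δ 0‖ ^ 2 + ε ^ 2) - c' * 0 ^ 2 / 2 := h6
    rw [h7] at h6'
    have h8 := hψle T
    nlinarith [h6', h8]
  -- conclusion
  have hgoal : ‖Δ T‖ / N ≤ (c' * T ^ 2 / 2) / N := by
    gcongr
  have heq2 : (c' * T ^ 2 / 2) / N = K ^ 2 / α * (LDh / Lh ^ 2) * N := by
    rw [hc'def, hCdef, hTdef]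
    field_simp
  have hΔTeq : α • h (w T) - α • (h w₀ + Dh₀ (wb T - w₀)) = Δ T := by
    rw [hΔdef]
  rw [hΔTeq, ← heq2]
  exact hgoal
end

section
/- Fix K > 0 and define the exit time T_exit := inf{t > 0 : ‖w_α(t) − w₀‖ > r}. Then for every t ≤ T_exit it holds ‖w_α(t) − w₀‖ ≤ (t/α) · ‖α h(w₀) − y⋆‖ · Lip(h). Consequently, if α ≥ K‖α h(w₀) − y⋆‖/(r · Lip(h)), then T_exit > K/Lip(h)², i.e. the gradient flow remains in the ball of radius r around w₀ up to time K/Lip(h)². -/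
set_option maxHeartbeats 1000000


open scoped RealInnerProductSpace NNReal ENNReal

/-- **Step 1 of the proof of Theorem 2.2 (exit-time bound).**
With the square loss and the exit time `T_exit := inf {t > 0 : ‖w_α(t) − w₀‖ > r}`,
for every `t ≤ T_exit` one has `‖w_α(t) − w₀‖ ≤ (t/α)‖α h(w₀) − y⋆‖ Lip(h)`; consequently,
if `α ≥ K‖α h(w₀) − y⋆‖/(r Lip(h))` then `T_exit > K / Lip(h)²`. -/
theorem lazy_square_loss_exit_time
    {p : ℕ} {H : Type*} [NormedAddCommGroup H] [InnerProductSpace ℝ H] [CompleteSpace H]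
    (h : EuclideanSpace ℝ (Fin p) → H) (hdiff : Differentiable ℝ h)
    (ystar : H) (w₀ : EuclideanSpace ℝ (Fin p))
    (r Lh LDh : ℝ) (hr : 0 < r) (hLh : 0 < Lh) (hLDh : 0 ≤ LDh)
    (hhLip : ∀ u ∈ Metric.closedBall w₀ r, ∀ v ∈ Metric.closedBall w₀ r,
      ‖h u - h v‖ ≤ Lh * ‖u - v‖)
    (hDhLip : ∀ u ∈ Metric.closedBall w₀ r, ∀ v ∈ Metric.closedBall w₀ r,
      ‖fderiv ℝ h u - fderiv ℝ h v‖ ≤ LDh * ‖u - v‖)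
    (α : ℝ) (hα : 0 < α)
    (w : ℝ → EuclideanSpace ℝ (Fin p)) (hw0 : w 0 = w₀)
    (hwflow : ∀ t : ℝ, 0 ≤ t → HasDerivAt w
      (-(gradient (fun u => ‖α • h u - ystar‖ ^ 2 / 2 / α ^ 2) (w t))) t)
    (K : ℝ) (hK : 0 < K)
    (Texit : ℝ≥0∞)
    (hTexit : Texit = ⨅ t ∈ {s : ℝ | 0 < s ∧ r < ‖w s - w₀‖}, ENNReal.ofReal t) :
    (∀ t : ℝ, 0 ≤ t → ENNReal.ofReal t ≤ Texit →
      ‖w t - w₀‖ ≤ t / α * ‖α • h w₀ - ystar‖ * Lh) ∧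
    (K * ‖α • h w₀ - ystar‖ / (r * Lh) ≤ α →
      ENNReal.ofReal (K / Lh ^ 2) < Texit) := by
  classical
  set C : ℝ := ‖α • h w₀ - ystar‖ with hCdef
  have hC0 : 0 ≤ C := norm_nonneg _
  set gradF : EuclideanSpace ℝ (Fin p) → EuclideanSpace ℝ (Fin p) :=
    fun u => α⁻¹ • ((ContinuousLinearMap.adjoint (fderiv ℝ h u)) (α • h u - ystar))
    with hgradFdef
  -- Step A : gradient formula
  have key : ∀ u, HasGradientAt (fun u => ‖α • h u - ystar‖ ^ 2 / 2 / α ^ 2) (gradF u) u := by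
    intro u
    have hGf : HasFDerivAt (fun u => α • h u - ystar) (α • fderiv ℝ h u) u :=
      ((hdiff u).hasFDerivAt.const_smul α).sub_const ystar
    have h2 : HasFDerivAt (fun u => ‖α • h u - ystar‖ ^ 2)
        (2 • (innerSL ℝ (α • h u - ystar)).comp (α • fderiv ℝ h u)) u := hGf.norm_sq
    have h3 := h2.const_mul ((2 * α ^ 2)⁻¹)
    have hFα' : (fun u => ‖α • h u - ystar‖ ^ 2 / 2 / α ^ 2)
        = fun u => (2 * α ^ 2)⁻¹ * ‖α • h u - ystar‖ ^ 2 := by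
      funext x; rw [div_div, div_eq_inv_mul]
    rw [hFα', hasGradientAt_iff_hasFDerivAt]
    have heq : InnerProductSpace.toDual ℝ (EuclideanSpace ℝ (Fin p)) (gradF u)
        = (2 * α ^ 2)⁻¹ • (2 • (innerSL ℝ (α • h u - ystar)).comp (α • fderiv ℝ h u)) := by
      ext v
      simp only [hgradFdef, InnerProductSpace.toDual_apply_apply, real_inner_smul_left,
        ContinuousLinearMap.adjoint_inner_left, ContinuousLinearMap.smul_apply,
        ContinuousLinearMap.coe_smul', Pi.smul_apply, ContinuousLinearMap.comp_apply,
        innerSL_apply_apply, smul_eq_mul]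
      rw [real_inner_smul_right, nsmul_eq_mul]
      field_simp
      ring
    rw [heq]
    exact h3
  have hgrad : ∀ u, gradient (fun u => ‖α • h u - ystar‖ ^ 2 / 2 / α ^ 2) u = gradF u :=
    fun u => (key u).gradient
  -- norm of fderiv h on the closed ball
  have hDh_lt : ∀ u ∈ Metric.ball w₀ r, ‖fderiv ℝ h u‖ ≤ Lh := by
    intro u hu
    refine norm_fderiv_le_of_lip' ℝ hLh.le ?_
    filter_upwards [Metric.isOpen_ball.mem_nhds hu] with x hx
    exact hhLip x (Metric.ball_subset_closedBall hx) u (Metric.ball_subset_closedBall hu)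
  have hDh_le : ∀ u ∈ Metric.closedBall w₀ r, ‖fderiv ℝ h u‖ ≤ Lh := by
    intro u hu
    by_contra hcon
    push_neg at hcon
    set ε : ℝ := ‖fderiv ℝ h u‖ - Lh with hεdef
    have hε : 0 < ε := by simp [hεdef]; linarith
    set δ : ℝ := min (1/2) (ε / (LDh * r + 1)) with hδdef
    have hLDr : (0:ℝ) < LDh * r + 1 := by nlinarith
    have hδpos : 0 < δ := lt_min (by norm_num) (div_pos hε hLDr)
    have hδ1 : δ ≤ 1/2 := min_le_left _ _
    set u' : EuclideanSpace ℝ (Fin p) := w₀ + (1 - δ) • (u - w₀) with hu'def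
    have hu'dist : ‖u' - w₀‖ = (1 - δ) * ‖u - w₀‖ := by
      rw [hu'def]
      simp only [add_sub_cancel_left, norm_smul]
      rw [Real.norm_eq_abs, abs_of_nonneg (by linarith)]
    have huw : ‖u - w₀‖ ≤ r := by
      have := hu; rwa [Metric.mem_closedBall, dist_eq_norm] at this
    have hu'ball : u' ∈ Metric.ball w₀ r := by
      rw [Metric.mem_ball, dist_eq_norm, hu'dist]
      calc (1 - δ) * ‖u - w₀‖ ≤ (1 - δ) * r := by
            apply mul_le_mul_of_nonneg_left huw; linarith
        _ < r := by nlinarith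
    have huu' : ‖u - u'‖ ≤ δ * r := by
      have : u - u' = δ • (u - w₀) := by
        rw [hu'def]; module
      rw [this, norm_smul, Real.norm_eq_abs, abs_of_nonneg hδpos.le]
      exact mul_le_mul_of_nonneg_left huw hδpos.le
    have hbd : ‖fderiv ℝ h u‖ ≤ Lh + LDh * (δ * r) := by
      calc ‖fderiv ℝ h u‖ ≤ ‖fderiv ℝ h u'‖ + ‖fderiv ℝ h u - fderiv ℝ h u'‖ := by
            have := norm_sub_norm_le (fderiv ℝ h u) (fderiv ℝ h u'); linarith [norm_sub_rev (fderiv ℝ h u) (fderiv ℝ h u')]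
        _ ≤ Lh + LDh * ‖u - u'‖ := by
            gcongr
            · exact hDh_lt u' hu'ball
            · exact hDhLip u hu u' (Metric.ball_subset_closedBall hu'ball)
        _ ≤ Lh + LDh * (δ * r) := by gcongr
    have hδr : LDh * (δ * r) ≤ ε * (LDh * r) / (LDh * r + 1) := by
      have hδ2 : δ ≤ ε / (LDh * r + 1) := min_le_right _ _
      calc LDh * (δ * r) = δ * (LDh * r) := by ring
        _ ≤ (ε / (LDh * r + 1)) * (LDh * r) := by
            apply mul_le_mul_of_nonneg_right hδ2 (by positivity)
        _ = ε * (LDh * r) / (LDh * r + 1) := by ring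
    have hlast : ε * (LDh * r) / (LDh * r + 1) < ε := by
      rw [div_lt_iff₀ hLDr]; nlinarith
    have : ‖fderiv ℝ h u‖ < Lh + ε := by linarith
    simp [hεdef] at this
  -- norm bound on gradF
  have hgradF_le : ∀ u ∈ Metric.closedBall w₀ r,
      ‖gradF u‖ ≤ α⁻¹ * (Lh * ‖α • h u - ystar‖) := by
    intro u hu
    rw [hgradFdef]
    simp only [norm_smul, Real.norm_eq_abs, abs_of_pos (inv_pos.2 hα)]
    apply mul_le_mul_of_nonneg_left _ (inv_pos.2 hα).le
    calc ‖(ContinuousLinearMap.adjoint (fderiv ℝ h u)) (α • h u - ystar)‖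
        ≤ ‖ContinuousLinearMap.adjoint (fderiv ℝ h u)‖ * ‖α • h u - ystar‖ :=
          ContinuousLinearMap.le_opNorm _ _
      _ ≤ Lh * ‖α • h u - ystar‖ := by
          apply mul_le_mul_of_nonneg_right _ (norm_nonneg _)
          rw [LinearIsometryEquiv.norm_map]
          exact hDh_le u hu
  -- Lipschitz-type bound of gradF relative to w₀
  have hgradF_lip : ∀ u ∈ Metric.closedBall w₀ r,
      ‖gradF u - gradF w₀‖ ≤ (Lh ^ 2 + LDh * C * α⁻¹) * ‖u - w₀‖ := by
    intro u hu
    have hw₀ball : w₀ ∈ Metric.closedBall w₀ r := Metric.mem_closedBall_self hr.le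
    have hsplit : gradF u - gradF w₀
        = α⁻¹ • ((ContinuousLinearMap.adjoint (fderiv ℝ h u)) (α • h u - α • h w₀)
          + (ContinuousLinearMap.adjoint (fderiv ℝ h u)
              - ContinuousLinearMap.adjoint (fderiv ℝ h w₀)) (α • h w₀ - ystar)) := by
      have e1 : α • h u - α • h w₀ = (α • h u - ystar) - (α • h w₀ - ystar) := by abel
      rw [hgradFdef, e1]
      simp only [map_sub, ContinuousLinearMap.sub_apply, smul_sub, smul_add]
      abel
    rw [hsplit, norm_smul, Real.norm_eq_abs, abs_of_pos (inv_pos.2 hα)]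
    have h1 : ‖(ContinuousLinearMap.adjoint (fderiv ℝ h u)) (α • h u - α • h w₀)‖
        ≤ Lh * (α * (Lh * ‖u - w₀‖)) := by
      calc ‖(ContinuousLinearMap.adjoint (fderiv ℝ h u)) (α • h u - α • h w₀)‖
          ≤ ‖ContinuousLinearMap.adjoint (fderiv ℝ h u)‖ * ‖α • h u - α • h w₀‖ :=
            ContinuousLinearMap.le_opNorm _ _
        _ ≤ Lh * (α * (Lh * ‖u - w₀‖)) := by
            apply mul_le_mul
            · rw [LinearIsometryEquiv.norm_map]; exact hDh_le u hu
            · rw [← smul_sub, norm_smul, Real.norm_eq_abs, abs_of_pos hα]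
              exact mul_le_mul_of_nonneg_left (hhLip u hu w₀ hw₀ball) hα.le
            · exact norm_nonneg _
            · exact hLh.le
    have h2 : ‖(ContinuousLinearMap.adjoint (fderiv ℝ h u)
          - ContinuousLinearMap.adjoint (fderiv ℝ h w₀)) (α • h w₀ - ystar)‖
        ≤ LDh * ‖u - w₀‖ * C := by
      calc ‖(ContinuousLinearMap.adjoint (fderiv ℝ h u)
            - ContinuousLinearMap.adjoint (fderiv ℝ h w₀)) (α • h w₀ - ystar)‖
          ≤ ‖ContinuousLinearMap.adjoint (fderiv ℝ h u)
              - ContinuousLinearMap.adjoint (fderiv ℝ h w₀)‖ * C :=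
            ContinuousLinearMap.le_opNorm _ _
        _ ≤ LDh * ‖u - w₀‖ * C := by
            apply mul_le_mul_of_nonneg_right _ hC0
            rw [← map_sub, LinearIsometryEquiv.norm_map]
            exact hDhLip u hu w₀ hw₀ball
    calc α⁻¹ * ‖(ContinuousLinearMap.adjoint (fderiv ℝ h u)) (α • h u - α • h w₀)
          + (ContinuousLinearMap.adjoint (fderiv ℝ h u)
              - ContinuousLinearMap.adjoint (fderiv ℝ h w₀)) (α • h w₀ - ystar)‖
        ≤ α⁻¹ * (Lh * (α * (Lh * ‖u - w₀‖)) + LDh * ‖u - w₀‖ * C) := by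
          apply mul_le_mul_of_nonneg_left _ (inv_pos.2 hα).le
          calc _ ≤ _ := norm_add_le _ _
            _ ≤ _ := add_le_add h1 h2
      _ = (Lh ^ 2 + LDh * C * α⁻¹) * ‖u - w₀‖ := by field_simp
  -- the loss along the flow
  have hψd : ∀ t : ℝ, 0 ≤ t → HasDerivAt (fun t => ‖α • h (w t) - ystar‖ ^ 2 / 2 / α ^ 2)
      (-‖gradF (w t)‖ ^ 2) t := by
    intro t ht
    have h1 := (key (w t)).hasFDerivAt.comp_hasDerivAt t (hwflow t ht)
    refine h1.congr_deriv ?_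
    rw [hgrad, InnerProductSpace.toDual_apply_apply, inner_neg_right,
      real_inner_self_eq_norm_sq]
  have hψanti : AntitoneOn (fun t => ‖α • h (w t) - ystar‖ ^ 2 / 2 / α ^ 2) (Set.Ici 0) := by
    apply antitoneOn_of_deriv_nonpos (convex_Ici 0)
    · intro x hx
      exact (hψd x hx).continuousAt.continuousWithinAt
    · intro x hx
      rw [interior_Ici] at hx
      exact ((hψd x (le_of_lt hx)).differentiableAt).differentiableWithinAt
    · intro x hx
      rw [interior_Ici] at hx
      rw [(hψd x (le_of_lt hx)).deriv]
      simp [sq_nonneg]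
  have hloss : ∀ s t : ℝ, 0 ≤ s → s ≤ t →
      ‖α • h (w t) - ystar‖ ≤ ‖α • h (w s) - ystar‖ := by
    intro s t hs hst
    have h1 := hψanti (Set.mem_Ici.2 hs) (Set.mem_Ici.2 (hs.trans hst)) hst
    have h2α : (0:ℝ) < α ^ 2 := by positivity
    have h2 : ‖α • h (w t) - ystar‖ ^ 2 ≤ ‖α • h (w s) - ystar‖ ^ 2 := by
      have := h1
      rw [div_le_div_iff_of_pos_right h2α, div_le_div_iff_of_pos_right (by norm_num : (0:ℝ) < 2)] at this
      exact this
    exact le_of_pow_le_pow_left₀ two_ne_zero (norm_nonneg _) h2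
  -- master mean value segment bound
  have hseg : ∀ a b : ℝ, 0 ≤ a → a ≤ b → (∀ s ∈ Set.Icc a b, ‖w s - w₀‖ ≤ r) →
      ‖w b - w a‖ ≤ α⁻¹ * (Lh * ‖α • h (w a) - ystar‖) * (b - a) := by
    intro a b ha hab hball
    have h1 : ∀ x ∈ Set.Icc a b, HasDerivWithinAt w
        (-(gradient (fun u => ‖α • h u - ystar‖ ^ 2 / 2 / α ^ 2) (w x))) (Set.Icc a b) x :=
      fun x hx => (hwflow x (ha.trans hx.1)).hasDerivWithinAt
    have h2 : ∀ x ∈ Set.Ico a b,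
        ‖-(gradient (fun u => ‖α • h u - ystar‖ ^ 2 / 2 / α ^ 2) (w x))‖
          ≤ α⁻¹ * (Lh * ‖α • h (w a) - ystar‖) := by
      intro x hx
      rw [norm_neg, hgrad]
      have hxball : w x ∈ Metric.closedBall w₀ r := by
        rw [Metric.mem_closedBall, dist_eq_norm]
        exact hball x ⟨hx.1, hx.2.le⟩
      calc ‖gradF (w x)‖ ≤ α⁻¹ * (Lh * ‖α • h (w x) - ystar‖) := hgradF_le _ hxball
        _ ≤ α⁻¹ * (Lh * ‖α • h (w a) - ystar‖) := by
            gcongr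
            exact hloss a x ha hx.1
    have := norm_image_sub_le_of_norm_deriv_le_segment' h1 h2 b ⟨hab, le_refl b⟩
    linarith
  -- continuity of the flow
  have hcontw : ∀ t : ℝ, 0 ≤ t → ContinuousAt w t := fun t ht => (hwflow t ht).continuousAt
  have hcontρ : ∀ t : ℝ, 0 ≤ t → ContinuousAt (fun x => ‖w x - w₀‖) t := by
    intro t ht
    exact ((hcontw t ht).sub continuousAt_const).norm
  -- passing to the closed endpoint
  have hclose : ∀ t : ℝ, 0 < t → (∀ s ∈ Set.Ioo (0:ℝ) t, ‖w s - w₀‖ ≤ r) →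
      ∀ s ∈ Set.Icc (0:ℝ) t, ‖w s - w₀‖ ≤ r := by
    intro t ht hs s hsmem
    rcases eq_or_lt_of_le hsmem.1 with h0 | h0
    · rw [← h0, hw0]; simpa using hr.le
    rcases eq_or_lt_of_le hsmem.2 with h1 | h1
    · have hne : (nhdsWithin t (Set.Ioo (0:ℝ) t)).NeBot := by
        rw [← mem_closure_iff_nhdsWithin_neBot, closure_Ioo ht.ne]
        exact ⟨ht.le, le_refl t⟩
      have htd : Filter.Tendsto (fun x => ‖w x - w₀‖) (nhdsWithin t (Set.Ioo (0:ℝ) t))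
          (nhds ‖w t - w₀‖) :=
        (hcontρ t ht.le).tendsto.mono_left nhdsWithin_le_nhds
      rw [h1]
      exact le_of_tendsto htd (Filter.eventually_inf_principal.2
        (Filter.Eventually.of_forall fun x hx => hs x hx))
    · exact hs s ⟨h0, h1⟩
  -- containment up to Texit
  have hIn : ∀ t : ℝ, 0 ≤ t → ENNReal.ofReal t ≤ Texit →
      ∀ s ∈ Set.Icc (0:ℝ) t, ‖w s - w₀‖ ≤ r := by
    intro t ht hle
    rcases eq_or_lt_of_le ht with h0 | h0
    · intro s hs
      have : s = 0 := le_antisymm (hs.2.trans h0.symm.le) hs.1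
      rw [this, hw0]; simpa using hr.le
    apply hclose t h0
    intro s hs
    by_contra hc
    push_neg at hc
    have hmem : s ∈ {s : ℝ | 0 < s ∧ r < ‖w s - w₀‖} := ⟨hs.1, hc⟩
    have h2 : Texit ≤ ENNReal.ofReal s := by
      rw [hTexit]
      exact iInf₂_le s hmem
    have h3 : ENNReal.ofReal t ≤ ENNReal.ofReal s := hle.trans h2
    rw [ENNReal.ofReal_le_ofReal_iff hs.1.le] at h3
    linarith [hs.2]
  -- PART 1
  have part1 : ∀ t : ℝ, 0 ≤ t → ENNReal.ofReal t ≤ Texit →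
      ‖w t - w₀‖ ≤ t / α * C * Lh := by
    intro t ht hle
    have hb := hIn t ht hle
    have h1 := hseg 0 t le_rfl ht hb
    rw [hw0] at h1
    calc ‖w t - w₀‖ ≤ α⁻¹ * (Lh * C) * (t - 0) := h1
      _ = t / α * C * Lh := by field_simp; ring
  refine ⟨part1, ?_⟩
  -- PART 2
  intro hα2
  set T : ℝ := K / Lh ^ 2 with hTdef
  have hT : 0 < T := by positivity
  have hKC : K * C ≤ α * (r * Lh) := by
    rw [div_le_iff₀ (by positivity : (0:ℝ) < r * Lh)] at hα2
    linarith
  have hM : α⁻¹ * (Lh * C) * T ≤ r := by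
    rw [hTdef]
    rw [show α⁻¹ * (Lh * C) * (K / Lh ^ 2) = (K * C) / (α * Lh) by field_simp]
    rw [div_le_iff₀ (by positivity : (0:ℝ) < α * Lh)]
    calc K * C ≤ α * (r * Lh) := hKC
      _ = r * (α * Lh) := by ring
  have hMlt : ∀ t : ℝ, 0 ≤ t → t < T → α⁻¹ * (Lh * C) * t < r := by
    intro t ht htT
    rcases eq_or_lt_of_le (by positivity : (0:ℝ) ≤ α⁻¹ * (Lh * C)) with hz | hz
    · rw [← hz]; simpa using hr
    · calc α⁻¹ * (Lh * C) * t < α⁻¹ * (Lh * C) * T := by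
            exact mul_lt_mul_of_pos_left htT hz
        _ ≤ r := hM
  -- bootstrap: the flow stays in the ball on [0, T]
  have hballT : ∀ s ∈ Set.Icc (0:ℝ) T, ‖w s - w₀‖ ≤ r := by
    set A : Set ℝ := {t | t ∈ Set.Icc (0:ℝ) T ∧ ∀ s ∈ Set.Icc (0:ℝ) t, ‖w s - w₀‖ ≤ r}
      with hAdef
    have h0A : (0:ℝ) ∈ A := by
      constructor
      · exact ⟨le_rfl, hT.le⟩
      · intro s hs
        have : s = 0 := le_antisymm hs.2 hs.1
        rw [this, hw0]; simpa using hr.le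
    have hAne : A.Nonempty := ⟨0, h0A⟩
    have hAbdd : BddAbove A := ⟨T, fun a ha => ha.1.2⟩
    set t₀ : ℝ := sSup A with ht₀def
    have h0t₀ : 0 ≤ t₀ := le_csSup hAbdd h0A
    have ht₀T : t₀ ≤ T := csSup_le hAne fun a ha => ha.1.2
    have ht₀ball : ∀ s ∈ Set.Icc (0:ℝ) t₀, ‖w s - w₀‖ ≤ r := by
      rcases eq_or_lt_of_le h0t₀ with h0 | h0
      · intro s hs
        have : s = 0 := le_antisymm (hs.2.trans h0.symm.le) hs.1
        rw [this, hw0]; simpa using hr.le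
      · apply hclose t₀ h0
        intro s hs
        obtain ⟨a, haA, hsa⟩ := exists_lt_of_lt_csSup hAne hs.2
        exact haA.2 s ⟨hs.1.le, hsa.le⟩
    have ht₀eq : t₀ = T := by
      by_contra hne
      have ht₀lt : t₀ < T := lt_of_le_of_ne ht₀T hne
      have hwt₀ : ‖w t₀ - w₀‖ < r := by
        have h1 := hseg 0 t₀ le_rfl h0t₀ ht₀ball
        rw [hw0] at h1
        calc ‖w t₀ - w₀‖ ≤ α⁻¹ * (Lh * C) * (t₀ - 0) := h1
          _ = α⁻¹ * (Lh * C) * t₀ := by ring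
          _ < r := hMlt t₀ h0t₀ ht₀lt
      have hc := hcontρ t₀ h0t₀
      rw [Metric.continuousAt_iff] at hc
      obtain ⟨δ, hδ, hδc⟩ := hc (r - ‖w t₀ - w₀‖) (by linarith)
      set t₁ : ℝ := min T (t₀ + δ / 2) with ht₁def
      have ht₁A : t₁ ∈ A := by
        constructor
        · exact ⟨le_trans h0t₀ (le_min ht₀T (by linarith)), min_le_left _ _⟩
        · intro s hs
          rcases le_or_gt s t₀ with hst | hst
          · exact ht₀ball s ⟨hs.1, hst⟩
          · have hsd : dist s t₀ < δ := by
              rw [Real.dist_eq, abs_of_pos (by linarith)]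
              have : s ≤ t₀ + δ / 2 := hs.2.trans (min_le_right _ _)
              linarith
            have hd2 := hδc hsd
            rw [Real.dist_eq] at hd2
            have hd3 := abs_lt.1 hd2
            linarith [hd3.2]
      have : t₁ ≤ t₀ := le_csSup hAbdd ht₁A
      have ht₁gt : t₀ < t₁ := lt_min ht₀lt (by linarith)
      linarith
    intro s hs
    exact ht₀ball s (by rw [ht₀eq]; exact hs)
  -- strict inequality at time T
  have hltT : ‖w T - w₀‖ < r := by
    set C₂ : ℝ := ‖α • h (w (T / 2)) - ystar‖ with hC₂def
    have hC₂le : C₂ ≤ C := by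
      have := hloss 0 (T / 2) le_rfl (by linarith)
      rwa [hw0] at this
    rcases lt_or_eq_of_le hC₂le with hC₂lt | hC₂eq
    · -- the loss strictly decreased by time T/2
      have hb1 : ‖w (T / 2) - w₀‖ ≤ α⁻¹ * (Lh * C) * (T / 2) := by
        have h1 := hseg 0 (T / 2) le_rfl (by linarith)
          (fun s hs => hballT s ⟨hs.1, hs.2.trans (by linarith)⟩)
        rw [hw0] at h1
        calc ‖w (T / 2) - w₀‖ ≤ α⁻¹ * (Lh * C) * (T / 2 - 0) := h1
          _ = α⁻¹ * (Lh * C) * (T / 2) := by ring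
      have hb2 : ‖w T - w (T / 2)‖ ≤ α⁻¹ * (Lh * C₂) * (T / 2) := by
        have h1 := hseg (T / 2) T (by linarith) (by linarith)
          (fun s hs => hballT s ⟨(by linarith [hs.1] : (0:ℝ) ≤ s), hs.2⟩)
        calc ‖w T - w (T / 2)‖ ≤ α⁻¹ * (Lh * C₂) * (T - T / 2) := h1
          _ = α⁻¹ * (Lh * C₂) * (T / 2) := by ring
      calc ‖w T - w₀‖ ≤ ‖w T - w (T / 2)‖ + ‖w (T / 2) - w₀‖ := by
            calc ‖w T - w₀‖ = ‖(w T - w (T / 2)) + (w (T / 2) - w₀)‖ := by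
                  rw [sub_add_sub_cancel]
              _ ≤ ‖w T - w (T / 2)‖ + ‖w (T / 2) - w₀‖ := norm_add_le _ _
        _ ≤ α⁻¹ * (Lh * C₂) * (T / 2) + α⁻¹ * (Lh * C) * (T / 2) := add_le_add hb2 hb1
        _ < α⁻¹ * (Lh * C) * (T / 2) + α⁻¹ * (Lh * C) * (T / 2) := by
            have : α⁻¹ * (Lh * C₂) * (T / 2) < α⁻¹ * (Lh * C) * (T / 2) := by
              apply mul_lt_mul_of_pos_right _ (by linarith)
              apply mul_lt_mul_of_pos_left _ (inv_pos.2 hα)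
              exact mul_lt_mul_of_pos_left hC₂lt hLh
            linarith
        _ = α⁻¹ * (Lh * C) * T := by ring
        _ ≤ r := hM
    · -- the loss is constant on [0, T/2]; then the gradient at w₀ vanishes
      have hT2 : (0:ℝ) < T / 2 := by linarith
      have hψeq : (fun t => ‖α • h (w t) - ystar‖ ^ 2 / 2 / α ^ 2) (T / 2)
          = (fun t => ‖α • h (w t) - ystar‖ ^ 2 / 2 / α ^ 2) 0 := by
        simp only [hw0]
        rw [← hC₂def, hC₂eq]
      have hconst : ∀ x ∈ Set.Icc (0:ℝ) (T / 2),
          (fun t => ‖α • h (w t) - ystar‖ ^ 2 / 2 / α ^ 2) x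
            = (fun t => ‖α • h (w t) - ystar‖ ^ 2 / 2 / α ^ 2) 0 := by
        intro x hx
        have h1 := hψanti (Set.mem_Ici.2 (le_refl (0:ℝ))) (Set.mem_Ici.2 hx.1) hx.1
        have h2 := hψanti (Set.mem_Ici.2 hx.1) (Set.mem_Ici.2 (hx.1.trans hx.2)) hx.2
        rw [hψeq] at h2
        exact le_antisymm h1 h2
      have hd0 : HasDerivWithinAt (fun t => ‖α • h (w t) - ystar‖ ^ 2 / 2 / α ^ 2)
          (-‖gradF (w 0)‖ ^ 2) (Set.Icc (0:ℝ) (T / 2)) 0 :=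
        (hψd 0 le_rfl).hasDerivWithinAt
      have hd0' : HasDerivWithinAt (fun t => ‖α • h (w t) - ystar‖ ^ 2 / 2 / α ^ 2)
          (0 : ℝ) (Set.Icc (0:ℝ) (T / 2)) 0 := by
        apply HasDerivWithinAt.congr (hasDerivWithinAt_const _ _
          ((fun t => ‖α • h (w t) - ystar‖ ^ 2 / 2 / α ^ 2) 0)) hconst
          (hconst 0 ⟨le_rfl, hT2.le⟩)
      have huniq : UniqueDiffWithinAt ℝ (Set.Icc (0:ℝ) (T / 2)) 0 :=
        (uniqueDiffOn_Icc hT2) 0 ⟨le_rfl, hT2.le⟩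
      have hzero : -‖gradF (w 0)‖ ^ 2 = 0 := huniq.eq_deriv _ hd0 hd0'
      have hgradzero : gradF w₀ = 0 := by
        rw [← hw0]
        have : ‖gradF (w 0)‖ ^ 2 = 0 := by linarith [hzero]
        have := (pow_eq_zero_iff two_ne_zero).mp this
        exact norm_eq_zero.1 this
      -- Gronwall: w stays at w₀ on [0, T]
      set Λ : ℝ := Lh ^ 2 + LDh * C * α⁻¹ with hΛdef
      have hgr := norm_le_gronwallBound_of_norm_deriv_right_le
        (f := fun x => w x - w₀)
        (f' := fun x => -(gradient (fun u => ‖α • h u - ystar‖ ^ 2 / 2 / α ^ 2) (w x)))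
        (δ := 0) (K := Λ) (ε := 0) (a := 0) (b := T)
        (fun x hx => ((hcontw x hx.1).sub continuousAt_const).continuousWithinAt)
        (fun x hx => ((hwflow x hx.1).sub_const w₀).hasDerivWithinAt)
        (by simp [hw0])
        (by
          intro x hx
          rw [norm_neg, hgrad]
          have hxball : w x ∈ Metric.closedBall w₀ r := by
            rw [Metric.mem_closedBall, dist_eq_norm]
            exact hballT x ⟨hx.1, hx.2.le⟩
          have := hgradF_lip (w x) hxball
          rw [hgradzero, sub_zero] at this
          simpa using this)
      have hwT := hgr T ⟨hT.le, le_rfl⟩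
      rw [gronwallBound_ε0_δ0] at hwT
      simpa using lt_of_le_of_lt hwT hr
  -- conclude: the exit time exceeds T strictly
  have hc := hcontρ T hT.le
  rw [Metric.continuousAt_iff] at hc
  obtain ⟨δ, hδ, hδc⟩ := hc (r - ‖w T - w₀‖) (by linarith)
  have hSlb : ∀ s ∈ {s : ℝ | 0 < s ∧ r < ‖w s - w₀‖}, T + δ / 2 ≤ s := by
    intro s hsmem
    by_contra hcn
    push_neg at hcn
    rcases le_or_gt s T with hsT | hsT
    · exact absurd hsmem.2 (not_lt.2 (hballT s ⟨hsmem.1.le, hsT⟩))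
    · have hsd : dist s T < δ := by
        rw [Real.dist_eq, abs_of_pos (by linarith)]
        linarith
      have hd2 := hδc hsd
      rw [Real.dist_eq] at hd2
      have hd3 := abs_lt.1 hd2
      have : ‖w s - w₀‖ < r := by linarith [hd3.2]
      linarith [hsmem.2]
  have hTexit_ge : ENNReal.ofReal (T + δ / 2) ≤ Texit := by
    rw [hTexit]
    exact le_iInf₂ fun s hs => ENNReal.ofReal_le_ofReal (hSlb s hs)
  calc ENNReal.ofReal (K / Lh ^ 2) < ENNReal.ofReal (T + δ / 2) := by
        rw [ENNReal.ofReal_lt_ofReal_iff (by linarith)]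
        rw [← hTdef]; linarith
    _ ≤ Texit := hTexit_ge
end

section
/- Fix K > 0 and set T := K/Lip(h)². If α ≥ K‖α h(w₀) − y⋆‖/(r · Lip(h)), then (α · Lip(h)/‖α h(w₀) − y⋆‖) · ‖w_α(T) − w̄_α(T)‖ ≤ (K²/α) · (Lip(Dh)/Lip(h)²) · ‖α h(w₀) − y⋆‖ · (2 + 4K/3). -/
open scoped RealInnerProductSpace NNReal
open Set

lemma sq_loss_hasGradient {E H : Type*} [NormedAddCommGroup E] [InnerProductSpace ℝ E]
    [CompleteSpace E] [NormedAddCommGroup H] [InnerProductSpace ℝ H] [CompleteSpace H]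
    (f : E → H) (D : E →L[ℝ] H) (u : E) (hf : HasFDerivAt f D u) (ystar : H) {α : ℝ}
    (hα : α ≠ 0) :
    HasGradientAt (fun v => ‖α • f v - ystar‖ ^ 2 / 2 / α ^ 2)
      ((1/α) • (ContinuousLinearMap.adjoint D (α • f u - ystar))) u := by
  have hF : HasFDerivAt (fun v => α • f v - ystar) (α • D) u :=
    (hf.const_smul α).sub_const ystar
  have hq := (hF.inner ℝ hF).const_mul ((2 * α ^ 2)⁻¹)
  have hfun : (fun v => ‖α • f v - ystar‖ ^ 2 / 2 / α ^ 2)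
      = fun v => (2 * α ^ 2)⁻¹ * ⟪α • f v - ystar, α • f v - ystar⟫ := by
    funext v
    rw [real_inner_self_eq_norm_sq]
    field_simp
  rw [hasFDerivAt_iff_hasGradientAt] at hq
  rw [hfun]
  convert hq using 1
  refine ext_inner_right ℝ fun v => ?_
  rw [InnerProductSpace.toDual_symm_apply]
  simp only [ ContinuousLinearMap.smul_apply,
    ContinuousLinearMap.coe_comp', Function.comp_apply, ContinuousLinearMap.prod_apply,
    fderivInnerCLM_apply, real_inner_smul_left, real_inner_smul_right,
    ContinuousLinearMap.adjoint_inner_left, smul_eq_mul]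
  rw [real_inner_comm (D v) (α • f u - ystar)]
  field_simp
  ring

lemma normsq_decay {E H : Type*} [NormedAddCommGroup E] [InnerProductSpace ℝ E]
    [CompleteSpace E] [NormedAddCommGroup H] [InnerProductSpace ℝ H] [CompleteSpace H]
    (u : ℝ → H) (C : ℝ → (E →L[ℝ] H))
    (hu : ∀ t, 0 ≤ t → HasDerivAt u (-(C t ((ContinuousLinearMap.adjoint (C t)) (u t)))) t)
    {T t : ℝ} (ht : t ∈ Icc (0:ℝ) T) : ‖u t‖ ≤ ‖u 0‖ := by
  have key : ∀ s ∈ Icc (0:ℝ) T, ⟪u s, u s⟫ ≤ ⟪u 0, u 0⟫ := by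
    refine image_le_of_deriv_right_le_deriv_boundary (f := fun s => ⟪u s, u s⟫)
      (f' := fun s => ⟪u s, -(C s ((ContinuousLinearMap.adjoint (C s)) (u s)))⟫ +
        ⟪-(C s ((ContinuousLinearMap.adjoint (C s)) (u s))), u s⟫)
      (B := fun _ => ⟪u 0, u 0⟫) (B' := fun _ => 0) ?_ ?_ le_rfl continuousOn_const
      (fun x _ => (hasDerivWithinAt_const _ _ _)) ?_
    · intro s hs
      exact (((hu s hs.1).continuousAt).inner ((hu s hs.1).continuousAt)).continuousWithinAt
    · intro s hs
      exact ((hu s hs.1).inner ℝ (hu s hs.1)).hasDerivWithinAt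
    · intro s hs
      have h1 : ⟪u s, C s ((ContinuousLinearMap.adjoint (C s)) (u s))⟫ =
          ⟪(ContinuousLinearMap.adjoint (C s)) (u s),
           (ContinuousLinearMap.adjoint (C s)) (u s)⟫ := by
        rw [← ContinuousLinearMap.adjoint_inner_left]
      have h2 : (0:ℝ) ≤ ⟪(ContinuousLinearMap.adjoint (C s)) (u s),
          (ContinuousLinearMap.adjoint (C s)) (u s)⟫ := real_inner_self_nonneg
      simp only [ContinuousLinearMap.neg_apply, inner_neg_left, inner_neg_right]
      have h3 : ⟪(C s) ((ContinuousLinearMap.adjoint (C s)) (u s)), u s⟫ =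
          ⟪(ContinuousLinearMap.adjoint (C s)) (u s),
           (ContinuousLinearMap.adjoint (C s)) (u s)⟫ := by
        rw [real_inner_comm]; exact h1
      linarith
  have := key t ht
  rw [real_inner_self_eq_norm_sq, real_inner_self_eq_norm_sq] at this
  exact (pow_le_pow_iff_left₀ (norm_nonneg _) (norm_nonneg _) two_ne_zero).mp this

set_option maxHeartbeats 4000000 in
/-- **Step 3 of the proof of Theorem 2.2 (parameter comparison, square loss).**
With the square loss, for `K > 0`, `T := K / Lip(h)²` and
`α ≥ K‖α h(w₀) − y⋆‖/(r Lip(h))`, one has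
`(α Lip(h)/‖α h(w₀) − y⋆‖)‖w_α(T) − w̄_α(T)‖ ≤ (K²/α)(Lip(Dh)/Lip(h)²)‖α h(w₀) − y⋆‖(2 + 4K/3)`. -/
theorem lazy_square_loss_param_bound
    {p : ℕ} {H : Type*} [NormedAddCommGroup H] [InnerProductSpace ℝ H] [CompleteSpace H]
    (h : EuclideanSpace ℝ (Fin p) → H) (hdiff : Differentiable ℝ h)
    (ystar : H) (w₀ : EuclideanSpace ℝ (Fin p))
    (r Lh LDh : ℝ) (hr : 0 < r) (hLh : 0 < Lh) (hLDh : 0 ≤ LDh)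
    (hhLip : ∀ u ∈ Metric.closedBall w₀ r, ∀ v ∈ Metric.closedBall w₀ r,
      ‖h u - h v‖ ≤ Lh * ‖u - v‖)
    (hDhLip : ∀ u ∈ Metric.closedBall w₀ r, ∀ v ∈ Metric.closedBall w₀ r,
      ‖fderiv ℝ h u - fderiv ℝ h v‖ ≤ LDh * ‖u - v‖)
    (α : ℝ) (hα : 0 < α)
    (w wb : ℝ → EuclideanSpace ℝ (Fin p))
    (hw0 : w 0 = w₀) (hwb0 : wb 0 = w₀)
    (hwflow : ∀ t : ℝ, 0 ≤ t → HasDerivAt w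
      (-(gradient (fun u => ‖α • h u - ystar‖ ^ 2 / 2 / α ^ 2) (w t))) t)
    (hwbflow : ∀ t : ℝ, 0 ≤ t → HasDerivAt wb
      (-(gradient
          (fun u => ‖α • (h w₀ + fderiv ℝ h w₀ (u - w₀)) - ystar‖ ^ 2 / 2 / α ^ 2) (wb t))) t)
    (K : ℝ) (hK : 0 < K)
    (hαbig : K * ‖α • h w₀ - ystar‖ / (r * Lh) ≤ α) :
    α * Lh / ‖α • h w₀ - ystar‖ * ‖w (K / Lh ^ 2) - wb (K / Lh ^ 2)‖ ≤
      K ^ 2 / α * (LDh / Lh ^ 2) * ‖α • h w₀ - ystar‖ * (2 + 4 * K / 3) := by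
  rcases eq_or_lt_of_le (norm_nonneg (α • h w₀ - ystar)) with hρ0 | hρ
  · rw [← hρ0]
    simp
  set ρ := ‖α • h w₀ - ystar‖ with hρdef
  have hαne : α ≠ 0 := ne_of_gt hα
  set A := fderiv ℝ h w₀ with hA
  set T := K / Lh ^ 2 with hT
  have hTpos : 0 < T := by positivity
  set c := Lh * ρ / α with hc
  have hcpos : 0 < c := by positivity
  set M := Lh * LDh * c * ρ with hM
  have hM0 : 0 ≤ M := by positivity
  -- derivative of the flows with explicit gradients
  have hw' : ∀ t, 0 ≤ t → HasDerivAt w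
      (-((1/α) • (ContinuousLinearMap.adjoint (fderiv ℝ h (w t)) (α • h (w t) - ystar)))) t := by
    intro t ht
    have hgr := (sq_loss_hasGradient h (fderiv ℝ h (w t)) (w t) (hdiff (w t)).hasFDerivAt
      ystar hαne).gradient
    have h2 := hwflow t ht
    rw [hgr] at h2
    exact h2
  have hlin : ∀ u : EuclideanSpace ℝ (Fin p), HasFDerivAt (fun v => h w₀ + A (v - w₀)) A u := by
    intro u
    have h1 : HasFDerivAt (fun v : EuclideanSpace ℝ (Fin p) => A (v - w₀)) A u :=
      A.hasFDerivAt.comp u ((hasFDerivAt_id u).sub_const w₀)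
    simpa using h1.const_add (h w₀)
  have hwb' : ∀ t, 0 ≤ t → HasDerivAt wb
      (-((1/α) • (ContinuousLinearMap.adjoint A (α • (h w₀ + A (wb t - w₀)) - ystar)))) t := by
    intro t ht
    have hgr := (sq_loss_hasGradient (fun v => h w₀ + A (v - w₀)) A (wb t) (hlin (wb t))
      ystar hαne).gradient
    have h2 := hwbflow t ht
    rw [hgr] at h2
    exact h2
  -- derivative of the residuals
  have hg' : ∀ t, 0 ≤ t → HasDerivAt (fun s => α • h (w s) - ystar)
      (-((fderiv ℝ h (w t)) (ContinuousLinearMap.adjoint (fderiv ℝ h (w t))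
        (α • h (w t) - ystar)))) t := by
    intro t ht
    have h1 := (((hdiff (w t)).hasFDerivAt.comp_hasDerivAt t (hw' t ht)).const_smul
      α).sub_const ystar
    convert h1 using 1
    · rfl
    rw [map_neg, map_smul, smul_neg, smul_smul, mul_one_div, div_self hαne, one_smul]
  have hgb' : ∀ t, 0 ≤ t → HasDerivAt (fun s => α • (h w₀ + A (wb s - w₀)) - ystar)
      (-(A (ContinuousLinearMap.adjoint A (α • (h w₀ + A (wb t - w₀)) - ystar)))) t := by
    intro t ht
    have h1 := (((hlin (wb t)).comp_hasDerivAt t (hwb' t ht)).const_smul α).sub_const ystar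
    convert h1 using 1
    · rfl
    rw [map_neg, map_smul, smul_neg, smul_smul, mul_one_div, div_self hαne, one_smul]
  -- the residuals are nonincreasing in norm
  have hgle : ∀ t ∈ Set.Icc (0:ℝ) T, ‖α • h (w t) - ystar‖ ≤ ρ := by
    intro t ht
    have := normsq_decay (fun s => α • h (w s) - ystar) (fun s => fderiv ℝ h (w s)) hg' ht
    simpa [hw0] using this
  have hgble : ∀ t ∈ Set.Icc (0:ℝ) T, ‖α • (h w₀ + A (wb t - w₀)) - ystar‖ ≤ ρ := by
    intro t ht
    have := normsq_decay (fun s => α • (h w₀ + A (wb s - w₀)) - ystar) (fun _ => A) hgb' ht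
    simpa [hwb0] using this
  -- operator norm bound on the closed ball
  have hDnorm : ∀ u ∈ Metric.closedBall w₀ r, ‖fderiv ℝ h u‖ ≤ Lh := by
    have hint : ∀ u ∈ Metric.ball w₀ r, ‖fderiv ℝ h u‖ ≤ Lh := by
      intro u hu
      refine (hdiff u).hasFDerivAt.le_of_lip' hLh.le ?_
      filter_upwards [Metric.isOpen_ball.eventually_mem hu] with x hx
      exact hhLip x (Metric.ball_subset_closedBall hx) u (Metric.ball_subset_closedBall hu)
    intro u hu
    refine le_of_forall_pos_le_add fun ε hε => ?_
    have huw : ‖u - w₀‖ ≤ r := by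
      rw [← dist_eq_norm]; exact Metric.mem_closedBall.mp hu
    set θ := min (1/2) (ε / (LDh * r + 1)) with hθdef
    have hθ0 : 0 < θ := lt_min (by norm_num) (by positivity)
    have hθ1 : θ < 1 := lt_of_le_of_lt (min_le_left _ _) (by norm_num)
    set v := w₀ + (1 - θ) • (u - w₀) with hv
    have hvw : ‖v - w₀‖ = (1 - θ) * ‖u - w₀‖ := by
      rw [hv, add_sub_cancel_left, norm_smul, Real.norm_eq_abs, abs_of_nonneg (by linarith)]
    have hvball : v ∈ Metric.ball w₀ r := by
      rw [Metric.mem_ball, dist_eq_norm, hvw]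
      nlinarith
    have huv : ‖u - v‖ = θ * ‖u - w₀‖ := by
      have huvv : u - v = θ • (u - w₀) := by
        rw [hv]
        module
      rw [huvv, norm_smul, Real.norm_eq_abs, abs_of_nonneg hθ0.le]
    have h2 : ‖fderiv ℝ h u - fderiv ℝ h v‖ ≤ LDh * ‖u - v‖ :=
      hDhLip u hu v (Metric.ball_subset_closedBall hvball)
    have h1 : ‖fderiv ℝ h u‖ ≤ ‖fderiv ℝ h v‖ + ‖fderiv ℝ h u - fderiv ℝ h v‖ := by
      calc ‖fderiv ℝ h u‖ = ‖fderiv ℝ h v + (fderiv ℝ h u - fderiv ℝ h v)‖ := by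
            rw [add_sub_cancel]
        _ ≤ _ := norm_add_le _ _
    have h3 : ‖fderiv ℝ h v‖ ≤ Lh := hint v hvball
    have hθε : θ * (LDh * ‖u - w₀‖) ≤ ε := by
      have h4 : θ ≤ ε / (LDh * r + 1) := min_le_right _ _
      have h5 : θ * (LDh * ‖u - w₀‖) ≤ θ * (LDh * r) := by
        apply mul_le_mul_of_nonneg_left _ hθ0.le
        exact mul_le_mul_of_nonneg_left huw hLDh
      have h6 : θ * (LDh * r) ≤ (ε / (LDh * r + 1)) * (LDh * r) := by
        apply mul_le_mul_of_nonneg_right h4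
        positivity
      have h7 : (ε / (LDh * r + 1)) * (LDh * r) ≤ ε := by
        rw [div_mul_eq_mul_div, div_le_iff₀ (by positivity)]
        nlinarith
      linarith
    have := h2
    rw [huv] at this
    calc ‖fderiv ℝ h u‖ ≤ ‖fderiv ℝ h v‖ + ‖fderiv ℝ h u - fderiv ℝ h v‖ := h1
      _ ≤ Lh + θ * (LDh * ‖u - w₀‖) := by rw [huv] at h2; nlinarith [h2, h3]
      _ ≤ Lh + ε := by linarith
  have hAnorm : ‖A‖ ≤ Lh := hDnorm w₀ (Metric.mem_closedBall_self hr.le)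
  -- c * T ≤ r
  have hcTr : c * T ≤ r := by
    have h1 : K * ρ ≤ α * (r * Lh) := (div_le_iff₀ (by positivity)).mp hαbig
    have h2 : c * T = K * ρ / (α * Lh) := by
      rw [hc, hT]
      field_simp
    rw [h2, div_le_iff₀ (by positivity)]
    nlinarith
  -- continuity of the flows
  have hwcont : ∀ s : ℝ, 0 ≤ s → ContinuousAt w s := fun s hs => (hwflow s hs).continuousAt
  -- norm of the velocity of w, valid whenever w s in the ball and the residual is small
  have hvel : ∀ s ∈ Set.Icc (0:ℝ) T, w s ∈ Metric.closedBall w₀ r →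
      ‖-((1/α) • (ContinuousLinearMap.adjoint (fderiv ℝ h (w s))
        (α • h (w s) - ystar)))‖ ≤ c := by
    intro s hs hmem
    rw [norm_neg, norm_smul, Real.norm_eq_abs, abs_of_pos (by positivity : (0:ℝ) < 1/α)]
    have h1 : ‖ContinuousLinearMap.adjoint (fderiv ℝ h (w s)) (α • h (w s) - ystar)‖ ≤
        Lh * ρ := by
      calc ‖ContinuousLinearMap.adjoint (fderiv ℝ h (w s)) (α • h (w s) - ystar)‖
          ≤ ‖ContinuousLinearMap.adjoint (fderiv ℝ h (w s))‖ * ‖α • h (w s) - ystar‖ :=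
            ContinuousLinearMap.le_opNorm _ _
        _ ≤ Lh * ρ := by
            have e1 : ‖ContinuousLinearMap.adjoint (fderiv ℝ h (w s))‖ =
                ‖fderiv ℝ h (w s)‖ := LinearIsometryEquiv.norm_map _ _
            rw [e1]
            exact mul_le_mul (hDnorm _ hmem) (hgle s hs) (norm_nonneg _)
              (le_trans (norm_nonneg _) (hDnorm _ hmem))
    calc (1/α) * ‖ContinuousLinearMap.adjoint (fderiv ℝ h (w s)) (α • h (w s) - ystar)‖
        ≤ (1/α) * (Lh * ρ) := by
          apply mul_le_mul_of_nonneg_left h1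
          positivity
      _ = c := by rw [hc]; ring
  -- w stays in the closed ball on [0, T]
  have hball_r : ∀ t ∈ Set.Icc (0:ℝ) T, ‖w t - w₀‖ ≤ r := by
    by_contra hcon
    push_neg at hcon
    obtain ⟨t₀, ht₀, ht₀r⟩ := hcon
    set S := Set.Icc (0:ℝ) T ∩ (fun s => ‖w s - w₀‖) ⁻¹' Set.Ici r with hS
    have hSne : S.Nonempty := ⟨t₀, ht₀, ht₀r.le⟩
    have hφ : ContinuousOn (fun s => ‖w s - w₀‖) (Set.Icc 0 T) := fun s hs =>
      (((hwcont s hs.1).sub continuousAt_const).norm).continuousWithinAt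
    have hSclosed : IsClosed S := hφ.preimage_isClosed_of_isClosed isClosed_Icc isClosed_Ici
    have hSbdd : BddBelow S := ⟨0, fun s hs => hs.1.1⟩
    set b := sInf S with hb
    have hbS : b ∈ S := hSclosed.csInf_mem hSne hSbdd
    have hbr : r ≤ ‖w b - w₀‖ := hbS.2
    have hb0 : 0 < b := by
      rcases eq_or_lt_of_le hbS.1.1 with hb0 | hb0
      · exfalso
        rw [← hb0, hw0] at hbr
        simp at hbr
        linarith
      · exact hb0
    have hlt : ∀ s ∈ Set.Ico (0:ℝ) b, ‖w s - w₀‖ < r := by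
      intro s hs
      by_contra hle
      push_neg at hle
      have hsS : s ∈ S := ⟨⟨hs.1, hs.2.le.trans hbS.1.2⟩, hle⟩
      exact absurd (csInf_le hSbdd hsS) (not_le.mpr hs.2)
    have hseg := norm_image_sub_le_of_norm_deriv_right_le_segment (f := w) (a := 0) (b := b)
      (f' := fun s => -((1/α) • (ContinuousLinearMap.adjoint (fderiv ℝ h (w s))
        (α • h (w s) - ystar))))
      (fun s hs => (hwcont s hs.1).continuousWithinAt)
      (fun s hs => (hw' s hs.1).hasDerivWithinAt)
      (fun s hs => hvel s ⟨hs.1, hs.2.le.trans hbS.1.2⟩ (by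
        rw [Metric.mem_closedBall, dist_eq_norm]
        exact (hlt s hs).le))
      b (Set.right_mem_Icc.mpr hb0.le)
    have h2 : r ≤ c * b := by
      rw [hw0, sub_zero] at hseg
      linarith
    have hbT : b ≤ T := hbS.1.2
    have hbeq : b = T := by
      have e1 : c * b ≤ c * T := mul_le_mul_of_nonneg_left hbT hcpos.le
      have e2 : c * b = c * T := le_antisymm e1 (by linarith)
      exact mul_left_cancel₀ hcpos.ne' e2
    have ht₀S : t₀ ∈ S := ⟨ht₀, ht₀r.le⟩
    have ht₀b : t₀ = b := le_antisymm (hbeq ▸ ht₀.2) (csInf_le hSbdd ht₀S)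
    rw [ht₀b, hbeq] at ht₀r
    have h3 : ‖w b - w₀‖ ≤ c * b := by
      rw [hw0, sub_zero] at hseg
      linarith
    rw [hbeq] at h3
    linarith
  have hmemball : ∀ t ∈ Set.Icc (0:ℝ) T, w t ∈ Metric.closedBall w₀ r := by
    intro t ht
    rw [Metric.mem_closedBall, dist_eq_norm]
    exact hball_r t ht
  have hball : ∀ t ∈ Set.Icc (0:ℝ) T, ‖w t - w₀‖ ≤ c * t := by
    have hseg := norm_image_sub_le_of_norm_deriv_right_le_segment (f := w) (a := 0) (b := T)
      (f' := fun s => -((1/α) • (ContinuousLinearMap.adjoint (fderiv ℝ h (w s))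
        (α • h (w s) - ystar))))
      (fun s hs => (hwcont s hs.1).continuousWithinAt)
      (fun s hs => (hw' s hs.1).hasDerivWithinAt)
      (fun s hs => hvel s ⟨hs.1, hs.2.le⟩ (hmemball s ⟨hs.1, hs.2.le⟩))
    intro t ht
    have := hseg t ht
    rw [hw0, sub_zero] at this
    linarith
  -- gap between the two residuals
  have hgap : ∀ t ∈ Set.Icc (0:ℝ) T,
      ‖(α • h (w t) - ystar) - (α • (h w₀ + A (wb t - w₀)) - ystar)‖ ≤ M * t^2 := by
    intro t ht
    refine le_of_forall_pos_le_add fun ε' hε' => ?_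
    set ε := ε' / (1 + T) with hεdef
    have hεpos : 0 < ε := by positivity
    set u : ℝ → H := fun s =>
      (α • h (w s) - ystar) - (α • (h w₀ + A (wb s - w₀)) - ystar) with hudef
    set d : ℝ → H := fun s =>
      (-(fderiv ℝ h (w s) (ContinuousLinearMap.adjoint (fderiv ℝ h (w s))
        (α • h (w s) - ystar))))
      - (-(A (ContinuousLinearMap.adjoint A (α • (h w₀ + A (wb s - w₀)) - ystar)))) with hddef
    have hu' : ∀ s : ℝ, 0 ≤ s → HasDerivAt u (d s) s := fun s hs =>
      ((hg' s hs).sub (hgb' s hs))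
    set q : ℝ → ℝ := fun s => ε + M * s^2 + ε * s with hqdef
    have hq' : ∀ x : ℝ, HasDerivAt q (2 * M * x + ε) x := by
      intro x
      have h1 := ((hasDerivAt_const x ε).add
        (((hasDerivAt_pow 2 x)).const_mul M)).add ((hasDerivAt_id x).const_mul ε)
      convert h1 using 1
      · rfl
      · rfl
      · rfl
      push_cast
      ring
    have hB' : ∀ x : ℝ, HasDerivAt (fun s => q s ^ 2) (2 * q x * (2 * M * x + ε)) x := by
      intro x
      have h1 := (hq' x).pow 2
      convert h1 using 1
      · rfl
      · rfl
      · rfl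
      push_cast
      ring
    have hu0 : u 0 = 0 := by
      simp [hudef, hw0, hwb0]
    have hbnd : ∀ x ∈ Set.Ico (0:ℝ) T, (fun s => ⟪u s, u s⟫) x = (fun s => q s ^ 2) x →
        (fun s => ⟪u s, d s⟫ + ⟪d s, u s⟫) x < 2 * q x * (2 * M * x + ε) := by
      intro x hx hfB
      have hfB' : ⟪u x, u x⟫ = q x ^ 2 := hfB
      have hxT : x ∈ Set.Icc (0:ℝ) T := ⟨hx.1, hx.2.le⟩
      set Dx := fderiv ℝ h (w x) with hDxdef
      set gx := α • h (w x) - ystar with hgxdef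
      set gbx := α • (h w₀ + A (wb x - w₀)) - ystar with hgbxdef
      set Ad := ContinuousLinearMap.adjoint A with hAd
      set Dd := ContinuousLinearMap.adjoint Dx with hDd
      have hq0 : 0 < q x := by
        have e1 : 0 ≤ M * x^2 := by positivity
        have e2 : 0 ≤ ε * x := mul_nonneg hεpos.le hx.1
        simp only [hqdef]
        linarith
      have hux : ‖u x‖ = q x := by
        have h1 : ‖u x‖^2 = q x^2 := by rw [← real_inner_self_eq_norm_sq]; exact hfB'
        have h2 := congrArg Real.sqrt h1
        rwa [Real.sqrt_sq (norm_nonneg _), Real.sqrt_sq hq0.le] at h2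
      have huxe : u x = gx - gbx := by rw [hudef]
      have hdxe : d x = (-(Dx (Dd gx))) - (-(A (Ad gbx))) := by rw [hddef]
      have hdx : d x = (-(A (Ad (u x)))) - (Dx (Dd gx) - A (Ad gx)) := by
        rw [hdxe, huxe]
        have m1 : A (Ad (gx - gbx)) = A (Ad gx) - A (Ad gbx) := by rw [map_sub, map_sub]
        rw [m1]
        abel
      have hDA : ‖Dx - A‖ ≤ LDh * (c * x) := by
        calc ‖Dx - A‖ ≤ LDh * ‖w x - w₀‖ :=
              hDhLip (w x) (hmemball x hxT) w₀ (Metric.mem_closedBall_self hr.le)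
          _ ≤ LDh * (c * x) := mul_le_mul_of_nonneg_left (hball x hxT) hLDh
      have hgxρ : ‖gx‖ ≤ ρ := hgle x hxT
      have hE : ‖Dx (Dd gx) - A (Ad gx)‖ ≤ 2 * M * x := by
        have e1 : Dx (Dd gx) - A (Ad gx)
            = Dx (Dd gx - Ad gx) + ((Dx - A) (Ad gx)) := by
          simp only [map_sub, ContinuousLinearMap.sub_apply]
          abel
        have e2 : Dd gx - Ad gx = (ContinuousLinearMap.adjoint (Dx - A)) gx := by
          rw [map_sub ContinuousLinearMap.adjoint Dx A, ContinuousLinearMap.sub_apply,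
            ← hDd, ← hAd]
        have hsub : ‖(ContinuousLinearMap.adjoint (Dx - A)) gx‖ ≤ LDh * (c * x) * ρ := by
          calc ‖(ContinuousLinearMap.adjoint (Dx - A)) gx‖
              ≤ ‖ContinuousLinearMap.adjoint (Dx - A)‖ * ‖gx‖ :=
                ContinuousLinearMap.le_opNorm _ _
            _ = ‖Dx - A‖ * ‖gx‖ := by rw [LinearIsometryEquiv.norm_map]
            _ ≤ LDh * (c * x) * ρ := mul_le_mul hDA hgxρ (norm_nonneg _)
                (mul_nonneg hLDh (mul_nonneg hcpos.le hx.1))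
        have t1 : ‖Dx (Dd gx - Ad gx)‖ ≤ Lh * (LDh * (c * x) * ρ) := by
          rw [e2]
          calc ‖Dx ((ContinuousLinearMap.adjoint (Dx - A)) gx)‖
              ≤ ‖Dx‖ * ‖(ContinuousLinearMap.adjoint (Dx - A)) gx‖ :=
                ContinuousLinearMap.le_opNorm _ _
            _ ≤ Lh * (LDh * (c * x) * ρ) :=
                mul_le_mul (hDnorm _ (hmemball x hxT)) hsub (norm_nonneg _)
                  (le_trans (norm_nonneg _) (hDnorm _ (hmemball x hxT)))
        have hAd1 : ‖Ad gx‖ ≤ Lh * ρ := by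
          calc ‖Ad gx‖ ≤ ‖Ad‖ * ‖gx‖ := ContinuousLinearMap.le_opNorm _ _
            _ = ‖A‖ * ‖gx‖ := by rw [hAd, LinearIsometryEquiv.norm_map]
            _ ≤ Lh * ρ := mul_le_mul hAnorm hgxρ (norm_nonneg _)
                (le_trans (norm_nonneg _) hAnorm)
        have t2 : ‖(Dx - A) (Ad gx)‖ ≤ LDh * (c * x) * (Lh * ρ) := by
          calc ‖(Dx - A) (Ad gx)‖ ≤ ‖Dx - A‖ * ‖Ad gx‖ := ContinuousLinearMap.le_opNorm _ _
            _ ≤ LDh * (c * x) * (Lh * ρ) :=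
                mul_le_mul hDA hAd1 (norm_nonneg _)
                  (mul_nonneg hLDh (mul_nonneg hcpos.le hx.1))
        calc ‖Dx (Dd gx) - A (Ad gx)‖
            ≤ Lh * (LDh * (c * x) * ρ) + LDh * (c * x) * (Lh * ρ) := by
              rw [e1]
              exact le_trans (norm_add_le _ _) (add_le_add t1 t2)
          _ = 2 * M * x := by rw [hM, hc]; ring
      have hpos : (0:ℝ) ≤ ⟪u x, A (Ad (u x))⟫ := by
        rw [hAd, ← ContinuousLinearMap.adjoint_inner_left]
        exact real_inner_self_nonneg
      have hlow := (abs_le.mp (abs_real_inner_le_norm (u x) (Dx (Dd gx) - A (Ad gx)))).1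
      have hprod : ‖u x‖ * ‖Dx (Dd gx) - A (Ad gx)‖ ≤ q x * (2 * M * x) := by
        rw [hux]
        exact mul_le_mul_of_nonneg_left hE hq0.le
      have hiden : ⟪u x, d x⟫ = -⟪u x, A (Ad (u x))⟫ - ⟪u x, Dx (Dd gx) - A (Ad gx)⟫ := by
        rw [hdx, inner_sub_right, inner_neg_right]
      have hcomm : ⟪d x, u x⟫ = ⟪u x, d x⟫ := real_inner_comm _ _
      show ⟪u x, d x⟫ + ⟪d x, u x⟫ < 2 * q x * (2 * M * x + ε)
      rw [hcomm, hiden]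
      nlinarith [hpos, hlow, hprod, mul_pos hq0 hεpos]
    have key := image_le_of_deriv_right_lt_deriv_boundary (a := 0) (b := T)
      (f := fun s => ⟪u s, u s⟫) (f' := fun s => ⟪u s, d s⟫ + ⟪d s, u s⟫)
      (B := fun s => q s ^ 2) (B' := fun s => 2 * q s * (2 * M * s + ε))
      (fun s hs => (((hu' s hs.1).continuousAt).inner
        ((hu' s hs.1).continuousAt)).continuousWithinAt)
      (fun s hs => ((hu' s hs.1).inner ℝ (hu' s hs.1)).hasDerivWithinAt)
      (by
        show ⟪u 0, u 0⟫ ≤ q 0 ^ 2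
        rw [hu0]
        simp only [inner_zero_left]
        positivity)
      hB'
      hbnd
    have hkey := key ht
    have h1 : ‖u t‖^2 ≤ q t^2 := by rw [← real_inner_self_eq_norm_sq]; exact hkey
    have hqt0 : 0 ≤ q t := by
      have e1 : 0 ≤ M * t^2 := by positivity
      have e2 : 0 ≤ ε * t := mul_nonneg hεpos.le ht.1
      simp only [hqdef]
      linarith
    have h2 : ‖u t‖ ≤ q t := by
      nlinarith [norm_nonneg (u t), h1, hqt0]
    have h4 : ε + ε * t ≤ ε' := by
      have e1 : ε * (1 + T) = ε' := by
        rw [hεdef]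
        field_simp
      nlinarith [ht.2, hεpos]
    have h5 : q t = ε + M * t^2 + ε * t := rfl
    show ‖u t‖ ≤ M * t^2 + ε'
    linarith [h2, h4, h5.le]
  -- final integration of the velocity gap
  have hLhne : Lh ≠ 0 := hLh.ne'
  have hρne : ρ ≠ 0 := ne_of_gt hρ
  have hBd : ∀ x : ℝ, HasDerivAt (fun s => (1/α) * (LDh*c*ρ*s^2/2 + Lh*M*s^3/3))
      ((1/α) * (LDh*c*ρ*x + Lh*M*x^2)) x := by
    intro x
    have h1 := (((hasDerivAt_pow 2 x).const_mul (LDh*c*ρ)).div_const 2).add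
      (((hasDerivAt_pow 3 x).const_mul (Lh*M)).div_const 3)
    have h2 := h1.const_mul ((1:ℝ)/α)
    convert h2 using 1
    · rfl
    · rfl
    · rfl
    push_cast
    ring
  have hΔ : ∀ x ∈ Set.Icc (0:ℝ) T,
      ‖w x - wb x‖ ≤ (1/α) * (LDh*c*ρ*x^2/2 + Lh*M*x^3/3) := by
    refine image_norm_le_of_norm_deriv_right_le_deriv_boundary (a := 0) (b := T)
      (f := fun s => w s - wb s)
      (f' := fun s => (-((1/α) • (ContinuousLinearMap.adjoint (fderiv ℝ h (w s))
          (α • h (w s) - ystar))))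
        - (-((1/α) • (ContinuousLinearMap.adjoint A
          (α • (h w₀ + A (wb s - w₀)) - ystar)))))
      (fun s hs => (((hwcont s hs.1).sub (hwb' s hs.1).continuousAt)).continuousWithinAt)
      (fun s hs => ((hw' s hs.1).sub (hwb' s hs.1)).hasDerivWithinAt)
      (by simp [hw0, hwb0]) hBd ?_
    intro x hx
    have hxT : x ∈ Set.Icc (0:ℝ) T := ⟨hx.1, hx.2.le⟩
    set Dx := fderiv ℝ h (w x) with hDxdef
    set gx := α • h (w x) - ystar with hgxdef
    set gbx := α • (h w₀ + A (wb x - w₀)) - ystar with hgbxdef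
    have e0 : (-((1/α) • (ContinuousLinearMap.adjoint Dx gx)))
        - (-((1/α) • (ContinuousLinearMap.adjoint A gbx)))
        = -((1/α) • (ContinuousLinearMap.adjoint Dx gx
          - ContinuousLinearMap.adjoint A gbx)) := by
      rw [smul_sub]
      abel
    have e1 : ContinuousLinearMap.adjoint Dx gx - ContinuousLinearMap.adjoint A gbx
        = (ContinuousLinearMap.adjoint (Dx - A)) gx
          + (ContinuousLinearMap.adjoint A) (gx - gbx) := by
      rw [map_sub ContinuousLinearMap.adjoint Dx A, ContinuousLinearMap.sub_apply,
        map_sub (ContinuousLinearMap.adjoint A) gx gbx]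
      abel
    have hDA : ‖Dx - A‖ ≤ LDh * (c * x) := by
      calc ‖Dx - A‖ ≤ LDh * ‖w x - w₀‖ :=
            hDhLip (w x) (hmemball x hxT) w₀ (Metric.mem_closedBall_self hr.le)
        _ ≤ LDh * (c * x) := mul_le_mul_of_nonneg_left (hball x hxT) hLDh
    have hgxρ : ‖gx‖ ≤ ρ := hgle x hxT
    have hgapx : ‖gx - gbx‖ ≤ M * x^2 := hgap x hxT
    have t1 : ‖(ContinuousLinearMap.adjoint (Dx - A)) gx‖ ≤ LDh * (c * x) * ρ := by
      calc ‖(ContinuousLinearMap.adjoint (Dx - A)) gx‖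
          ≤ ‖ContinuousLinearMap.adjoint (Dx - A)‖ * ‖gx‖ :=
            ContinuousLinearMap.le_opNorm _ _
        _ = ‖Dx - A‖ * ‖gx‖ := by rw [LinearIsometryEquiv.norm_map]
        _ ≤ LDh * (c * x) * ρ := mul_le_mul hDA hgxρ (norm_nonneg _)
            (mul_nonneg hLDh (mul_nonneg hcpos.le hx.1))
    have t2 : ‖(ContinuousLinearMap.adjoint A) (gx - gbx)‖ ≤ Lh * (M * x^2) := by
      calc ‖(ContinuousLinearMap.adjoint A) (gx - gbx)‖
          ≤ ‖ContinuousLinearMap.adjoint A‖ * ‖gx - gbx‖ :=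
            ContinuousLinearMap.le_opNorm _ _
        _ = ‖A‖ * ‖gx - gbx‖ := by rw [LinearIsometryEquiv.norm_map]
        _ ≤ Lh * (M * x^2) := mul_le_mul hAnorm hgapx (norm_nonneg _)
            (le_trans (norm_nonneg _) hAnorm)
    calc ‖(-((1/α) • (ContinuousLinearMap.adjoint Dx gx)))
        - (-((1/α) • (ContinuousLinearMap.adjoint A gbx)))‖
        = (1/α) * ‖ContinuousLinearMap.adjoint Dx gx
          - ContinuousLinearMap.adjoint A gbx‖ := by
          rw [e0, norm_neg, norm_smul, Real.norm_eq_abs,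
            abs_of_pos (by positivity : (0:ℝ) < 1/α)]
      _ ≤ (1/α) * (LDh * (c * x) * ρ + Lh * (M * x^2)) := by
          apply mul_le_mul_of_nonneg_left _ (by positivity)
          rw [e1]
          exact le_trans (norm_add_le _ _) (add_le_add t1 t2)
      _ = (1/α) * (LDh*c*ρ*x + Lh*M*x^2) := by ring
  have hfinal := hΔ T (Set.right_mem_Icc.mpr hTpos.le)
  have hfac : (0:ℝ) ≤ α * Lh / ρ := le_of_lt (div_pos (mul_pos hα hLh) hρ)
  have hstep1 : α * Lh / ρ * ‖w T - wb T‖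
      ≤ α * Lh / ρ * ((1/α) * (LDh*c*ρ*T^2/2 + Lh*M*T^3/3)) :=
    mul_le_mul_of_nonneg_left hfinal hfac
  have hstep2 : α * Lh / ρ * ((1/α) * (LDh*c*ρ*T^2/2 + Lh*M*T^3/3))
      = K^2/α * (LDh/Lh^2) * ρ * (1/2 + K/3) := by
    rw [hM, hc, hT]
    field_simp
  have hfac2 : (0:ℝ) ≤ K^2/α * (LDh/Lh^2) * ρ :=
    mul_nonneg (mul_nonneg (le_of_lt (by positivity))
      (div_nonneg hLDh (by positivity))) hρ.le
  have hstep3 : K^2/α * (LDh/Lh^2) * ρ * (1/2 + K/3)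
      ≤ K^2/α * (LDh/Lh^2) * ρ * (2 + 4*K/3) :=
    mul_le_mul_of_nonneg_left (by linarith) hfac2
  calc α * Lh / ρ * ‖w T - wb T‖
      ≤ K^2/α * (LDh/Lh^2) * ρ * (1/2 + K/3) := by rw [← hstep2]; exact hstep1
    _ ≤ K ^ 2 / α * (LDh / Lh ^ 2) * ρ * (2 + 4 * K / 3) := by
        convert hstep3 using 2 <;> norm_num
end

section
/- Assume ‖h(w₀)‖ ≤ C₀ and α > ‖y⋆‖/C₀. Then for all t ≥ 0, ‖α h(w_α(t)) − y⋆‖ ≤ √κ · ‖α h(w₀) − y⋆‖ · exp(−m σ_min² t / 4). -/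
open scoped RealInnerProductSpace NNReal
open Set

section aux

variable {H : Type*} [NormedAddCommGroup H] [InnerProductSpace ℝ H] [CompleteSpace H]

lemma fderiv_apply_eq_inner_gradient {f : H → ℝ} {x : H} (hf : DifferentiableAt ℝ f x) (v : H) :
    fderiv ℝ f x v = ⟪gradient f x, v⟫ := by
  have h2 : fderiv ℝ f x = InnerProductSpace.toDual ℝ H (gradient f x) :=
    hf.hasGradientAt.hasFDerivAt.fderiv
  rw [h2, InnerProductSpace.toDual_apply_apply]

lemma convex_grad_ineq {f : H → ℝ} (hf : Differentiable ℝ f)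
    (hconv : ConvexOn ℝ Set.univ f) (a b : H) :
    f a + ⟪gradient f a, b - a⟫ ≤ f b := by
  set q : ℝ → ℝ := fun s => f (AffineMap.lineMap a b s) with hq
  have hline : ∀ s : ℝ, HasDerivAt (fun s : ℝ => (AffineMap.lineMap a b s : H)) (b - a) s := by
    intro s
    have heq : (fun s : ℝ => (AffineMap.lineMap a b s : H)) = fun s => s • (b - a) + a := by
      funext s; rw [AffineMap.lineMap_apply_module']
    rw [heq]
    have h1 : HasDerivAt (fun s : ℝ => s • (b - a)) ((1:ℝ) • (b - a)) s :=
      (hasDerivAt_id s).smul_const (b - a)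
    simpa using h1.add_const a
  have hqd : ∀ s : ℝ, HasDerivAt q ⟪gradient f (AffineMap.lineMap a b s), b - a⟫ s := by
    intro s
    have := (hf _).hasFDerivAt.comp_hasDerivAt s (hline s)
    rw [fderiv_apply_eq_inner_gradient (hf _)] at this
    exact this
  have hqc : ConvexOn ℝ Set.univ q := by
    have := hconv.comp_affineMap (AffineMap.lineMap a b)
    exact this
  have hslope := hqc.le_slope_of_hasDerivAt (mem_univ (0:ℝ)) (mem_univ (1:ℝ)) zero_lt_one
      (by simpa using hqd 0)
  have hs : slope q 0 1 = q 1 - q 0 := by simp [slope_def_field]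
  rw [hs] at hslope
  have h0 : q 0 = f a := by simp [hq]
  have h1 : q 1 = f b := by simp [hq]
  rw [h0, h1] at hslope
  rw [fderiv_apply_eq_inner_gradient (hf a), fderiv_apply_eq_inner_gradient (hf a), ← inner_sub_right] at hslope
  linarith

end aux

section aux2

variable {H : Type*} [NormedAddCommGroup H] [InnerProductSpace ℝ H] [CompleteSpace H]

lemma hasGradientAt_const_mul_sq_norm (c : ℝ) (a : H) :
    HasGradientAt (fun y : H => c * ‖y‖ ^ 2) ((2 * c) • a) a := by
  have h1 : HasFDerivAt (fun y : H => ⟪y, y⟫)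
      ((fderivInnerCLM ℝ (a, a)).comp ((ContinuousLinearMap.id ℝ H).prod
        (ContinuousLinearMap.id ℝ H))) a := (hasFDerivAt_id a).inner ℝ (hasFDerivAt_id a)
  have h2 : (fun y : H => c * ‖y‖ ^ 2) = fun y : H => c * ⟪y, y⟫ := by
    funext y; rw [real_inner_self_eq_norm_sq]
  rw [hasGradientAt_iff_hasFDerivAt, h2]
  have h3 : HasFDerivAt (fun y : H => c * ⟪y, y⟫)
      (c • ((fderivInnerCLM ℝ (a, a)).comp ((ContinuousLinearMap.id ℝ H).prod
        (ContinuousLinearMap.id ℝ H)))) a := h1.const_mul c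
  refine HasFDerivAt.congr_fderiv h3 ?_
  apply ContinuousLinearMap.ext
  intro v
  simp [InnerProductSpace.toDual_apply_apply, fderivInnerCLM_apply, inner_smul_left,
    real_inner_comm a v]
  ring

lemma strong_grad_ineq (R : H → ℝ) (hRdiff : Differentiable ℝ R) (m : ℝ)
    (hconv : ConvexOn ℝ Set.univ (fun y => R y - m / 2 * ‖y‖ ^ 2)) (a b : H) :
    R a + ⟪gradient R a, b - a⟫ + m / 2 * ‖b - a‖ ^ 2 ≤ R b := by
  set G : H → ℝ := fun y => R y - m / 2 * ‖y‖ ^ 2 with hG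
  have hGgradAt : ∀ x : H, HasGradientAt G (gradient R x - m • x) x := by
    intro x
    rw [hasGradientAt_iff_hasFDerivAt]
    have h1 := (hRdiff x).hasGradientAt.hasFDerivAt
    have h2 := (hasGradientAt_const_mul_sq_norm (m/2) x).hasFDerivAt
    have h3 := h1.sub h2
    have h4 : (2 * (m/2)) = m := by ring
    rw [h4] at h3
    rwa [map_sub] 
  have hGdiff : Differentiable ℝ G := fun x => (hGgradAt x).differentiableAt
  have key := convex_grad_ineq hGdiff hconv a b
  rw [(hGgradAt a).gradient] at key
  simp only [hG] at key
  have e1 : ⟪gradient R a - m • a, b - a⟫ = ⟪gradient R a, b - a⟫ - m * ⟪a, b - a⟫ := by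
    rw [inner_sub_left, real_inner_smul_left]
  have e2 : ⟪a, b - a⟫ = ⟪a, b⟫ - ‖a‖ ^ 2 := by
    rw [inner_sub_right, real_inner_self_eq_norm_sq]
  have e3 : ‖b - a‖ ^ 2 = ‖b‖ ^ 2 - 2 * ⟪a, b⟫ + ‖a‖ ^ 2 := by
    rw [@norm_sub_sq_real H _ _ b a, real_inner_comm b a]
  rw [e1, e2] at key
  rw [e3]
  linarith

end aux2

section aux3

variable {H : Type*} [NormedAddCommGroup H] [InnerProductSpace ℝ H] [CompleteSpace H]

lemma gradient_min_zero (R : H → ℝ) (hRdiff : Differentiable ℝ R) (ystar : H)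
    (hmin : ∀ y, R ystar ≤ R y) : gradient R ystar = 0 := by
  have hloc : IsLocalMin R ystar := Filter.Eventually.of_forall hmin
  have h0 : fderiv ℝ R ystar = 0 := hloc.fderiv_eq_zero
  show (InnerProductSpace.toDual ℝ H).symm (fderiv ℝ R ystar) = 0
  rw [h0, map_zero]

lemma smooth_upper (R : H → ℝ) (hRdiff : Differentiable ℝ R) (M : ℝ) (hM : 0 ≤ M)
    (hRgrad : ∀ y z, ‖gradient R y - gradient R z‖ ≤ M * ‖y - z‖) (a b : H)
    (hga : gradient R a = 0) : R b ≤ R a + M / 2 * ‖b - a‖ ^ 2 := by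
  have hGcont : Continuous (gradient R) := by
    have hlip : LipschitzWith (Real.toNNReal M) (gradient R) := by
      apply LipschitzWith.of_dist_le_mul
      intro y z
      rw [dist_eq_norm, dist_eq_norm]
      calc ‖gradient R y - gradient R z‖ ≤ M * ‖y - z‖ := hRgrad y z
        _ = (Real.toNNReal M : ℝ) * ‖y - z‖ := by rw [Real.coe_toNNReal M hM]
    exact hlip.continuous
  set ℓ : ℝ → H := fun s => a + s • (b - a) with hℓ
  have hℓd : ∀ s : ℝ, HasDerivAt ℓ (b - a) s := by
    intro s
    have h1 : HasDerivAt (fun s : ℝ => s • (b - a)) ((1:ℝ) • (b - a)) s :=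
      (hasDerivAt_id s).smul_const (b - a)
    simpa [hℓ] using (h1.const_add a)
  have hℓcont : Continuous ℓ := by
    apply Continuous.add continuous_const
    exact (continuous_id.smul continuous_const)
  set q' : ℝ → ℝ := fun s => ⟪gradient R (ℓ s), b - a⟫ with hq'
  have hqd : ∀ s : ℝ, HasDerivAt (fun s => R (ℓ s)) (q' s) s := by
    intro s
    have := (hRdiff (ℓ s)).hasFDerivAt.comp_hasDerivAt s (hℓd s)
    rw [fderiv_apply_eq_inner_gradient (hRdiff (ℓ s))] at this
    exact this
  have hq'cont : Continuous q' := ((hGcont.comp hℓcont).inner continuous_const)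
  have hFTC : R (ℓ 1) - R (ℓ 0) = ∫ s in (0:ℝ)..1, q' s := by
    rw [intervalIntegral.integral_eq_sub_of_hasDerivAt (fun s _ => hqd s)
      (hq'cont.intervalIntegrable 0 1)]
  have hbound : ∀ s ∈ Icc (0:ℝ) 1, q' s ≤ (M * ‖b - a‖ ^ 2) * s := by
    intro s hs
    have h1 : q' s = ⟪gradient R (ℓ s) - gradient R a, b - a⟫ := by rw [hga]; simp [hq']
    have h2 : ⟪gradient R (ℓ s) - gradient R a, b - a⟫ ≤ ‖gradient R (ℓ s) - gradient R a‖ * ‖b - a‖ :=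
      real_inner_le_norm _ _
    have h3 : ‖gradient R (ℓ s) - gradient R a‖ ≤ M * ‖ℓ s - a‖ := hRgrad _ _
    have h4 : ‖ℓ s - a‖ = s * ‖b - a‖ := by
      simp only [hℓ, add_sub_cancel_left, norm_smul, Real.norm_eq_abs, abs_of_nonneg hs.1]
    rw [h1]
    calc ⟪gradient R (ℓ s) - gradient R a, b - a⟫ ≤ ‖gradient R (ℓ s) - gradient R a‖ * ‖b - a‖ := h2
      _ ≤ M * (s * ‖b - a‖) * ‖b - a‖ := by
          apply mul_le_mul_of_nonneg_right _ (norm_nonneg _)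
          rw [← h4]; exact (h3.trans (by rw [h4]))
      _ = (M * ‖b - a‖ ^ 2) * s := by ring
  have hint : (∫ s in (0:ℝ)..1, q' s) ≤ ∫ s in (0:ℝ)..1, (M * ‖b - a‖ ^ 2) * s := by
    apply intervalIntegral.integral_mono_on zero_le_one (hq'cont.intervalIntegrable 0 1)
      ((continuous_const.mul continuous_id).intervalIntegrable 0 1)
    exact hbound
  have hval : (∫ s in (0:ℝ)..1, (M * ‖b - a‖ ^ 2) * s) = M / 2 * ‖b - a‖ ^ 2 := by
    rw [intervalIntegral.integral_const_mul]
    rw [integral_id]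
    ring
  have hl0 : ℓ 0 = a := by simp [hℓ]
  have hl1 : ℓ 1 = b := by simp [hℓ]
  rw [hl0, hl1] at hFTC
  linarith [hFTC, hint.trans_eq hval]

end aux3

section aux4

variable {E : Type*} [NormedAddCommGroup E] [InnerProductSpace ℝ E] [CompleteSpace E]
variable {H : Type*} [NormedAddCommGroup H] [InnerProductSpace ℝ H] [CompleteSpace H]

lemma grad_comp (h : E → H) (hdiff : Differentiable ℝ h) (R : H → ℝ)
    (hRdiff : Differentiable ℝ R) (α : ℝ) (hα : α ≠ 0) (u : E) :
    HasGradientAt (fun u => R (α • h u) / α ^ 2)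
      (α⁻¹ • (fderiv ℝ h u).adjoint (gradient R (α • h u))) u := by
  set z := α • h u with hz
  set g := gradient R z with hg
  set A := fderiv ℝ h u with hA
  have hh : HasFDerivAt (fun u => α • h u) (α • A) u := (hdiff u).hasFDerivAt.const_smul α
  have hR : HasFDerivAt R (InnerProductSpace.toDual ℝ H g) z :=
    (hRdiff z).hasGradientAt.hasFDerivAt
  have hcomp := hR.comp u hh
  have hfun : (fun u => R (α • h u) / α ^ 2) = fun u => (α^2)⁻¹ * R (α • h u) := by
    funext v; rw [div_eq_inv_mul]
  have hfinal : HasFDerivAt (fun u => R (α • h u) / α ^ 2)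
      ((α^2)⁻¹ • ((InnerProductSpace.toDual ℝ H g).comp (α • A))) u := by
    rw [hfun]
    exact hcomp.const_mul ((α^2)⁻¹)
  rw [hasGradientAt_iff_hasFDerivAt]
  refine HasFDerivAt.congr_fderiv hfinal ?_
  apply ContinuousLinearMap.ext
  intro v
  simp only [InnerProductSpace.toDual_apply_apply, ContinuousLinearMap.coe_comp',
    Function.comp_apply, ContinuousLinearMap.coe_smul', Pi.smul_apply,
    ContinuousLinearMap.smul_apply, real_inner_smul_left, smul_eq_mul]
  rw [ContinuousLinearMap.adjoint_inner_left]
  rw [real_inner_smul_right]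
  field_simp

end aux4

set_option maxHeartbeats 1600000 in
/-- **Theorem 2.3 (Over-parameterized lazy training), linear convergence.**
If `R` is `m`-strongly convex and `M`-smooth with minimizer `y⋆`, the smallest singular
value `σ_min` of `Dh(w₀)ᵀ` is positive, `‖h(w₀)‖ ≤ C₀ := σ_min³/(32 κ^{3/2} ‖Dh(w₀)‖ Lip(Dh))`
and `α > ‖y⋆‖/C₀`, then `‖α h(w_α(t)) − y⋆‖ ≤ √κ ‖α h(w₀) − y⋆‖ exp(−m σ_min² t/4)`. -/
theorem lazy_overparam_linear_convergence
    {p : ℕ} {H : Type*} [NormedAddCommGroup H] [InnerProductSpace ℝ H] [CompleteSpace H]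
    (h : EuclideanSpace ℝ (Fin p) → H) (hdiff : Differentiable ℝ h)
    (LDh : ℝ) (hLDh : 0 < LDh)
    (hDhLip : ∀ u v, ‖fderiv ℝ h u - fderiv ℝ h v‖ ≤ LDh * ‖u - v‖)
    (R : H → ℝ) (hRnonneg : ∀ y, 0 ≤ R y) (hRdiff : Differentiable ℝ R)
    (m M : ℝ) (hm : 0 < m) (hM : 0 < M)
    (hRconv : ConvexOn ℝ Set.univ (fun y => R y - m / 2 * ‖y‖ ^ 2))
    (hRgrad : ∀ y z, ‖gradient R y - gradient R z‖ ≤ M * ‖y - z‖)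
    (ystar : H) (hmin : ∀ y, R ystar ≤ R y)
    (w₀ : EuclideanSpace ℝ (Fin p))
    (σmin : ℝ) (hσ : 0 < σmin)
    (hσmin : ∀ y : H, σmin * ‖y‖ ≤ ‖(fderiv ℝ h w₀).adjoint y‖)
    (C₀ : ℝ)
    (hC₀ : C₀ = σmin ^ 3 / (32 * (M / m) ^ ((3 : ℝ) / 2) * ‖fderiv ℝ h w₀‖ * LDh))
    (hinit : ‖h w₀‖ ≤ C₀)
    (α : ℝ) (hα : ‖ystar‖ / C₀ < α)
    (w : ℝ → EuclideanSpace ℝ (Fin p)) (hw0 : w 0 = w₀)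
    (hwflow : ∀ t : ℝ, 0 ≤ t → HasDerivAt w
      (-(gradient (fun u => R (α • h u) / α ^ 2) (w t))) t) :
    ∀ t : ℝ, 0 ≤ t →
      ‖α • h (w t) - ystar‖ ≤
        Real.sqrt (M / m) * ‖α • h w₀ - ystar‖ * Real.exp (-(m * σmin ^ 2 * t / 4)) := by
  classical
  by_cases htriv : ∀ z : H, z = 0
  · intro t ht
    rw [htriv (α • h (w t) - ystar), htriv (α • h w₀ - ystar)]
    simp [Real.exp_nonneg]
  push_neg at htriv
  obtain ⟨z, hz⟩ := htriv
  have hznorm : (0:ℝ) < ‖z‖ := norm_pos_iff.mpr hz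
  set D₀ : EuclideanSpace ℝ (Fin p) →L[ℝ] H := fderiv ℝ h w₀ with hD₀
  -- adjoint norms
  have hadj_norm : ∀ u : EuclideanSpace ℝ (Fin p),
      ‖(fderiv ℝ h u).adjoint‖ = ‖fderiv ℝ h u‖ := fun u =>
    ContinuousLinearMap.adjoint.norm_map (fderiv ℝ h u)
  have hσle : σmin ≤ ‖D₀‖ := by
    have h1 := hσmin z
    have h2 : ‖D₀.adjoint z‖ ≤ ‖D₀‖ * ‖z‖ := by
      calc ‖D₀.adjoint z‖ ≤ ‖D₀.adjoint‖ * ‖z‖ := D₀.adjoint.le_opNorm z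
        _ = ‖D₀‖ * ‖z‖ := by rw [hadj_norm w₀]
    have := h1.trans h2
    exact le_of_mul_le_mul_right (by linarith) hznorm
  have hD0pos : (0:ℝ) < ‖D₀‖ := lt_of_lt_of_le hσ hσle
  -- m ≤ M
  have hmM : m ≤ M := by
    have k1 := strong_grad_ineq R hRdiff m hRconv 0 z
    have k2 := strong_grad_ineq R hRdiff m hRconv z 0
    have e1 : ⟪gradient R 0, z - 0⟫ = ⟪gradient R 0, z⟫ := by rw [sub_zero]
    have e2 : ⟪gradient R z, (0:H) - z⟫ = -⟪gradient R z, z⟫ := by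
      rw [zero_sub, inner_neg_right]
    rw [e1] at k1; rw [e2] at k2
    have e3 : ‖z - (0:H)‖ = ‖z‖ := by rw [sub_zero]
    have e4 : ‖(0:H) - z‖ = ‖z‖ := by rw [zero_sub, norm_neg]
    rw [e3] at k1; rw [e4] at k2
    have hsum : m * ‖z‖ ^ 2 ≤ ⟪gradient R z, z⟫ - ⟪gradient R 0, z⟫ := by linarith
    have hCS : ⟪gradient R z, z⟫ - ⟪gradient R 0, z⟫ ≤ M * ‖z‖ * ‖z‖ := by
      have h5 : ⟪gradient R z - gradient R 0, z⟫ ≤ ‖gradient R z - gradient R 0‖ * ‖z‖ :=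
        real_inner_le_norm _ _
      rw [inner_sub_left] at h5
      have h6 : ‖gradient R z - gradient R 0‖ * ‖z‖ ≤ (M * ‖z - 0‖) * ‖z‖ :=
        mul_le_mul_of_nonneg_right (hRgrad z 0) (norm_nonneg _)
      rw [sub_zero] at h6
      linarith
    have hzz : ‖z‖ ^ 2 = ‖z‖ * ‖z‖ := pow_two _
    have h7 : m * ‖z‖ ^ 2 ≤ M * ‖z‖ ^ 2 := by rw [hzz]; nlinarith [hsum, hCS]
    exact le_of_mul_le_mul_right h7 (by positivity)
  have hκ : (1:ℝ) ≤ M / m := (one_le_div hm).mpr hmM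
  have hκpos : (0:ℝ) < M / m := div_pos hM hm
  have hsκ : (1:ℝ) ≤ Real.sqrt (M / m) := by
    rw [show (1:ℝ) = Real.sqrt 1 by simp]
    exact Real.sqrt_le_sqrt hκ
  have hsκpos : (0:ℝ) < Real.sqrt (M / m) := lt_of_lt_of_le one_pos hsκ
  have hrpow : (M / m) ^ ((3:ℝ)/2) = (M / m) * Real.sqrt (M / m) := by
    rw [show (3:ℝ)/2 = 1 + 1/2 by norm_num, Real.rpow_add hκpos, Real.rpow_one,
      Real.sqrt_eq_rpow]
  have hC₀pos : (0:ℝ) < C₀ := by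
    rw [hC₀]
    apply div_pos (by positivity)
    have := Real.rpow_pos_of_pos hκpos ((3:ℝ)/2)
    positivity
  have hαpos : (0:ℝ) < α := lt_of_le_of_lt (div_nonneg (norm_nonneg _) hC₀pos.le) hα
  have hystar : ‖ystar‖ < α * C₀ := by
    have := (div_lt_iff₀ hC₀pos).mp hα
    linarith [this]
  have hy0norm : ‖α • h w₀ - ystar‖ ≤ 2 * α * C₀ := by
    calc ‖α • h w₀ - ystar‖ ≤ ‖α • h w₀‖ + ‖ystar‖ := norm_sub_le _ _
      _ ≤ α * C₀ + α * C₀ := by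
          apply add_le_add _ hystar.le
          rw [norm_smul, Real.norm_eq_abs, abs_of_pos hαpos]
          exact mul_le_mul_of_nonneg_left hinit hαpos.le
      _ = 2 * α * C₀ := by ring
  -- facts about R
  have hgrad0 : gradient R ystar = 0 := gradient_min_zero R hRdiff ystar hmin
  have glower : ∀ y : H, m / 2 * ‖y - ystar‖ ^ 2 ≤ R y - R ystar := by
    intro y
    have := strong_grad_ineq R hRdiff m hRconv ystar y
    rw [hgrad0] at this
    simp only [inner_zero_left] at this
    linarith
  have gPL : ∀ y : H, 2 * m * (R y - R ystar) ≤ ‖gradient R y‖ ^ 2 := by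
    intro y
    have hkey := strong_grad_ineq R hRdiff m hRconv y ystar
    have hCS : ⟪gradient R y, ystar - y⟫ ≥ -(‖gradient R y‖ * ‖ystar - y‖) := by
      have := real_inner_le_norm (gradient R y) (y - ystar)
      have e : ⟪gradient R y, y - ystar⟫ = -⟪gradient R y, ystar - y⟫ := by
        rw [← inner_neg_right, neg_sub]
      rw [e] at this
      have e2 : ‖y - ystar‖ = ‖ystar - y‖ := norm_sub_rev _ _
      rw [e2] at this
      linarith
    have hd : R y - R ystar ≤ ‖gradient R y‖ * ‖ystar - y‖ - m / 2 * ‖ystar - y‖ ^ 2 := by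
      linarith
    have hd2 := mul_le_mul_of_nonneg_left hd (by positivity : (0:ℝ) ≤ 2 * m)
    nlinarith [sq_nonneg (‖gradient R y‖ - m * ‖ystar - y‖), hd2]
  have gupper : ∀ y : H, R y - R ystar ≤ M / 2 * ‖y - ystar‖ ^ 2 := by
    intro y
    have := smooth_upper R hRdiff M hM.le hRgrad ystar y hgrad0
    linarith
  have gLip0 : ∀ y : H, ‖gradient R y‖ ≤ M * ‖y - ystar‖ := by
    intro y
    have := hRgrad y ystar
    rwa [hgrad0, sub_zero] at this
  -- flow quantities
  have hgradF : ∀ u, gradient (fun u => R (α • h u) / α ^ 2) u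
      = α⁻¹ • (fderiv ℝ h u).adjoint (gradient R (α • h u)) := fun u =>
    (grad_comp h hdiff R hRdiff α hαpos.ne' u).gradient
  set y : ℝ → H := fun t => α • h (w t) with hy
  set φ : ℝ → ℝ := fun t => R (y t) - R ystar with hφ
  set r : ℝ := σmin / (2 * LDh) with hr
  have hrpos : (0:ℝ) < r := by positivity
  set lam : ℝ := m * σmin ^ 2 / 2 with hlam
  set μ : ℝ := m * σmin ^ 2 / 4 with hμ
  have hμpos : (0:ℝ) < μ := by positivity
  have hw' : ∀ t, 0 ≤ t → HasDerivAt w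
      (-(α⁻¹ • (fderiv ℝ h (w t)).adjoint (gradient R (y t)))) t := by
    intro t ht
    have := hwflow t ht
    rwa [hgradF (w t)] at this
  have hy' : ∀ t, 0 ≤ t → HasDerivAt y
      (-((fderiv ℝ h (w t)) ((fderiv ℝ h (w t)).adjoint (gradient R (y t))))) t := by
    intro t ht
    have h1 : HasDerivAt (fun t => h (w t))
        ((fderiv ℝ h (w t)) (-(α⁻¹ • (fderiv ℝ h (w t)).adjoint (gradient R (y t))))) t :=
      (hdiff (w t)).hasFDerivAt.comp_hasDerivAt t (hw' t ht)
    have h2 := h1.const_smul α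
    have e : α • ((fderiv ℝ h (w t)) (-(α⁻¹ • (fderiv ℝ h (w t)).adjoint (gradient R (y t)))))
        = -((fderiv ℝ h (w t)) ((fderiv ℝ h (w t)).adjoint (gradient R (y t)))) := by
      rw [map_neg, map_smul, smul_neg, smul_smul, mul_inv_cancel₀ hαpos.ne', one_smul]
    rw [e] at h2
    exact h2
  have hφ' : ∀ t, 0 ≤ t → HasDerivAt φ
      (-‖(fderiv ℝ h (w t)).adjoint (gradient R (y t))‖ ^ 2) t := by
    intro t ht
    have h1 : HasDerivAt (fun t => R (y t))
        (⟪gradient R (y t), -((fderiv ℝ h (w t)) ((fderiv ℝ h (w t)).adjoint (gradient R (y t))))⟫) t := by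
      have := (hRdiff (y t)).hasGradientAt.hasFDerivAt.comp_hasDerivAt t (hy' t ht)
      rw [InnerProductSpace.toDual_apply_apply] at this
      exact this
    have e : ⟪gradient R (y t), -((fderiv ℝ h (w t)) ((fderiv ℝ h (w t)).adjoint (gradient R (y t))))⟫
        = -‖(fderiv ℝ h (w t)).adjoint (gradient R (y t))‖ ^ 2 := by
      rw [inner_neg_right, ← ContinuousLinearMap.adjoint_inner_left,
        real_inner_self_eq_norm_sq]
    rw [e] at h1
    exact h1.sub_const (R ystar)
  have hwcont : ∀ t, 0 ≤ t → ContinuousAt w t := fun t ht => (hwflow t ht).continuousAt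
  -- operator bounds under displacement hypothesis
  have hLDr : LDh * r = σmin / 2 := by
    rw [hr]; field_simp
  have hσt : ∀ t, ‖w t - w₀‖ ≤ r → ∀ zz : H,
      σmin / 2 * ‖zz‖ ≤ ‖(fderiv ℝ h (w t)).adjoint zz‖ := by
    intro t hwt zz
    have hop : ‖fderiv ℝ h (w t) - D₀‖ ≤ σmin / 2 := by
      calc ‖fderiv ℝ h (w t) - D₀‖ ≤ LDh * ‖w t - w₀‖ := hDhLip (w t) w₀
        _ ≤ LDh * r := mul_le_mul_of_nonneg_left hwt hLDh.le
        _ = σmin / 2 := hLDr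
    have h1 : ‖(fderiv ℝ h (w t)).adjoint zz - D₀.adjoint zz‖ ≤ σmin / 2 * ‖zz‖ := by
      have e : (fderiv ℝ h (w t)).adjoint zz - D₀.adjoint zz
          = ((fderiv ℝ h (w t) - D₀).adjoint) zz := by
        rw [map_sub]; rfl
      rw [e]
      calc ‖((fderiv ℝ h (w t) - D₀).adjoint) zz‖
          ≤ ‖(fderiv ℝ h (w t) - D₀).adjoint‖ * ‖zz‖ := ContinuousLinearMap.le_opNorm _ _
        _ = ‖fderiv ℝ h (w t) - D₀‖ * ‖zz‖ := by
            rw [ContinuousLinearMap.adjoint.norm_map]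
        _ ≤ σmin / 2 * ‖zz‖ := mul_le_mul_of_nonneg_right hop (norm_nonneg _)
    have h2 : σmin * ‖zz‖ ≤ ‖D₀.adjoint zz‖ := hσmin zz
    have h3 : ‖D₀.adjoint zz‖ - ‖(fderiv ℝ h (w t)).adjoint zz‖
        ≤ ‖(fderiv ℝ h (w t)).adjoint zz - D₀.adjoint zz‖ := by
      have := norm_sub_norm_le (D₀.adjoint zz) ((fderiv ℝ h (w t)).adjoint zz)
      rw [norm_sub_rev] at this
      linarith [this]
    linarith
  have hDop : ∀ t, ‖w t - w₀‖ ≤ r → ‖fderiv ℝ h (w t)‖ ≤ 3 / 2 * ‖D₀‖ := by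
    intro t hwt
    have h1 : ‖fderiv ℝ h (w t) - D₀‖ ≤ σmin / 2 := by
      calc ‖fderiv ℝ h (w t) - D₀‖ ≤ LDh * ‖w t - w₀‖ := hDhLip (w t) w₀
        _ ≤ LDh * r := mul_le_mul_of_nonneg_left hwt hLDh.le
        _ = σmin / 2 := hLDr
    have h2 : ‖fderiv ℝ h (w t)‖ - ‖D₀‖ ≤ σmin / 2 := by
      have := norm_sub_norm_le (fderiv ℝ h (w t)) D₀
      linarith
    linarith
  -- key decay estimate
  have key1 : ∀ T, 0 ≤ T → (∀ s, 0 ≤ s → s < T → ‖w s - w₀‖ ≤ r) →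
      ∀ t, 0 ≤ t → t ≤ T → φ t ≤ φ 0 * Real.exp (-(lam * t)) := by
    intro T hT hbd t ht htT
    set u : ℝ → ℝ := fun t => Real.exp (lam * t) * φ t with hu
    have hud : ∀ s, 0 ≤ s → HasDerivAt u
        (Real.exp (lam * s) * lam * φ s
          + Real.exp (lam * s) * (-‖(fderiv ℝ h (w s)).adjoint (gradient R (y s))‖ ^ 2)) s := by
      intro s hs
      have h1 : HasDerivAt (fun s => Real.exp (lam * s)) (Real.exp (lam * s) * lam) s := by
        simpa using ((hasDerivAt_id s).const_mul lam).exp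
      exact h1.mul (hφ' s hs)
    have hucont : ContinuousOn u (Icc 0 T) := by
      intro s hs
      exact ((hud s hs.1).continuousAt).continuousWithinAt
    have hanti : AntitoneOn u (Icc 0 T) := by
      apply antitoneOn_of_deriv_nonpos (convex_Icc 0 T) hucont
      · intro x hx
        rw [interior_Icc] at hx
        exact ((hud x hx.1.le).differentiableAt).differentiableWithinAt
      · intro x hx
        rw [interior_Icc] at hx
        rw [(hud x hx.1.le).deriv]
        have hwx : ‖w x - w₀‖ ≤ r := hbd x hx.1.le hx.2
        have hPL : 2 * m * φ x ≤ ‖gradient R (y x)‖ ^ 2 := gPL (y x)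
        have hσx : σmin / 2 * ‖gradient R (y x)‖
            ≤ ‖(fderiv ℝ h (w x)).adjoint (gradient R (y x))‖ := hσt x hwx _
        have hsq : (σmin / 2) ^ 2 * ‖gradient R (y x)‖ ^ 2
            ≤ ‖(fderiv ℝ h (w x)).adjoint (gradient R (y x))‖ ^ 2 := by
          have h0 : 0 ≤ σmin / 2 * ‖gradient R (y x)‖ := by positivity
          calc (σmin / 2) ^ 2 * ‖gradient R (y x)‖ ^ 2
              = (σmin / 2 * ‖gradient R (y x)‖) ^ 2 := by ring
            _ ≤ ‖(fderiv ℝ h (w x)).adjoint (gradient R (y x))‖ ^ 2 :=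
                pow_le_pow_left₀ h0 hσx 2
        have hexp : (0:ℝ) < Real.exp (lam * x) := Real.exp_pos _
        have h5 := mul_le_mul_of_nonneg_left hPL (by positivity : (0:ℝ) ≤ σmin ^ 2 / 4)
        have hφx : lam * φ x ≤ ‖(fderiv ℝ h (w x)).adjoint (gradient R (y x))‖ ^ 2 := by
          rw [hlam]
          nlinarith [h5, hsq]
        have h6 := mul_le_mul_of_nonneg_left hφx hexp.le
        nlinarith [h6]
    have h0mem : (0:ℝ) ∈ Icc (0:ℝ) T := ⟨le_refl 0, hT⟩
    have htmem : t ∈ Icc (0:ℝ) T := ⟨ht, htT⟩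
    have := hanti h0mem htmem ht
    have hu0 : u 0 = φ 0 := by simp [hu]
    rw [hu0] at this
    have hepos : (0:ℝ) < Real.exp (lam * t) := Real.exp_pos _
    rw [hu] at this
    simp only at this
    calc φ t = (Real.exp (lam * t) * φ t) / Real.exp (lam * t) := by field_simp
      _ ≤ φ 0 / Real.exp (lam * t) := (div_le_div_iff_of_pos_right hepos).mpr this
      _ = φ 0 * Real.exp (-(lam * t)) := by rw [Real.exp_neg, div_eq_mul_inv]
    
  -- norm decay estimate
  have keynorm : ∀ T, 0 ≤ T → (∀ s, 0 ≤ s → s < T → ‖w s - w₀‖ ≤ r) →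
      ∀ t, 0 ≤ t → t ≤ T →
      ‖y t - ystar‖ ≤ Real.sqrt (M / m) * ‖y 0 - ystar‖ * Real.exp (-(μ * t)) := by
    intro T hT hbd t ht htT
    have h1 : m / 2 * ‖y t - ystar‖ ^ 2 ≤ φ t := glower (y t)
    have h2 : φ t ≤ φ 0 * Real.exp (-(lam * t)) := key1 T hT hbd t ht htT
    have h3 : φ 0 ≤ M / 2 * ‖y 0 - ystar‖ ^ 2 := gupper (y 0)
    set b : ℝ := Real.sqrt (M / m) * ‖y 0 - ystar‖ * Real.exp (-(μ * t)) with hb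
    have hbnn : 0 ≤ b := by positivity
    have hsq : ‖y t - ystar‖ ^ 2 ≤ b ^ 2 := by
      have hb2 : b ^ 2 = (M / m) * ‖y 0 - ystar‖ ^ 2 * Real.exp (-(lam * t)) := by
        rw [hb]
        have e1 : Real.sqrt (M / m) ^ 2 = M / m := Real.sq_sqrt hκpos.le
        have e2 : Real.exp (-(μ * t)) ^ 2 = Real.exp (-(lam * t)) := by
          rw [pow_two, ← Real.exp_add]
          congr 1
          rw [hμ, hlam]; ring
        rw [mul_pow, mul_pow, e1, e2]
      rw [hb2]
      have hexp : (0:ℝ) ≤ Real.exp (-(lam * t)) := (Real.exp_pos _).le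
      have h4 : m / 2 * ‖y t - ystar‖ ^ 2 ≤ M / 2 * ‖y 0 - ystar‖ ^ 2 * Real.exp (-(lam * t)) := by
        calc m / 2 * ‖y t - ystar‖ ^ 2 ≤ φ 0 * Real.exp (-(lam * t)) := le_trans h1 h2
          _ ≤ M / 2 * ‖y 0 - ystar‖ ^ 2 * Real.exp (-(lam * t)) :=
              mul_le_mul_of_nonneg_right h3 hexp
      calc ‖y t - ystar‖ ^ 2
          ≤ (M * ‖y 0 - ystar‖ ^ 2 * Real.exp (-(lam * t))) / m := by
            rw [le_div_iff₀ hm]; linarith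
        _ = M / m * ‖y 0 - ystar‖ ^ 2 * Real.exp (-(lam * t)) := by ring
    calc ‖y t - ystar‖ = Real.sqrt (‖y t - ystar‖ ^ 2) := by
          rw [Real.sqrt_sq (norm_nonneg _)]
      _ ≤ Real.sqrt (b ^ 2) := Real.sqrt_le_sqrt hsq
      _ = b := by rw [Real.sqrt_sq hbnn]
  -- displacement estimate
  have key2 : ∀ T, 0 ≤ T → (∀ s, 0 ≤ s → s < T → ‖w s - w₀‖ ≤ r) →
      ‖w T - w₀‖ ≤ 3 / 4 * r := by
    intro T hT hbd
    set c : ℝ := α⁻¹ * (3 / 2 * ‖D₀‖) * (M * (Real.sqrt (M / m) * ‖y 0 - ystar‖)) with hc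
    have hcnn : 0 ≤ c := by positivity
    have hBd : ∀ x : ℝ, HasDerivAt (fun t => c / μ * (1 - Real.exp (-(μ * t))))
        (c * Real.exp (-(μ * x))) x := by
      intro x
      have h1 : HasDerivAt (fun t : ℝ => -(μ * t)) (-μ) x := by
        have := ((hasDerivAt_id x).const_mul μ).neg
        simp only [mul_one] at this
        exact this
      have h2 : HasDerivAt (fun t : ℝ => Real.exp (-(μ * t))) (Real.exp (-(μ * x)) * (-μ)) x :=
        (Real.hasDerivAt_exp _).comp x h1
      have h3 : HasDerivAt (fun t : ℝ => 1 - Real.exp (-(μ * t)))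
          (-(Real.exp (-(μ * x)) * (-μ))) x := h2.const_sub 1
      have h4 := h3.const_mul (c / μ)
      have e : c / μ * -(Real.exp (-(μ * x)) * (-μ)) = c * Real.exp (-(μ * x)) := by
        field_simp
      rw [e] at h4
      exact h4
    set v : ℝ → EuclideanSpace ℝ (Fin p) :=
      fun x => -(α⁻¹ • (fderiv ℝ h (w x)).adjoint (gradient R (y x))) with hv
    have hfd : ∀ x ∈ Ico (0:ℝ) T, HasDerivWithinAt (fun t => w t - w₀)
        (v x) (Ici x) x := by
      intro x hx
      exact (((hw' x hx.1).sub_const w₀)).hasDerivWithinAt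
    have hfc : ContinuousOn (fun t => w t - w₀) (Icc 0 T) := by
      intro s hs
      exact ((hwcont s hs.1).sub continuousAt_const).continuousWithinAt
    have hbound : ∀ x ∈ Ico (0:ℝ) T,
        ‖v x‖ ≤ c * Real.exp (-(μ * x)) := by
      intro x hx
      rw [hv]
      simp only
      have hwx : ‖w x - w₀‖ ≤ r := hbd x hx.1 hx.2
      have hyx : ‖y x - ystar‖ ≤ Real.sqrt (M / m) * ‖y 0 - ystar‖ * Real.exp (-(μ * x)) :=
        keynorm T hT hbd x hx.1 hx.2.le
      have h1 : ‖-(α⁻¹ • (fderiv ℝ h (w x)).adjoint (gradient R (y x)))‖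
          = α⁻¹ * ‖(fderiv ℝ h (w x)).adjoint (gradient R (y x))‖ := by
        rw [norm_neg, norm_smul, Real.norm_eq_abs, abs_of_pos (inv_pos.mpr hαpos)]
      rw [h1]
      have h2 : ‖(fderiv ℝ h (w x)).adjoint (gradient R (y x))‖
          ≤ (3 / 2 * ‖D₀‖) * ‖gradient R (y x)‖ := by
        calc ‖(fderiv ℝ h (w x)).adjoint (gradient R (y x))‖
            ≤ ‖(fderiv ℝ h (w x)).adjoint‖ * ‖gradient R (y x)‖ :=
              ContinuousLinearMap.le_opNorm _ _
          _ = ‖fderiv ℝ h (w x)‖ * ‖gradient R (y x)‖ := by rw [hadj_norm]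
          _ ≤ (3 / 2 * ‖D₀‖) * ‖gradient R (y x)‖ :=
              mul_le_mul_of_nonneg_right (hDop x hwx) (norm_nonneg _)
      have h3 : ‖gradient R (y x)‖ ≤ M * (Real.sqrt (M / m) * ‖y 0 - ystar‖ * Real.exp (-(μ * x))) := by
        calc ‖gradient R (y x)‖ ≤ M * ‖y x - ystar‖ := gLip0 (y x)
          _ ≤ M * (Real.sqrt (M / m) * ‖y 0 - ystar‖ * Real.exp (-(μ * x))) :=
              mul_le_mul_of_nonneg_left hyx hM.le
      calc α⁻¹ * ‖(fderiv ℝ h (w x)).adjoint (gradient R (y x))‖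
          ≤ α⁻¹ * ((3 / 2 * ‖D₀‖) * (M * (Real.sqrt (M / m) * ‖y 0 - ystar‖ * Real.exp (-(μ * x))))) := by
            apply mul_le_mul_of_nonneg_left _ (inv_pos.mpr hαpos).le
            calc ‖(fderiv ℝ h (w x)).adjoint (gradient R (y x))‖
                ≤ (3 / 2 * ‖D₀‖) * ‖gradient R (y x)‖ := h2
              _ ≤ (3 / 2 * ‖D₀‖) * (M * (Real.sqrt (M / m) * ‖y 0 - ystar‖ * Real.exp (-(μ * x)))) := by
                  apply mul_le_mul_of_nonneg_left h3 (by positivity)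
        _ = c * Real.exp (-(μ * x)) := by rw [hc]; ring
    have hB0 : ‖w 0 - w₀‖ ≤ c / μ * (1 - Real.exp (-(μ * (0:ℝ)))) := by
      rw [hw0]
      simp
    have hgron := image_norm_le_of_norm_deriv_right_le_deriv_boundary (f' := v)
      (B := fun t => c / μ * (1 - Real.exp (-(μ * t))))
      (B' := fun x => c * Real.exp (-(μ * x))) hfc hfd hB0 hBd hbound
      (Set.right_mem_Icc.mpr hT)
    have hBT : c / μ * (1 - Real.exp (-(μ * T))) ≤ c / μ := by
      have h3 : 0 ≤ c / μ * Real.exp (-(μ * T)) := by positivity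
      linarith
    have hfinal : ‖w T - w₀‖ ≤ c / μ := le_trans hgron hBT
    -- arithmetic: c / μ ≤ 3/4 * r
    have hcle : c ≤ 3 * ‖D₀‖ * M * Real.sqrt (M / m) * C₀ := by
      have hy0le : ‖y 0 - ystar‖ ≤ 2 * α * C₀ := by
        rw [hy]
        simp only [hw0]
        exact hy0norm
      rw [hc]
      have h1 : α⁻¹ * (3 / 2 * ‖D₀‖) * (M * (Real.sqrt (M / m) * ‖y 0 - ystar‖))
          ≤ α⁻¹ * (3 / 2 * ‖D₀‖) * (M * (Real.sqrt (M / m) * (2 * α * C₀))) := by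
        apply mul_le_mul_of_nonneg_left _ (by positivity)
        apply mul_le_mul_of_nonneg_left _ hM.le
        exact mul_le_mul_of_nonneg_left hy0le (by positivity)
      calc α⁻¹ * (3 / 2 * ‖D₀‖) * (M * (Real.sqrt (M / m) * ‖y 0 - ystar‖))
          ≤ α⁻¹ * (3 / 2 * ‖D₀‖) * (M * (Real.sqrt (M / m) * (2 * α * C₀))) := h1
        _ = (α⁻¹ * α) * (3 * ‖D₀‖ * M * Real.sqrt (M / m) * C₀) := by ring
        _ = 3 * ‖D₀‖ * M * Real.sqrt (M / m) * C₀ := by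
            rw [inv_mul_cancel₀ hαpos.ne', one_mul]
    have hfrac : 3 * ‖D₀‖ * M * Real.sqrt (M / m) * C₀ / μ ≤ 3 / 4 * r := by
      have hmne : m ≠ 0 := hm.ne'
      have hMne : M ≠ 0 := hM.ne'
      have hσne : σmin ≠ 0 := hσ.ne'
      have hLne : LDh ≠ 0 := hLDh.ne'
      have hDne : ‖D₀‖ ≠ 0 := hD0pos.ne'
      have hsne : Real.sqrt (M / m) ≠ 0 := hsκpos.ne'
      apply le_of_eq
      rw [hC₀, hrpow, hμ, hr]
      field_simp
      ring
    calc ‖w T - w₀‖ ≤ c / μ := hfinal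
      _ ≤ 3 * ‖D₀‖ * M * Real.sqrt (M / m) * C₀ / μ :=
          (div_le_div_iff_of_pos_right hμpos).mpr hcle
      _ ≤ 3 / 4 * r := hfrac
  -- bootstrap
  have hmain : ∀ t, 0 ≤ t → ‖w t - w₀‖ ≤ r := by
    by_contra hcon
    push_neg at hcon
    obtain ⟨t₀, ht₀, hrt₀⟩ := hcon
    set S : Set ℝ := {t | 0 ≤ t ∧ r < ‖w t - w₀‖} with hS
    have hSne : S.Nonempty := ⟨t₀, ht₀, hrt₀⟩
    have hSbdd : BddBelow S := ⟨0, fun x hx => hx.1⟩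
    set T : ℝ := sInf S with hT
    have hT0 : 0 ≤ T := le_csInf hSne (fun x hx => hx.1)
    have hless : ∀ s, 0 ≤ s → s < T → ‖w s - w₀‖ ≤ r := by
      intro s h0 hsT
      by_contra hcc
      push_neg at hcc
      exact absurd (csInf_le hSbdd ⟨h0, hcc⟩) (not_le.mpr hsT)
    have hrT : r ≤ ‖w T - w₀‖ := by
      have hTcl : T ∈ closure S := csInf_mem_closure hSne hSbdd
      obtain ⟨us, hus, huslim⟩ := mem_closure_iff_seq_limit.mp hTcl
      have hcontT : ContinuousAt (fun t => ‖w t - w₀‖) T :=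
        ((hwcont T hT0).sub continuousAt_const).norm
      have hlim2 : Filter.Tendsto (fun n => ‖w (us n) - w₀‖) Filter.atTop (nhds ‖w T - w₀‖) :=
        (hcontT.tendsto).comp huslim
      exact ge_of_tendsto hlim2 (Filter.Eventually.of_forall (fun n => (hus n).2.le))
    have := key2 T hT0 hless
    linarith
  -- conclusion
  intro t ht
  have hbd : ∀ s, 0 ≤ s → s < t → ‖w s - w₀‖ ≤ r := fun s h0 _ => hmain s h0
  have := keynorm t ht hbd t ht (le_refl t)
  rw [hy] at this
  simp only [hw0] at this
  have e : -(μ * t) = -(m * σmin ^ 2 * t / 4) := by rw [hμ]; ring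
  rw [e] at this
  exact this
end
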